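/- arXiv:2303.08596 — 5 statements merged into one kernel-verified Lean document; each statement's English description precedes it below -/
import Mathlib

section
/- Fourier–Pontryagin duality, spin side on vertices (Lemma 2.2, case # = ★): For every ε ∈ ℝ^E one has Σ_{𝐧 ∈ ℤ^E, d*𝐧 = 0} e^{i(𝐧,ε)} Π_{e∈E} e^{−𝒱(𝐧_e)} = ∫_{(ℝ/2πℤ)^V} Π_{e∈E} w((dθ)_e + ε_e) dθ, where dθ is the product of Haar probability measures on (ℝ/2πℤ)^V and w is extended 2π-periodically to ℝ. In particular, writing Z_★(ε) for the right-hand side, the characteristic function of the ⋄-height measure satisfies ν_⋄[e^{i(𝐧,ε)}] = Z_★(ε)/Z_★(0). -/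
open MeasureTheory Real
noncomputable section

/-- Gradient of a `G`-valued function on the vertices: `(df)_e = f(tgt e) - f(src e)`. -/
def grad {V E G : Type*} [AddCommGroup G] (src tgt : E → V) (f : V → G) : E → G :=
  fun e => f (tgt e) - f (src e)

/-- Divergence of a `G`-valued 1-form: `(d*ω)_x = Σ_{e : tgt e = x} ω_e - Σ_{e : src e = x} ω_e`. -/
def divg {V E G : Type*} [Fintype E] [DecidableEq V] [AddCommGroup G]
    (src tgt : E → V) (ω : E → G) : V → G :=
  fun x => (∑ e, if tgt e = x then ω e else 0) - ∑ e, if src e = x then ω e else 0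

/-- The spin weight `w(α) = Σ_{n∈ℤ} e^{-𝒱(n)} e^{inα}`, written with `p n = e^{-𝒱(n)}`;
since `p` is symmetric this real (cosine) form agrees with the exponential form. -/
def wgt (p : ℤ → ℝ) (α : ℝ) : ℝ := ∑' n : ℤ, p n * Real.cos (n * α)

/-- Coordinates for the torus `(ℝ/2πℤ)^V`: the product over `V` of Lebesgue measure on the
fundamental domain `(-π, π]`.  It has total mass `(2π)^{|V|}`, so dividing by `(2π)^{|V|}`
gives the Haar probability measure of the torus. -/
def torusBox (V : Type*) [Fintype V] : Measure (V → ℝ) :=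
  Measure.pi fun _ => volume.restrict (Set.Ioc (-π) π)

/-! ### Auxiliary lemmas -/

/-- Fubini for a general finite product measure over `Fin k`. -/
lemma integral_fin_pi_prod (μ : Measure ℝ) [SigmaFinite μ] :
    ∀ {k : ℕ} (f : Fin k → ℝ → ℂ),
    ∫ x : Fin k → ℝ, ∏ i, f i (x i) ∂(Measure.pi fun _ => μ) = ∏ i, ∫ t, f i t ∂μ := by
  intro k
  induction k with
  | zero =>
      intro f
      simp [Measure.pi_empty_univ, measureReal_def]
  | succ n ih =>
      intro f
      calc
        _ = ∫ x : ℝ × (Fin n → ℝ), f 0 x.1 * ∏ i : Fin n, f i.succ (x.2 i)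
              ∂((μ).prod (Measure.pi fun _ => μ)) := by
          rw [← ((measurePreserving_piFinSuccAbove
            (fun _ : Fin (n + 1) => μ) 0).symm).integral_comp']
          simp_rw [MeasurableEquiv.piFinSuccAbove_symm_apply, Fin.insertNthEquiv,
            Fin.prod_univ_succ, Fin.insertNth_zero, Equiv.coe_fn_mk, Fin.cons_succ,
            Fin.cons_zero]
          simp [Fin.zero_succAbove]
        _ = (∫ t, f 0 t ∂μ) * ∏ i : Fin n, ∫ t, f i.succ t ∂μ := by
          rw [← ih, ← integral_prod_mul]
        _ = ∏ i, ∫ t, f i t ∂μ := by rw [Fin.prod_univ_succ]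

/-- Fubini for a general finite product measure. -/
lemma integral_pi_prod (μ : Measure ℝ) [SigmaFinite μ] {ι : Type*} [Fintype ι]
    (f : ι → ℝ → ℂ) :
    ∫ x : ι → ℝ, ∏ i, f i (x i) ∂(Measure.pi fun _ => μ) = ∏ i, ∫ t, f i t ∂μ := by
  let e := (Fintype.equivFin ι).symm
  rw [← (measurePreserving_piCongrLeft (fun _ : ι => μ) e).integral_comp']
  simp_rw [← e.prod_comp, MeasurableEquiv.coe_piCongrLeft, Equiv.piCongrLeft_apply_apply]
  rw [integral_fin_pi_prod]

/-- A product over a `Fin` of absolutely summable families is absolutely summable, and its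
total sum is the product of the sums. -/
lemma tsum_pi_fin :
    ∀ {k : ℕ} (g : Fin k → ℤ → ℂ), (∀ i, Summable fun m => ‖g i m‖) →
    Summable (fun n : Fin k → ℤ => ‖∏ i, g i (n i)‖) ∧
      ∑' n : Fin k → ℤ, ∏ i, g i (n i) = ∏ i, ∑' m, g i m := by
  intro k
  induction k with
  | zero =>
      intro g _
      constructor
      · simpa using summable_of_finite_support (Set.toFinite _)
      · simp
  | succ n ih =>
      intro g hg
      obtain ⟨ihS, ihE⟩ := ih (fun i => g i.succ) (fun i => hg i.succ)
      let e : (Fin (n + 1) → ℤ) ≃ ℤ × (Fin n → ℤ) := (Fin.consEquiv (fun _ => ℤ)).symm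
      have hprod : ∀ q : ℤ × (Fin n → ℤ),
          (∏ i, g i ((e.symm q) i)) = g 0 q.1 * ∏ i : Fin n, g i.succ (q.2 i) := by
        intro q
        rw [Fin.prod_univ_succ]
        simp [e, Fin.consEquiv]
      have hSprod : Summable (fun q : ℤ × (Fin n → ℤ) =>
          ‖g 0 q.1 * ∏ i : Fin n, g i.succ (q.2 i)‖) := by
        have h1 := Summable.mul_of_nonneg (hg 0) ihS
          (fun m => norm_nonneg _) (fun m => norm_nonneg _)
        simpa [norm_mul] using h1
      constructor
      · have := hSprod.comp_injective e.injective
        refine this.congr fun n => ?_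
        simp only [Function.comp_apply]
        rw [← hprod (e n)]
        simp
      · rw [← e.symm.tsum_eq]
        calc ∑' q : ℤ × (Fin n → ℤ), ∏ i, g i ((e.symm q) i)
            = ∑' q : ℤ × (Fin n → ℤ), g 0 q.1 * ∏ i : Fin n, g i.succ (q.2 i) :=
              tsum_congr hprod
          _ = (∑' m, g 0 m) * ∑' nn : Fin n → ℤ, ∏ i : Fin n, g i.succ (nn i) :=
              (tsum_mul_tsum_of_summable_norm (hg 0) ihS).symm
          _ = ∏ i, ∑' m, g i m := by rw [ihE, Fin.prod_univ_succ]

/-- A product over a finite type of absolutely summable families is absolutely summable, and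
its total sum is the product of the sums. -/
lemma tsum_pi_prod {ι : Type*} [Fintype ι] (g : ι → ℤ → ℂ)
    (hg : ∀ i, Summable fun m => ‖g i m‖) :
    Summable (fun n : ι → ℤ => ‖∏ i, g i (n i)‖) ∧
      ∑' n : ι → ℤ, ∏ i, g i (n i) = ∏ i, ∑' m, g i m := by
  classical
  let e : Fin (Fintype.card ι) ≃ ι := (Fintype.equivFin ι).symm
  let E : (Fin (Fintype.card ι) → ℤ) ≃ (ι → ℤ) := Equiv.arrowCongr e (Equiv.refl ℤ)
  have hE : ∀ m : Fin (Fintype.card ι) → ℤ,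
      (∏ i, g i (E m i)) = ∏ j, g (e j) (m j) := by
    intro m
    rw [← e.prod_comp]
    refine Finset.prod_congr rfl fun j _ => ?_
    simp [E, Equiv.arrowCongr]
  obtain ⟨hS, hT⟩ := tsum_pi_fin (fun j => g (e j)) (fun j => hg (e j))
  constructor
  · have := hS.comp_injective E.symm.injective
    refine (this.congr fun n => ?_)
    simp only [Function.comp_apply]
    rw [← hE (E.symm n)]
    simp
  · rw [← E.tsum_eq]
    rw [tsum_congr hE, hT, ← e.prod_comp]

lemma summable_p (p : ℤ → ℝ) (hnonneg : ∀ n : ℤ, 0 ≤ p n)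
    (hsum : Summable fun n : ℤ => (n : ℝ) ^ 2 * p n) : Summable p := by
  classical
  have hb : Summable (fun n : ℤ => (n : ℝ) ^ 2 * p n + if n = 0 then p 0 else 0) := by
    refine hsum.add (summable_of_ne_finset_zero (s := {0}) ?_)
    intro b hb
    simp only [Finset.mem_singleton] at hb
    simp [hb]
  refine Summable.of_nonneg_of_le hnonneg (fun n => ?_) hb
  by_cases h : n = 0
  · simp [h]
  · have h0 : (1 : ℝ) ≤ |(n : ℝ)| := by
      rw [← Int.cast_abs]
      exact_mod_cast Int.one_le_abs (by simpa using h)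
    have h1 : (1 : ℝ) ≤ (n : ℝ) ^ 2 := by nlinarith [sq_abs (n : ℝ)]
    simp only [h, if_false, add_zero]
    nlinarith [hnonneg n]

lemma norm_term (p : ℤ → ℝ) (hnonneg : ∀ n : ℤ, 0 ≤ p n) (n : ℤ) (α : ℝ) :
    ‖(p n : ℂ) * Complex.exp (Complex.I * n * α)‖ = p n := by
  rw [norm_mul, Complex.norm_exp]
  simp [abs_of_nonneg (hnonneg n), Complex.mul_re, Complex.mul_im]

lemma summable_norm_term (p : ℤ → ℝ) (hnonneg : ∀ n : ℤ, 0 ≤ p n) (hp : Summable p) (α : ℝ) :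
    Summable fun n : ℤ => ‖(p n : ℂ) * Complex.exp (Complex.I * n * α)‖ := by
  simpa only [norm_term p hnonneg] using hp

lemma tsum_wgt (p : ℤ → ℝ) (hsym : ∀ n : ℤ, p (-n) = p n) (hnonneg : ∀ n : ℤ, 0 ≤ p n)
    (hp : Summable p) (α : ℝ) :
    ∑' n : ℤ, (p n : ℂ) * Complex.exp (Complex.I * n * α) = (wgt p α : ℂ) := by
  have hs : Summable fun n : ℤ => (p n : ℂ) * Complex.exp (Complex.I * n * α) :=
    Summable.of_norm (summable_norm_term p hnonneg hp α)
  have hs' : Summable fun n : ℤ => (p n : ℂ) * Complex.exp (-(Complex.I * n * α)) := by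
    refine Summable.of_norm ?_
    have h0 : ∀ n : ℤ, ‖(p n : ℂ) * Complex.exp (-(Complex.I * n * α))‖ = p n := by
      intro n
      rw [norm_mul, Complex.norm_exp]
      simp [abs_of_nonneg (hnonneg n), Complex.mul_re, Complex.mul_im]
    simpa only [h0] using hp
  have hreal : Summable fun n : ℤ => p n * Real.cos (n * α) := by
    refine Summable.of_norm (hp.of_nonneg_of_le (fun n => norm_nonneg _) fun n => ?_)
    rw [norm_mul]
    calc ‖p n‖ * ‖Real.cos (n * α)‖ ≤ ‖p n‖ * 1 := by
          gcongr
          exact abs_cos_le_one _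
      _ = p n := by rw [mul_one, Real.norm_eq_abs, abs_of_nonneg (hnonneg n)]
  have hrefl : ∑' n : ℤ, (p n : ℂ) * Complex.exp (Complex.I * n * α)
      = ∑' n : ℤ, (p n : ℂ) * Complex.exp (-(Complex.I * n * α)) := by
    rw [← (Equiv.neg ℤ).tsum_eq (fun n : ℤ => (p n : ℂ) * Complex.exp (Complex.I * n * α))]
    refine tsum_congr fun n => ?_
    simp only [Equiv.neg_apply, hsym n]
    push_cast
    ring_nf
  have hcos : ∀ n : ℤ, (p n : ℂ) * Complex.exp (Complex.I * n * α)
      + (p n : ℂ) * Complex.exp (-(Complex.I * n * α))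
      = 2 * ((p n * Real.cos (n * α) : ℝ) : ℂ) := by
    intro n
    have h1 : 2 * Complex.cos (((n : ℝ) * α : ℝ) : ℂ)
        = Complex.exp ((((n : ℝ) * α : ℝ) : ℂ) * Complex.I)
          + Complex.exp (-(((n : ℝ) * α : ℝ) : ℂ) * Complex.I) := Complex.two_cos _
    push_cast at h1 ⊢
    rw [show Complex.I * (n : ℂ) * (α : ℂ) = ((n : ℂ) * α) * Complex.I by ring,
      show -(((n : ℂ) * α) * Complex.I) = (-((n : ℂ) * α)) * Complex.I by ring,
      show (2 : ℂ) * ((p n : ℂ) * Complex.cos ((n : ℂ) * α))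
        = (p n : ℂ) * (2 * Complex.cos ((n : ℂ) * α)) by ring, h1]
    ring
  have h2 : (∑' n : ℤ, (p n : ℂ) * Complex.exp (Complex.I * n * α))
      + ∑' n : ℤ, (p n : ℂ) * Complex.exp (-(Complex.I * n * α))
      = 2 * ((wgt p α : ℝ) : ℂ) := by
    rw [← Summable.tsum_add hs hs', tsum_congr hcos, tsum_mul_left, wgt, Complex.ofReal_tsum]
  rw [← hrefl] at h2
  exact mul_left_cancel₀ (two_ne_zero (α := ℂ)) (by linear_combination h2)

lemma integral_exp_box (m : ℤ) :
    ∫ t : ℝ, Complex.exp (Complex.I * m * t) ∂(volume.restrict (Set.Ioc (-π) π))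
      = if m = 0 then ((2 * π : ℝ) : ℂ) else 0 := by
  have hle : (-π : ℝ) ≤ π := by linarith [pi_pos]
  have hIoc : ∫ t : ℝ, Complex.exp (Complex.I * m * t) ∂(volume.restrict (Set.Ioc (-π) π))
      = ∫ t in (-π)..π, Complex.exp (Complex.I * m * t) := by
    rw [intervalIntegral.integral_of_le hle]
  rw [hIoc]
  by_cases h : m = 0
  · simp [h]
    push_cast
    ring
  · have hc : (Complex.I * m : ℂ) ≠ 0 := by
      simp [Complex.I_ne_zero, Complex.ext_iff]
      exact_mod_cast h
    rw [show (fun t : ℝ => Complex.exp (Complex.I * m * t)) = fun t : ℝ =>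
      Complex.exp ((Complex.I * m) * t) by funext t; ring_nf]
    rw [integral_exp_mul_complex hc, if_neg h]
    have h1 : Complex.exp (Complex.I * m * π)
        = Complex.cos (m * π) + Complex.sin (m * π) * Complex.I := by
      rw [← Complex.exp_mul_I]; ring_nf
    have h2 : Complex.exp (Complex.I * m * (-π : ℝ))
        = Complex.cos (m * π) - Complex.sin (m * π) * Complex.I := by
      rw [show (Complex.I * m * ((-π : ℝ) : ℂ)) = -((m : ℂ) * π) * Complex.I by push_cast; ring,
        Complex.exp_mul_I, Complex.cos_neg, Complex.sin_neg]
      ring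
    have hsin : Complex.sin ((m : ℂ) * (π : ℂ)) = 0 := by
      have := Complex.sin_int_mul_pi m
      simpa using this
    rw [show ((π : ℝ) : ℂ) = (π : ℂ) from rfl] at h1
    rw [h1, h2, hsin]
    ring

lemma sum_divg_mul {V E : Type*} [Fintype V] [Fintype E] [DecidableEq V]
    (src tgt : E → V) (n : E → ℤ) (θ : V → ℂ) :
    ∑ x, ((divg src tgt n : V → ℤ) x : ℂ) * θ x
      = ∑ e, (n e : ℂ) * (θ (tgt e) - θ (src e)) := by
  have key : ∀ h : E → V,
      ∑ x, ((∑ e, if h e = x then n e else 0 : ℤ) : ℂ) * θ x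
        = ∑ e, (n e : ℂ) * θ (h e) := by
    intro h
    have : ∀ x : V, ((∑ e, if h e = x then n e else 0 : ℤ) : ℂ) * θ x
        = ∑ e, if h e = x then (n e : ℂ) * θ x else 0 := by
      intro x
      push_cast
      rw [Finset.sum_mul]
      refine Finset.sum_congr rfl fun e _ => ?_
      split <;> simp
    rw [Finset.sum_congr rfl fun x _ => this x, Finset.sum_comm]
    refine Finset.sum_congr rfl fun e _ => ?_
    simp
  simp only [divg, Int.cast_sub, sub_mul, Finset.sum_sub_distrib]
  rw [key tgt, key src]
  rw [← Finset.sum_sub_distrib]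
  refine Finset.sum_congr rfl fun e _ => ?_
  ring

/-- **Fourier–Pontryagin duality, spin side on vertices.**
`Σ_{n ∈ ℤ^E, d*n = 0} e^{i(n,ε)} Π_e e^{-𝒱(n_e)} = ∫_{(ℝ/2πℤ)^V} Π_e w((dθ)_e + ε_e) dθ`,
and consequently `ν_⋄[e^{i(n,ε)}] = Z_★(ε)/Z_★(0)`. -/
theorem fourier_pontryagin_duality_star
    {V E : Type*} [Fintype V] [Fintype E] [DecidableEq V]
    (src tgt : E → V)
    (p : ℤ → ℝ)
    (hsym : ∀ n : ℤ, p (-n) = p n)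
    (hnonneg : ∀ n : ℤ, 0 ≤ p n)
    (hsum : Summable fun n : ℤ => (n : ℝ) ^ 2 * p n)
    (hw : ∀ α : ℝ, 0 < wgt p α)
    (ε : E → ℝ) :
    (∑' n : {n : E → ℤ // divg src tgt n = 0},
        Complex.exp (Complex.I * ∑ e, (n.1 e : ℂ) * (ε e : ℂ)) * ∏ e, (p (n.1 e) : ℂ))
      = Complex.ofReal
          ((∫ θ, (∏ e, wgt p (grad src tgt θ e + ε e)) ∂ torusBox V) /
            (2 * π) ^ Fintype.card V)
    ∧
    (∑' n : {n : E → ℤ // divg src tgt n = 0},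
        Complex.exp (Complex.I * ∑ e, (n.1 e : ℂ) * (ε e : ℂ)) * ∏ e, (p (n.1 e) : ℂ)) /
      (∑' n : {n : E → ℤ // divg src tgt n = 0}, ∏ e, (p (n.1 e) : ℂ))
      = Complex.ofReal
          ((∫ θ, (∏ e, wgt p (grad src tgt θ e + ε e)) ∂ torusBox V) /
            (∫ θ, (∏ e, wgt p (grad src tgt θ e)) ∂ torusBox V)) := by
  classical
  have hp : Summable p := summable_p p hnonneg hsum
  set μ : Measure ℝ := volume.restrict (Set.Ioc (-π) π) with hμ
  -- the key identity, for arbitrary ε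
  have key : ∀ δ : E → ℝ,
      ((∫ θ, (∏ e, wgt p (grad src tgt θ e + δ e)) ∂ torusBox V : ℝ) : ℂ)
        = ((2 * π : ℝ) : ℂ) ^ Fintype.card V *
          ∑' n : {n : E → ℤ // divg src tgt n = 0},
            Complex.exp (Complex.I * ∑ e, (n.1 e : ℂ) * (δ e : ℂ)) * ∏ e, (p (n.1 e) : ℂ) := by
    intro δ
    -- the summand
    set F : (E → ℤ) → (V → ℝ) → ℂ := fun n θ =>
      ∏ e, ((p (n e) : ℂ) *
        Complex.exp (Complex.I * (n e) * ((grad src tgt θ e + δ e : ℝ) : ℂ))) with hF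
    -- pointwise expansion of the product of weights
    have hpoint : ∀ θ : V → ℝ,
        ((∏ e, wgt p (grad src tgt θ e + δ e) : ℝ) : ℂ) = ∑' n : E → ℤ, F n θ := by
      intro θ
      rw [Complex.ofReal_prod]
      calc ∏ e, ((wgt p (grad src tgt θ e + δ e) : ℝ) : ℂ)
          = ∏ e, ∑' m : ℤ, (p m : ℂ) *
              Complex.exp (Complex.I * m * ((grad src tgt θ e + δ e : ℝ) : ℂ)) :=
            Finset.prod_congr rfl fun e _ => (tsum_wgt p hsym hnonneg hp _).symm
        _ = ∑' n : E → ℤ, F n θ :=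
            ((tsum_pi_prod (fun e m => (p m : ℂ) *
              Complex.exp (Complex.I * m * ((grad src tgt θ e + δ e : ℝ) : ℂ)))
              (fun e => summable_norm_term p hnonneg hp _)).2).symm
    -- constant norm of each summand
    have hFnorm : ∀ (n : E → ℤ) (θ : V → ℝ), ‖F n θ‖ = ∏ e, p (n e) := by
      intro n θ
      rw [hF, norm_prod]
      exact Finset.prod_congr rfl fun e _ => norm_term p hnonneg _ _
    -- summability of the constant norms
    have hSnorm : Summable (fun n : E → ℤ => ∏ e, p (n e)) := by
      have := (tsum_pi_prod (ι := E) (fun _ m => (p m : ℂ)) (fun e => by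
        simpa [Complex.norm_real, Real.norm_eq_abs, abs_of_nonneg (hnonneg _)] using hp)).1
      refine this.congr fun n => ?_
      rw [norm_prod]
      refine Finset.prod_congr rfl fun e _ => ?_
      simp [Complex.norm_real, Real.norm_eq_abs, abs_of_nonneg (hnonneg _)]
    -- measurability
    have hcont : ∀ n : E → ℤ, Continuous (F n) := by
      intro n
      refine continuous_finset_prod _ fun e _ => continuous_const.mul ?_
      refine Complex.continuous_exp.comp (continuous_const.mul ?_)
      exact Complex.continuous_ofReal.comp
        (((continuous_apply (tgt e)).sub (continuous_apply (src e))).add continuous_const)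
    -- total mass of the box
    have hbox : torusBox V Set.univ = (ENNReal.ofReal (2 * π)) ^ Fintype.card V := by
      rw [torusBox, Measure.pi_univ]
      simp only [Measure.restrict_apply, Set.univ_inter, Real.volume_Ioc, MeasurableSet.univ]
      rw [Finset.prod_const, Finset.card_univ]
      congr 1
      ring_nf
    have hboxne : torusBox V Set.univ ≠ ⊤ := by
      rw [hbox]
      exact ENNReal.pow_ne_top ENNReal.ofReal_ne_top
    -- the ℓ¹ bound for integral_tsum
    have hbound : ∑' n : E → ℤ, ∫⁻ θ, ‖F n θ‖₊ ∂(torusBox V) ≠ ⊤ := by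
      have hconst : ∀ n : E → ℤ, ∫⁻ θ, ‖F n θ‖₊ ∂(torusBox V)
          = (‖∏ e, p (n e)‖₊ : ENNReal) * torusBox V Set.univ := by
        intro n
        have : (fun θ : V → ℝ => (‖F n θ‖₊ : ENNReal)) = fun _ => (‖∏ e, p (n e)‖₊ : ENNReal) := by
          funext θ
          congr 1
          refine NNReal.coe_injective ?_
          rw [coe_nnnorm, coe_nnnorm, hFnorm n θ, Real.norm_eq_abs]
          exact (abs_of_nonneg (Finset.prod_nonneg fun e _ => hnonneg _)).symm
        rw [this, lintegral_const]
      rw [tsum_congr hconst, ENNReal.tsum_mul_right]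
      refine ENNReal.mul_ne_top ?_ hboxne
      rw [ENNReal.tsum_coe_ne_top_iff_summable]
      refine NNReal.summable_coe.mp ?_
      refine hSnorm.congr fun n => ?_
      rw [coe_nnnorm, Real.norm_eq_abs]
      exact (abs_of_nonneg (Finset.prod_nonneg fun e _ => hnonneg _)).symm
    -- evaluation of each integral
    have hper : ∀ n : E → ℤ, ∫ θ, F n θ ∂(torusBox V)
        = (if divg src tgt n = 0 then ((2 * π : ℝ) : ℂ) ^ Fintype.card V else 0) *
          (Complex.exp (Complex.I * ∑ e, (n e : ℂ) * (δ e : ℂ)) * ∏ e, (p (n e) : ℂ)) := by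
      intro n
      have hsplit : ∀ θ : V → ℝ, F n θ
          = (Complex.exp (Complex.I * ∑ e, (n e : ℂ) * (δ e : ℂ)) * ∏ e, (p (n e) : ℂ)) *
            ∏ x, Complex.exp (Complex.I * ((divg src tgt n : V → ℤ) x : ℂ) * ((θ x : ℝ) : ℂ)) := by
        intro θ
        simp only [hF]
        rw [Finset.prod_mul_distrib, ← Complex.exp_sum, ← Complex.exp_sum]
        have hS : ∑ e, Complex.I * (n e) * ((grad src tgt θ e + δ e : ℝ) : ℂ)
            = Complex.I * (∑ e, (n e : ℂ) * (δ e : ℂ))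
              + ∑ x, Complex.I * ((divg src tgt n : V → ℤ) x : ℂ) * ((θ x : ℝ) : ℂ) := by
          have h2 := sum_divg_mul src tgt n (fun x => ((θ x : ℝ) : ℂ))
          calc ∑ e, Complex.I * (n e) * ((grad src tgt θ e + δ e : ℝ) : ℂ)
              = Complex.I * (∑ e, (n e : ℂ) * (δ e : ℂ))
                + Complex.I * ∑ e, (n e : ℂ) * (((θ (tgt e) : ℝ) : ℂ) - ((θ (src e) : ℝ) : ℂ)) := by
                rw [Finset.mul_sum, Finset.mul_sum, ← Finset.sum_add_distrib]
                refine Finset.sum_congr rfl fun e _ => ?_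
                simp only [grad]
                push_cast
                ring
            _ = Complex.I * (∑ e, (n e : ℂ) * (δ e : ℂ))
                + Complex.I * ∑ x, ((divg src tgt n : V → ℤ) x : ℂ) * ((θ x : ℝ) : ℂ) := by
                rw [h2]
            _ = _ := by
                congr 1
                rw [Finset.mul_sum]
                refine Finset.sum_congr rfl fun x _ => ?_
                ring
        rw [hS, Complex.exp_add]
        ring
      rw [integral_congr_ae (Filter.Eventually.of_forall hsplit)]
      rw [integral_const_mul]
      rw [show torusBox V = Measure.pi fun _ : V => μ from rfl]
      rw [integral_pi_prod μ (fun x t => Complex.exp (Complex.I * ((divg src tgt n : V → ℤ) x : ℂ) * ((t : ℝ) : ℂ)))]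
      have hone : ∀ x : V, ∫ t, Complex.exp (Complex.I * ((divg src tgt n : V → ℤ) x : ℂ) * ((t : ℝ) : ℂ)) ∂μ
          = if (divg src tgt n : V → ℤ) x = 0 then ((2 * π : ℝ) : ℂ) else 0 := by
        intro x
        exact integral_exp_box ((divg src tgt n : V → ℤ) x)
      rw [Finset.prod_congr rfl fun x _ => hone x]
      by_cases hd : divg src tgt n = 0
      · have hz : ∀ x : V, (divg src tgt n : V → ℤ) x = 0 := fun x => by rw [hd]; rfl
        rw [if_pos hd]
        rw [Finset.prod_congr rfl fun x _ => if_pos (hz x), Finset.prod_const, Finset.card_univ]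
        ring
      · obtain ⟨x, hx⟩ : ∃ x : V, (divg src tgt n : V → ℤ) x ≠ 0 := by
          by_contra hcon
          push_neg at hcon
          exact hd (funext hcon)
        have hzero : (∏ x : V, if (divg src tgt n : V → ℤ) x = 0
            then ((2 * π : ℝ) : ℂ) else 0) = 0 :=
          Finset.prod_eq_zero (Finset.mem_univ x) (if_neg hx)
        rw [if_neg hd, hzero]
        ring
    -- putting everything together
    calc ((∫ θ, (∏ e, wgt p (grad src tgt θ e + δ e)) ∂ torusBox V : ℝ) : ℂ)
        = ∫ θ, ((∏ e, wgt p (grad src tgt θ e + δ e) : ℝ) : ℂ) ∂ torusBox V :=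
          (integral_ofReal).symm
      _ = ∫ θ, (∑' n : E → ℤ, F n θ) ∂ torusBox V :=
          integral_congr_ae (Filter.Eventually.of_forall hpoint)
      _ = ∑' n : E → ℤ, ∫ θ, F n θ ∂ torusBox V :=
          integral_tsum (fun n => (hcont n).aestronglyMeasurable) hbound
      _ = ∑' n : E → ℤ, (if divg src tgt n = 0 then ((2 * π : ℝ) : ℂ) ^ Fintype.card V else 0) *
            (Complex.exp (Complex.I * ∑ e, (n e : ℂ) * (δ e : ℂ)) * ∏ e, (p (n e) : ℂ)) :=
          tsum_congr hper
      _ = ∑' n : E → ℤ, ((2 * π : ℝ) : ℂ) ^ Fintype.card V *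
            Set.indicator {n : E → ℤ | divg src tgt n = 0}
              (fun n => Complex.exp (Complex.I * ∑ e, (n e : ℂ) * (δ e : ℂ)) * ∏ e, (p (n e) : ℂ)) n := by
          refine tsum_congr fun n => ?_
          by_cases hd : divg src tgt n = 0
          · rw [if_pos hd, Set.indicator_of_mem
              (show n ∈ {n : E → ℤ | divg src tgt n = 0} from hd)]
          · rw [if_neg hd, Set.indicator_of_notMem
              (show n ∉ {n : E → ℤ | divg src tgt n = 0} from hd)]
            simp
      _ = ((2 * π : ℝ) : ℂ) ^ Fintype.card V *
            ∑' n : E → ℤ, Set.indicator {n : E → ℤ | divg src tgt n = 0}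
              (fun n => Complex.exp (Complex.I * ∑ e, (n e : ℂ) * (δ e : ℂ)) * ∏ e, (p (n e) : ℂ)) n :=
          tsum_mul_left
      _ = _ := by
          congr 1
          exact (tsum_subtype {n : E → ℤ | divg src tgt n = 0}
            (fun n => Complex.exp (Complex.I * ∑ e, (n e : ℂ) * (δ e : ℂ)) * ∏ e, (p (n e) : ℂ))).symm
  have hc : ((2 * π : ℝ) : ℂ) ^ Fintype.card V ≠ 0 := by
    refine pow_ne_zero _ ?_
    simp only [ne_eq, Complex.ofReal_eq_zero]
    positivity
  have part1 : ∀ δ : E → ℝ,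
      (∑' n : {n : E → ℤ // divg src tgt n = 0},
          Complex.exp (Complex.I * ∑ e, (n.1 e : ℂ) * (δ e : ℂ)) * ∏ e, (p (n.1 e) : ℂ))
        = Complex.ofReal
            ((∫ θ, (∏ e, wgt p (grad src tgt θ e + δ e)) ∂ torusBox V) /
              (2 * π) ^ Fintype.card V) := by
    intro δ
    rw [Complex.ofReal_div, key δ, Complex.ofReal_pow]
    rw [mul_comm, mul_div_assoc, div_self hc, mul_one]
  refine ⟨part1 ε, ?_⟩
  have h0 : (∑' n : {n : E → ℤ // divg src tgt n = 0}, ∏ e, (p (n.1 e) : ℂ))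
      = Complex.ofReal
          ((∫ θ, (∏ e, wgt p (grad src tgt θ e)) ∂ torusBox V) /
            (2 * π) ^ Fintype.card V) := by
    have := part1 0
    simp only [Pi.zero_apply, Complex.ofReal_zero, mul_zero, Finset.sum_const_zero,
      Complex.exp_zero, one_mul, add_zero] at this
    exact this
  rw [part1 ε, h0]
  rw [← Complex.ofReal_div]
  congr 1
  rcases eq_or_ne (∫ θ, (∏ e, wgt p (grad src tgt θ e)) ∂ torusBox V) 0 with hz | hz
  · rw [hz]
    simp
  · have hcr : ((2 * π : ℝ)) ^ Fintype.card V ≠ 0 := by positivity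
    field_simp
end
end

section
/- Pointwise covariance identities (equations (2.4)–(2.5) of the paper): For every edge e ∈ E, ν_⋄[𝐧_e²] = μ_★[𝒰''(J_e) − 𝒰'(J_e)²], and for every pair of distinct edges e ≠ f, ν_⋄[𝐧_e 𝐧_f] = −μ_★[𝒰'(J_e) 𝒰'(J_f)], where under μ_★ we write J = dθ. -/
open MeasureTheory Real
noncomputable section

/-- The dual spin potential `𝒰 = -log w`. -/
def spinU (p : ℤ → ℝ) : ℝ → ℝ := fun t => -Real.log (wgt p t)

/-- Expectation with respect to the ⋄-height measure
`ν_⋄(n) ∝ exp(-Σ_e 𝒱(n_e))` on `{n ∈ ℤ^E : d* n = 0}`, with `p = e^{-𝒱}`. -/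
def diamExp {V E : Type*} [Fintype E] [DecidableEq V] (src tgt : E → V)
    (p : ℤ → ℝ) (F : (E → ℤ) → ℝ) : ℝ :=
  (∑' n : {n : E → ℤ // divg src tgt n = 0}, F n.1 * ∏ e, p (n.1 e)) /
    ∑' n : {n : E → ℤ // divg src tgt n = 0}, ∏ e, p (n.1 e)

/-- Expectation with respect to the ★-spin measure `μ_★(dθ) ∝ Π_e w((dθ)_e) dθ` on the torus
`(ℝ/2πℤ)^V` (normalising constants cancel in the ratio). -/
def starSpinExp {V E : Type*} [Fintype V] [Fintype E] (src tgt : E → V)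
    (p : ℤ → ℝ) (F : (V → ℝ) → ℝ) : ℝ :=
  (∫ θ, F θ * ∏ e, wgt p (grad src tgt θ e) ∂ torusBox V) /
    ∫ θ, ∏ e, wgt p (grad src tgt θ e) ∂ torusBox V


/-! ### Auxiliary machinery -/

namespace PCIaux

open Fintype MeasureTheory.Measure

theorem integral_pi_prod_fin {n : ℕ} {𝕜 : Type*} [RCLike 𝕜]
    {E : Fin n → Type*} [∀ i, MeasurableSpace (E i)] (μ : ∀ i, Measure (E i))
    [∀ i, SigmaFinite (μ i)] (f : (i : Fin n) → E i → 𝕜) :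
    ∫ x : ∀ i, E i, ∏ i, f i (x i) ∂Measure.pi μ = ∏ i, ∫ x, f i x ∂μ i := by
  induction n with
  | zero =>
      simp only [Finset.univ_eq_empty, Finset.prod_empty, integral_const,
        measureReal_def, Measure.pi_empty_univ, ENNReal.toReal_one, smul_eq_mul, mul_one, one_smul]
  | succ n n_ih =>
      calc
        _ = ∫ x : E 0 × ((i : Fin n) → E (Fin.succ i)),
            f 0 x.1 * ∏ i : Fin n, f (Fin.succ i) (x.2 i)
              ∂(μ 0).prod (Measure.pi fun i => μ (Fin.succ i)) := by
          rw [← ((measurePreserving_piFinSuccAbove μ 0).symm).integral_comp']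
          simp_rw [MeasurableEquiv.piFinSuccAbove_symm_apply, Fin.insertNthEquiv,
            Fin.prod_univ_succ, Fin.insertNth_zero, Equiv.coe_fn_mk, Fin.cons_succ,
            Fin.zero_succAbove, Fin.cons_zero]
          refine integral_congr_ae (Filter.Eventually.of_forall fun x => ?_)
          congr 1
        _ = (∫ x, f 0 x ∂μ 0) * ∏ i : Fin n, ∫ x, f (Fin.succ i) x ∂μ (Fin.succ i) := by
          rw [← n_ih, ← integral_prod_mul]
        _ = ∏ i, ∫ x, f i x ∂μ i := by rw [Fin.prod_univ_succ]

theorem integral_pi_prod {ι : Type*} [Fintype ι] {𝕜 : Type*} [RCLike 𝕜]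
    {E : ι → Type*} [∀ i, MeasurableSpace (E i)] (μ : ∀ i, Measure (E i))
    [∀ i, SigmaFinite (μ i)] (f : (i : ι) → E i → 𝕜) :
    ∫ x : ∀ i, E i, ∏ i, f i (x i) ∂Measure.pi μ = ∏ i, ∫ x, f i x ∂μ i := by
  let e := (equivFin ι).symm
  rw [← (measurePreserving_piCongrLeft μ e).integral_comp']
  simp_rw [← e.prod_comp, MeasurableEquiv.coe_piCongrLeft, Equiv.piCongrLeft_apply_apply,
    integral_pi_prod_fin]

lemma integral_exp_torus (c : ℤ) :
    (∫ t in Set.Ioc (-π) π, Complex.exp ((c : ℂ) * (t : ℝ) * Complex.I)) =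
      if c = 0 then ((2 * π : ℝ) : ℂ) else 0 := by
  have hle : (-π) ≤ π := by linarith [pi_pos]
  rw [← intervalIntegral.integral_of_le hle]
  by_cases hc : c = 0
  · simp only [hc, Int.cast_zero, zero_mul, Complex.exp_zero]
    simp [two_mul, sub_neg_eq_add]
  · have h1 : ((c : ℂ) * Complex.I) ≠ 0 := by
      simp [Complex.I_ne_zero, hc]
    have h2 : ∀ x : ℝ, (c : ℂ) * (x : ℂ) * Complex.I = ((c : ℂ) * Complex.I) * x := by
      intro x; ring
    simp only [h2]
    rw [integral_exp_mul_complex h1]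
    have h3 : Complex.exp ((c : ℂ) * Complex.I * (π : ℂ))
        = Complex.exp ((c : ℂ) * Complex.I * ((-π : ℝ) : ℂ)) := by
      have h4 : (c : ℂ) * Complex.I * (π : ℂ)
          = (c : ℂ) * Complex.I * ((-π : ℝ) : ℂ) + (c : ℂ) * (2 * (π : ℂ) * Complex.I) := by
        push_cast; ring
      rw [h4, Complex.exp_add, Complex.exp_int_mul_two_pi_mul_I, mul_one]
    rw [if_neg hc, h3]
    simp

lemma pi_tsum_fin : ∀ (k : ℕ) (q : Fin k → ℤ → ℂ), (∀ e, Summable fun m => ‖q e m‖) →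
    Summable (fun n : Fin k → ℤ => ∏ e, ‖q e (n e)‖) ∧
    (∑' n : Fin k → ℤ, ∏ e, q e (n e)) = ∏ e, ∑' m, q e m := by
  intro k
  induction k with
  | zero =>
      intro q hq
      exact ⟨.of_finite, by simp [tsum_fintype]⟩
  | succ k ih =>
      intro q hq
      obtain ⟨ihs, iht⟩ := ih (fun e => q e.succ) (fun e => hq e.succ)
      let eqv : ℤ × (Fin k → ℤ) ≃ (Fin (k+1) → ℤ) := Fin.consEquiv (fun _ => ℤ)
      let Gn : (Fin k → ℤ) → ℝ := fun n => ∏ e, ‖q e.succ (n e)‖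
      let Gc : (Fin k → ℤ) → ℂ := fun n => ∏ e, q e.succ (n e)
      have hGn : Summable Gn := ihs
      have hFn : Summable (fun m => ‖q 0 m‖) := hq 0
      have hGc : Summable (fun n => ‖Gc n‖) :=
        ihs.congr fun n => (norm_prod _ _).symm
      have hcomp : ∀ x : ℤ × (Fin k → ℤ),
          (∏ e, ‖q e (eqv x e)‖) = ‖q 0 x.1‖ * Gn x.2 := by
        intro x
        rw [Fin.prod_univ_succ]
        simp [eqv, Gn, Fin.consEquiv]
      have hcomp2 : ∀ x : ℤ × (Fin k → ℤ),
          (∏ e, q e (eqv x e)) = q 0 x.1 * Gc x.2 := by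
        intro x
        rw [Fin.prod_univ_succ]
        simp [eqv, Gc, Fin.consEquiv]
      have key : Summable (fun x : ℤ × (Fin k → ℤ) => ‖q 0 x.1‖ * Gn x.2) :=
        hFn.mul_of_nonneg hGn (fun m => norm_nonneg _)
          (fun n => Finset.prod_nonneg fun e _ => norm_nonneg _)
      constructor
      · rw [← eqv.summable_iff]
        exact key.congr fun x => (hcomp x).symm
      · rw [← eqv.tsum_eq]
        have h2 : ((∑' m, q 0 m) * ∑' n, Gc n) = ∑' x : ℤ × (Fin k → ℤ), q 0 x.1 * Gc x.2 :=
          tsum_mul_tsum_of_summable_norm hFn hGc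
        calc (∑' x : ℤ × (Fin k → ℤ), ∏ e, q e (eqv x e))
            = ∑' x : ℤ × (Fin k → ℤ), q 0 x.1 * Gc x.2 := tsum_congr hcomp2
          _ = (∑' m, q 0 m) * ∑' n, Gc n := h2.symm
          _ = ∏ e, ∑' m, q e m := by rw [Fin.prod_univ_succ, iht]

lemma pi_tsum {E : Type*} [Fintype E] (q : E → ℤ → ℂ) (hq : ∀ e, Summable fun m => ‖q e m‖) :
    Summable (fun n : E → ℤ => ∏ e, ‖q e (n e)‖) ∧
    (∑' n : E → ℤ, ∏ e, q e (n e)) = ∏ e, ∑' m, q e m := by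
  classical
  let e := (Fintype.equivFin E).symm
  let eqv : (Fin (Fintype.card E) → ℤ) ≃ (E → ℤ) := Equiv.arrowCongr e (Equiv.refl ℤ)
  have key := pi_tsum_fin (Fintype.card E) (fun i => q (e i)) (fun i => hq (e i))
  have hc1 : ∀ n : Fin (Fintype.card E) → ℤ,
      (∏ x : E, ‖q x (eqv n x)‖) = ∏ i, ‖q (e i) (n i)‖ := by
    intro n
    rw [← e.prod_comp]
    exact Finset.prod_congr rfl fun i _ => by simp [eqv, Equiv.arrowCongr, e]
  have hc2 : ∀ n : Fin (Fintype.card E) → ℤ,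
      (∏ x : E, q x (eqv n x)) = ∏ i, q (e i) (n i) := by
    intro n
    rw [← e.prod_comp]
    exact Finset.prod_congr rfl fun i _ => by simp [eqv, Equiv.arrowCongr, e]
  constructor
  · rw [← eqv.summable_iff]
    exact key.1.congr fun n => ((hc1 n).symm)
  · rw [← eqv.tsum_eq, tsum_congr hc2, key.2, ← e.prod_comp]

lemma sum_grad {V E : Type*} [Fintype V] [Fintype E] [DecidableEq V] (src tgt : E → V)
    (n : E → ℤ) (θ : V → ℝ) :
    ∑ e, (n e : ℝ) * grad src tgt θ e = ∑ x, ((divg src tgt n x : ℤ) : ℝ) * θ x := by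
  have key : ∀ g : E → V,
      ∑ x, (((∑ e, if g e = x then n e else 0 : ℤ) : ℝ)) * θ x
        = ∑ e, (n e : ℝ) * θ (g e) := by
    intro g
    push_cast
    simp_rw [Finset.sum_mul, ite_mul, zero_mul]
    rw [Finset.sum_comm]
    refine Finset.sum_congr rfl fun e _ => ?_
    rw [Finset.sum_ite_eq]
    simp
  simp only [divg, grad, mul_sub]
  rw [Finset.sum_sub_distrib]
  have : ∀ x : V,
      (((∑ e, if tgt e = x then n e else 0) - ∑ e, if src e = x then n e else 0 : ℤ) : ℝ) * θ x
      = (((∑ e, if tgt e = x then n e else 0 : ℤ) : ℝ)) * θ x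
        - (((∑ e, if src e = x then n e else 0 : ℤ) : ℝ)) * θ x := by
    intro x; push_cast; ring
  rw [Finset.sum_congr rfl fun x _ => this x, Finset.sum_sub_distrib, key tgt, key src]

lemma norm_exp_I (c : ℤ) (t : ℝ) : ‖Complex.exp ((c : ℂ) * (t : ℝ) * Complex.I)‖ = 1 := by
  rw [Complex.norm_exp]
  simp

lemma master {V E : Type*} [Fintype V] [Fintype E] [DecidableEq V] (src tgt : E → V)
    (q : E → ℤ → ℂ) (hq : ∀ e, Summable fun m => ‖q e m‖) :
    (∫ θ : V → ℝ, ∏ e, (∑' m : ℤ, q e m *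
        Complex.exp ((m : ℂ) * (grad src tgt θ e : ℝ) * Complex.I)) ∂ torusBox V)
    = ((2 * π : ℝ) : ℂ) ^ (Fintype.card V) *
        ∑' n : E → ℤ, (if divg src tgt n = 0 then ∏ e, q e (n e) else 0) := by
  classical
  set f : (E → ℤ) → (V → ℝ) → ℂ := fun n θ => (∏ e, q e (n e)) *
      ∏ x, Complex.exp (((divg src tgt n x : ℤ) : ℂ) * (θ x : ℝ) * Complex.I) with hf
  have stepA : ∀ θ : V → ℝ,
      (∏ e, (∑' m : ℤ, q e m * Complex.exp ((m : ℂ) * (grad src tgt θ e : ℝ) * Complex.I)))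
        = ∑' n : E → ℤ, f n θ := by
    intro θ
    have hq' : ∀ e, Summable fun m =>
        ‖q e m * Complex.exp ((m : ℂ) * (grad src tgt θ e : ℝ) * Complex.I)‖ := by
      intro e
      refine (hq e).congr fun m => ?_
      rw [norm_mul, norm_exp_I, mul_one]
    have key := (pi_tsum (fun e m => q e m *
      Complex.exp ((m : ℂ) * (grad src tgt θ e : ℝ) * Complex.I)) hq').2
    rw [← key]
    refine tsum_congr fun n => ?_
    rw [Finset.prod_mul_distrib, ← Complex.exp_sum]
    rw [hf]
    simp only []
    rw [← Complex.exp_sum]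
    congr 1
    have h1 : ∑ e, (n e : ℂ) * ((grad src tgt θ e : ℝ) : ℂ) * Complex.I
        = ((∑ e, (n e : ℝ) * grad src tgt θ e : ℝ) : ℂ) * Complex.I := by
      push_cast
      rw [Finset.sum_mul]
    have h2 : ∑ x, ((divg src tgt n x : ℤ) : ℂ) * ((θ x : ℝ) : ℂ) * Complex.I
        = ((∑ x, ((divg src tgt n x : ℤ) : ℝ) * θ x : ℝ) : ℂ) * Complex.I := by
      push_cast
      rw [Finset.sum_mul]
    rw [h1, h2, sum_grad]
  rw [integral_congr_ae (Filter.EventuallyEq.of_eq (funext stepA))]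
  have hnorm : ∀ n θ, ‖f n θ‖ = ∏ e, ‖q e (n e)‖ := by
    intro n θ
    rw [hf]
    simp only []
    rw [norm_mul, norm_prod, norm_prod]
    have : ∀ x : V, ‖Complex.exp (((divg src tgt n x : ℤ) : ℂ) * (θ x : ℝ) * Complex.I)‖ = 1 :=
      fun x => norm_exp_I _ _
    rw [Finset.prod_congr rfl fun x _ => this x]
    simp
  have hP : Summable (fun n : E → ℤ => ∏ e, ‖q e (n e)‖) := (pi_tsum q hq).1
  have hmeas : ∀ n : E → ℤ, AEStronglyMeasurable (f n) (torusBox V) := by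
    intro n
    refine Continuous.aestronglyMeasurable ?_
    rw [hf]
    simp only []
    fun_prop
  have htot : torusBox V Set.univ = (ENNReal.ofReal (2 * π)) ^ (Fintype.card V) := by
    rw [torusBox, Measure.pi_univ]
    simp [Real.volume_Ioc, two_mul]
  have hbound : (∑' n : E → ℤ, ∫⁻ θ, ‖f n θ‖₊ ∂ torusBox V) ≠ ⊤ := by
    have h1 : ∀ n : E → ℤ, (∫⁻ θ, ‖f n θ‖₊ ∂ torusBox V)
        = (‖(∏ e, ‖q e (n e)‖ : ℝ)‖₊ : ENNReal) * (ENNReal.ofReal (2 * π)) ^ (Fintype.card V) := by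
      intro n
      have : (fun θ : V → ℝ => (‖f n θ‖₊ : ENNReal))
          = fun _ => (‖(∏ e, ‖q e (n e)‖ : ℝ)‖₊ : ENNReal) := by
        funext θ
        congr 1
        ext
        simp [coe_nnnorm, hnorm n θ, abs_of_nonneg
          (Finset.prod_nonneg fun e _ => norm_nonneg _)]
      rw [this, lintegral_const, htot]
    rw [tsum_congr h1, ENNReal.tsum_mul_right]
    refine ENNReal.mul_ne_top ?_ (ENNReal.pow_ne_top ENNReal.ofReal_ne_top)
    rw [ENNReal.tsum_coe_ne_top_iff_summable]
    rw [← NNReal.summable_coe]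
    refine hP.congr fun n => ?_
    simp [coe_nnnorm, abs_of_nonneg (Finset.prod_nonneg fun e _ => norm_nonneg _)]
  rw [integral_tsum hmeas hbound]
  have stepC : ∀ n : E → ℤ, (∫ θ, f n θ ∂ torusBox V)
      = (if divg src tgt n = 0 then ((2 * π : ℝ) : ℂ) ^ (Fintype.card V) else 0)
          * ∏ e, q e (n e) := by
    intro n
    rw [hf]
    simp only []
    rw [integral_const_mul, torusBox]
    rw [integral_pi_prod (fun _ => volume.restrict (Set.Ioc (-π) π))
      (fun x t => Complex.exp (((divg src tgt n x : ℤ) : ℂ) * (t : ℝ) * Complex.I))]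
    have := fun x => integral_exp_torus (divg src tgt n x)
    rw [Finset.prod_congr rfl fun x _ => this x]
    by_cases hd : divg src tgt n = 0
    · rw [if_pos hd]
      have : ∀ x : V, (if divg src tgt n x = 0 then ((2 * π : ℝ) : ℂ) else 0)
          = ((2 * π : ℝ) : ℂ) := by
        intro x
        rw [if_pos]
        rw [hd]
        rfl
      rw [Finset.prod_congr rfl fun x _ => this x, Finset.prod_const, Finset.card_univ]
      ring
    · rw [if_neg hd]
      obtain ⟨x, hx⟩ : ∃ x, divg src tgt n x ≠ 0 := by
        by_contra h
        push_neg at h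
        exact hd (funext h)
      rw [Finset.prod_eq_zero (Finset.mem_univ x) (by rw [if_neg hx]), mul_zero, zero_mul]
  rw [tsum_congr stepC]
  rw [← tsum_mul_left]
  refine tsum_congr fun n => ?_
  split_ifs <;> ring

def wgt1 (p : ℤ → ℝ) (t : ℝ) : ℝ := ∑' m : ℤ, -(p m * m * Real.sin (m * t))

def wgt2 (p : ℤ → ℝ) (t : ℝ) : ℝ := ∑' m : ℤ, -(p m * m ^ 2 * Real.cos (m * t))

variable {p : ℤ → ℝ}

section Summability

variable (hnonneg : ∀ n : ℤ, 0 ≤ p n) (hsum : Summable fun n : ℤ => (n : ℝ) ^ 2 * p n)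

include hnonneg hsum

lemma sumP : Summable p := by
  have h := hsum.update 0 (p 0)
  refine Summable.of_nonneg_of_le hnonneg (fun n => ?_) h
  by_cases hn : n = 0
  · subst hn; simp [Function.update]
  · rw [Function.update_of_ne hn]
    have h1 : (1 : ℝ) ≤ (n : ℝ) ^ 2 := by
      have : (1 : ℝ) ≤ |(n : ℝ)| := by
        rw [← Int.cast_abs]
        exact_mod_cast Int.one_le_abs (by simpa using hn)
      rw [← sq_abs]
      nlinarith
    nlinarith [hnonneg n]

lemma sumP1 : Summable fun m : ℤ => |(m : ℝ)| * p m := by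
  refine Summable.of_nonneg_of_le (fun n => mul_nonneg (abs_nonneg _) (hnonneg n))
    (fun n => ?_) hsum
  rcases eq_or_ne n 0 with h | h
  · simp [h]
  · have h1 : (1 : ℝ) ≤ |(n : ℝ)| := by
      rw [← Int.cast_abs]
      exact_mod_cast Int.one_le_abs (by simpa using h)
    have : |(n : ℝ)| ≤ (n : ℝ) ^ 2 := by
      rw [← sq_abs]; nlinarith [abs_nonneg ((n:ℝ))]
    nlinarith [hnonneg n]

lemma hasDerivAt_wgt (t : ℝ) : HasDerivAt (wgt p) (wgt1 p t) t := by
  have h := hasDerivAt_tsum (u := fun m : ℤ => |(m : ℝ)| * p m)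
    (g := fun (m : ℤ) (t : ℝ) => p m * Real.cos (m * t))
    (g' := fun (m : ℤ) (t : ℝ) => -(p m * m * Real.sin (m * t)))
    (sumP1 hnonneg hsum)
    (fun m s => by
      have h1 : HasDerivAt (fun y : ℝ => (m : ℝ) * y) (m : ℝ) s := by
        simpa using (hasDerivAt_id s).const_mul (m : ℝ)
      have h2 := ((Real.hasDerivAt_cos ((m : ℝ) * s)).comp s h1).const_mul (p m)
      have h3 : p m * (-Real.sin ((m : ℝ) * s) * (m : ℝ)) = -(p m * m * Real.sin (m * s)) := by
        ring
      rw [h3] at h2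
      exact h2)
    (fun m s => by
      have h4 : ‖-(p m * (m : ℝ) * Real.sin ((m : ℝ) * s))‖
          = p m * |(m : ℝ)| * |Real.sin ((m : ℝ) * s)| := by
        rw [Real.norm_eq_abs, abs_neg, abs_mul, abs_mul, abs_of_nonneg (hnonneg m)]
      rw [h4]
      show p m * |(m : ℝ)| * |Real.sin ((m : ℝ) * s)| ≤ |(m : ℝ)| * p m
      have h6 := Real.abs_sin_le_one ((m : ℝ) * s)
      have h5 : 0 ≤ p m * |(m : ℝ)| := mul_nonneg (hnonneg m) (abs_nonneg _)
      calc p m * |(m : ℝ)| * |Real.sin ((m : ℝ) * s)| ≤ p m * |(m : ℝ)| * 1 :=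
            mul_le_mul_of_nonneg_left h6 h5
        _ = |(m : ℝ)| * p m := by ring)
    (y₀ := 0)
    (by
      refine (sumP hnonneg hsum).congr fun m => ?_
      simp)
    t
  exact h

lemma hasDerivAt_wgt1 (t : ℝ) : HasDerivAt (wgt1 p) (wgt2 p t) t := by
  have h := hasDerivAt_tsum (u := fun m : ℤ => (m : ℝ) ^ 2 * p m)
    (g := fun (m : ℤ) (t : ℝ) => -(p m * m * Real.sin (m * t)))
    (g' := fun (m : ℤ) (t : ℝ) => -(p m * m ^ 2 * Real.cos (m * t)))
    hsum
    (fun m s => by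
      have h1 : HasDerivAt (fun y : ℝ => (m : ℝ) * y) (m : ℝ) s := by
        simpa using (hasDerivAt_id s).const_mul (m : ℝ)
      have h2 := (((Real.hasDerivAt_sin ((m : ℝ) * s)).comp s h1).const_mul (p m * m)).neg
      have h3 : -(p m * m * (Real.cos ((m : ℝ) * s) * (m : ℝ)))
          = -(p m * m ^ 2 * Real.cos (m * s)) := by ring
      rw [h3] at h2
      exact h2)
    (fun m s => by
      have h4 : ‖-(p m * (m : ℝ) ^ 2 * Real.cos ((m : ℝ) * s))‖
          = p m * (m : ℝ) ^ 2 * |Real.cos ((m : ℝ) * s)| := by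
        rw [Real.norm_eq_abs, abs_neg, abs_mul, abs_mul, abs_of_nonneg (hnonneg m),
          abs_of_nonneg (sq_nonneg _)]
      rw [h4]
      show p m * (m : ℝ) ^ 2 * |Real.cos ((m : ℝ) * s)| ≤ (m : ℝ) ^ 2 * p m
      have h6 := Real.abs_cos_le_one ((m : ℝ) * s)
      have h5 : 0 ≤ p m * (m : ℝ) ^ 2 := mul_nonneg (hnonneg m) (sq_nonneg _)
      calc p m * (m : ℝ) ^ 2 * |Real.cos ((m : ℝ) * s)| ≤ p m * (m : ℝ) ^ 2 * 1 :=
            mul_le_mul_of_nonneg_left h6 h5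
        _ = (m : ℝ) ^ 2 * p m := by ring)
    (y₀ := 0)
    (by
      refine summable_zero.congr fun m => ?_
      simp)
    t
  exact h

end Summability

lemma derivU (hnonneg : ∀ n : ℤ, 0 ≤ p n) (hsum : Summable fun n : ℤ => (n : ℝ) ^ 2 * p n)
    (hw : ∀ α : ℝ, 0 < wgt p α) :
    deriv (spinU p) = fun t => -(wgt1 p t / wgt p t) := by
  funext t
  exact (((hasDerivAt_wgt hnonneg hsum t).log (hw t).ne').neg).deriv

lemma derivU2 (hnonneg : ∀ n : ℤ, 0 ≤ p n) (hsum : Summable fun n : ℤ => (n : ℝ) ^ 2 * p n)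
    (hw : ∀ α : ℝ, 0 < wgt p α) (t : ℝ) :
    deriv (deriv (spinU p)) t - (deriv (spinU p) t) ^ 2 = -(wgt2 p t / wgt p t) := by
  rw [derivU hnonneg hsum hw]
  have h1 : HasDerivAt (fun y => -(wgt1 p y / wgt p y))
      (-((wgt2 p t * wgt p t - wgt1 p t * wgt1 p t) / (wgt p t) ^ 2)) t :=
    (((hasDerivAt_wgt1 hnonneg hsum t).div (hasDerivAt_wgt hnonneg hsum t) (hw t).ne')).neg
  rw [h1.deriv]
  have hz := (hw t).ne'
  field_simp
  ring

lemma tsum_odd {g : ℤ → ℝ} (h : ∀ m : ℤ, g (-m) = -g m) : ∑' m : ℤ, g m = 0 := by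
  have h1 := (Equiv.neg ℤ).tsum_eq g
  have h2 : ∑' m : ℤ, g (-m) = ∑' m : ℤ, -g m := tsum_congr fun m => h m
  rw [tsum_neg] at h2
  have h3 : ∑' m : ℤ, g (Equiv.neg ℤ m) = ∑' m : ℤ, g (-m) := rfl
  rw [h3, h2] at h1
  linarith

variable (hsym : ∀ n : ℤ, p (-n) = p n) (hnonneg : ∀ n : ℤ, 0 ≤ p n)
  (hsum : Summable fun n : ℤ => (n : ℝ) ^ 2 * p n)

include hsym hnonneg hsum

lemma cA (α : ℝ) :
    ∑' m : ℤ, (p m : ℂ) * Complex.exp ((m : ℂ) * (α : ℝ) * Complex.I)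
      = ((wgt p α : ℝ) : ℂ) := by
  have hpt : ∀ m : ℤ, (p m : ℂ) * Complex.exp ((m : ℂ) * (α : ℝ) * Complex.I)
      = ((p m * Real.cos (m * α) : ℝ) : ℂ) + ((p m * Real.sin (m * α) : ℝ) : ℂ) * Complex.I := by
    intro m
    have hz : (m : ℂ) * (α : ℝ) * Complex.I = (((m : ℝ) * α : ℝ) : ℂ) * Complex.I := by
      push_cast; ring
    rw [hz, Complex.exp_mul_I, ← Complex.ofReal_cos, ← Complex.ofReal_sin]
    push_cast
    ring
  rw [tsum_congr hpt]
  have hsc : Summable fun m : ℤ => p m * Real.cos (m * α) := by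
    refine (sumP hnonneg hsum).of_norm_bounded fun m => ?_
    rw [Real.norm_eq_abs, abs_mul, abs_of_nonneg (hnonneg m)]
    have := Real.abs_cos_le_one ((m : ℝ) * α)
    nlinarith [hnonneg m, abs_nonneg (Real.cos ((m : ℝ) * α))]
  have hss : Summable fun m : ℤ => p m * Real.sin (m * α) := by
    refine (sumP hnonneg hsum).of_norm_bounded fun m => ?_
    rw [Real.norm_eq_abs, abs_mul, abs_of_nonneg (hnonneg m)]
    have := Real.abs_sin_le_one ((m : ℝ) * α)
    nlinarith [hnonneg m, abs_nonneg (Real.sin ((m : ℝ) * α))]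
  have h1 : HasSum (fun m : ℤ => ((p m * Real.cos (m * α) : ℝ) : ℂ)) ((wgt p α : ℝ) : ℂ) :=
    Complex.hasSum_ofReal.mpr hsc.hasSum
  have hodd : ∑' m : ℤ, p m * Real.sin (m * α) = 0 := by
    refine tsum_odd fun m => ?_
    rw [hsym m]
    push_cast
    rw [neg_mul, Real.sin_neg]
    ring
  have h2 : HasSum (fun m : ℤ => ((p m * Real.sin (m * α) : ℝ) : ℂ) * Complex.I)
      ((((0 : ℝ)) : ℂ) * Complex.I) := by
    refine HasSum.mul_right _ ?_
    refine Complex.hasSum_ofReal.mpr ?_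
    rw [← hodd]
    exact hss.hasSum
  rw [(h1.add h2).tsum_eq]
  simp

lemma cB (α : ℝ) :
    ∑' m : ℤ, (Complex.I * (m : ℂ) * (p m : ℂ)) * Complex.exp ((m : ℂ) * (α : ℝ) * Complex.I)
      = ((wgt1 p α : ℝ) : ℂ) := by
  have hpt : ∀ m : ℤ, (Complex.I * (m : ℂ) * (p m : ℂ)) * Complex.exp ((m : ℂ) * (α : ℝ) * Complex.I)
      = ((-(p m * m * Real.sin (m * α)) : ℝ) : ℂ)
        + ((p m * m * Real.cos (m * α) : ℝ) : ℂ) * Complex.I := by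
    intro m
    have hz : (m : ℂ) * (α : ℝ) * Complex.I = (((m : ℝ) * α : ℝ) : ℂ) * Complex.I := by
      push_cast; ring
    rw [hz, Complex.exp_mul_I, ← Complex.ofReal_cos, ← Complex.ofReal_sin]
    push_cast
    have hI : Complex.I * Complex.I = -1 := Complex.I_mul_I
    ring_nf
    rw [Complex.I_sq]
    ring
  rw [tsum_congr hpt]
  have hs1 : Summable fun m : ℤ => -(p m * m * Real.sin (m * α)) := by
    refine (sumP1 hnonneg hsum).of_norm_bounded fun m => ?_
    rw [Real.norm_eq_abs, abs_neg, abs_mul, abs_mul, abs_of_nonneg (hnonneg m)]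
    have h6 := Real.abs_sin_le_one ((m : ℝ) * α)
    have h5 : 0 ≤ p m * |(m : ℝ)| := mul_nonneg (hnonneg m) (abs_nonneg _)
    calc p m * |(m : ℝ)| * |Real.sin ((m : ℝ) * α)| ≤ p m * |(m : ℝ)| * 1 :=
          mul_le_mul_of_nonneg_left h6 h5
      _ = |(m : ℝ)| * p m := by ring
  have hs2 : Summable fun m : ℤ => p m * m * Real.cos (m * α) := by
    refine (sumP1 hnonneg hsum).of_norm_bounded fun m => ?_
    rw [Real.norm_eq_abs, abs_mul, abs_mul, abs_of_nonneg (hnonneg m)]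
    have h6 := Real.abs_cos_le_one ((m : ℝ) * α)
    have h5 : 0 ≤ p m * |(m : ℝ)| := mul_nonneg (hnonneg m) (abs_nonneg _)
    calc p m * |(m : ℝ)| * |Real.cos ((m : ℝ) * α)| ≤ p m * |(m : ℝ)| * 1 :=
          mul_le_mul_of_nonneg_left h6 h5
      _ = |(m : ℝ)| * p m := by ring
  have h1 : HasSum (fun m : ℤ => ((-(p m * m * Real.sin (m * α)) : ℝ) : ℂ))
      ((wgt1 p α : ℝ) : ℂ) := Complex.hasSum_ofReal.mpr hs1.hasSum
  have hodd : ∑' m : ℤ, p m * m * Real.cos (m * α) = 0 := by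
    refine tsum_odd fun m => ?_
    rw [hsym m]
    push_cast
    rw [neg_mul, Real.cos_neg]
    ring
  have h2 : HasSum (fun m : ℤ => ((p m * m * Real.cos (m * α) : ℝ) : ℂ) * Complex.I)
      ((((0 : ℝ)) : ℂ) * Complex.I) := by
    refine HasSum.mul_right _ (Complex.hasSum_ofReal.mpr ?_)
    rw [← hodd]
    exact hs2.hasSum
  rw [(h1.add h2).tsum_eq]
  simp

lemma cC (α : ℝ) :
    ∑' m : ℤ, ((m : ℂ) ^ 2 * (p m : ℂ)) * Complex.exp ((m : ℂ) * (α : ℝ) * Complex.I)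
      = ((-wgt2 p α : ℝ) : ℂ) := by
  have hpt : ∀ m : ℤ, ((m : ℂ) ^ 2 * (p m : ℂ)) * Complex.exp ((m : ℂ) * (α : ℝ) * Complex.I)
      = ((p m * m ^ 2 * Real.cos (m * α) : ℝ) : ℂ)
        + ((p m * m ^ 2 * Real.sin (m * α) : ℝ) : ℂ) * Complex.I := by
    intro m
    have hz : (m : ℂ) * (α : ℝ) * Complex.I = (((m : ℝ) * α : ℝ) : ℂ) * Complex.I := by
      push_cast; ring
    rw [hz, Complex.exp_mul_I, ← Complex.ofReal_cos, ← Complex.ofReal_sin]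
    push_cast
    ring
  rw [tsum_congr hpt]
  have hs1 : Summable fun m : ℤ => p m * m ^ 2 * Real.cos (m * α) := by
    refine hsum.of_norm_bounded fun m => ?_
    rw [Real.norm_eq_abs, abs_mul, abs_mul, abs_of_nonneg (hnonneg m),
      abs_of_nonneg (sq_nonneg ((m : ℝ)))]
    have h6 := Real.abs_cos_le_one ((m : ℝ) * α)
    have h5 : 0 ≤ p m * (m : ℝ) ^ 2 := mul_nonneg (hnonneg m) (sq_nonneg _)
    calc p m * (m : ℝ) ^ 2 * |Real.cos ((m : ℝ) * α)| ≤ p m * (m : ℝ) ^ 2 * 1 :=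
          mul_le_mul_of_nonneg_left h6 h5
      _ = (m : ℝ) ^ 2 * p m := by ring
  have hs2 : Summable fun m : ℤ => p m * m ^ 2 * Real.sin (m * α) := by
    refine hsum.of_norm_bounded fun m => ?_
    rw [Real.norm_eq_abs, abs_mul, abs_mul, abs_of_nonneg (hnonneg m),
      abs_of_nonneg (sq_nonneg ((m : ℝ)))]
    have h6 := Real.abs_sin_le_one ((m : ℝ) * α)
    have h5 : 0 ≤ p m * (m : ℝ) ^ 2 := mul_nonneg (hnonneg m) (sq_nonneg _)
    calc p m * (m : ℝ) ^ 2 * |Real.sin ((m : ℝ) * α)| ≤ p m * (m : ℝ) ^ 2 * 1 :=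
          mul_le_mul_of_nonneg_left h6 h5
      _ = (m : ℝ) ^ 2 * p m := by ring
  have hval : ∑' m : ℤ, p m * m ^ 2 * Real.cos (m * α) = -wgt2 p α := by
    rw [wgt2]
    rw [← tsum_neg]
    simp only [neg_neg]
  have h1 : HasSum (fun m : ℤ => ((p m * m ^ 2 * Real.cos (m * α) : ℝ) : ℂ))
      ((-wgt2 p α : ℝ) : ℂ) := by
    refine Complex.hasSum_ofReal.mpr ?_
    rw [← hval]
    exact hs1.hasSum
  have hodd : ∑' m : ℤ, p m * m ^ 2 * Real.sin (m * α) = 0 := by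
    refine tsum_odd fun m => ?_
    rw [hsym m]
    push_cast
    rw [neg_mul, Real.sin_neg]
    ring
  have h2 : HasSum (fun m : ℤ => ((p m * m ^ 2 * Real.sin (m * α) : ℝ) : ℂ) * Complex.I)
      ((((0 : ℝ)) : ℂ) * Complex.I) := by
    refine HasSum.mul_right _ (Complex.hasSum_ofReal.mpr ?_)
    rw [← hodd]
    exact hs2.hasSum
  rw [(h1.add h2).tsum_eq]
  simp

omit hsym hnonneg hsum in
lemma ratio_eq {V E : Type*} [Fintype V] [Fintype E] [DecidableEq V]
    (src tgt : E → V) (p : ℤ → ℝ) (q : E → ℤ → ℂ)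
    (hq : ∀ e, Summable fun m => ‖q e m‖)
    (G : (V → ℝ) → ℝ) (Fd : (E → ℤ) → ℝ)
    (hpoint : ∀ θ : V → ℝ, ((G θ : ℝ) : ℂ)
        = ∏ e, (∑' m : ℤ, q e m * Complex.exp ((m : ℂ) * (grad src tgt θ e : ℝ) * Complex.I)))
    (hcoef : ∀ n : E → ℤ, (∏ e, q e (n e)) = ((Fd n * ∏ e, p (n e) : ℝ) : ℂ)) :
    (∫ θ, G θ ∂ torusBox V)
      = (2 * π) ^ (Fintype.card V)
        * ∑' n : {n : E → ℤ // divg src tgt n = 0}, Fd n.1 * ∏ e, p (n.1 e) := by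
  classical
  have h1 : ((∫ θ, G θ ∂ torusBox V : ℝ) : ℂ)
      = ∫ θ, ((G θ : ℝ) : ℂ) ∂ torusBox V := integral_ofReal.symm
  rw [integral_congr_ae (Filter.EventuallyEq.of_eq (funext hpoint)), master src tgt q hq] at h1
  have hsum2 : Summable (fun n : E → ℤ =>
      if divg src tgt n = 0 then Fd n * ∏ e, p (n e) else 0) := by
    refine Summable.of_norm_bounded (pi_tsum q hq).1 fun n => ?_
    by_cases h : divg src tgt n = 0
    · rw [if_pos h, ← Complex.norm_real, ← hcoef n, ← norm_prod]
    · rw [if_neg h, norm_zero]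
      exact Finset.prod_nonneg fun e _ => norm_nonneg _
  have h2 : (∑' n : E → ℤ, if divg src tgt n = 0 then ∏ e, q e (n e) else (0 : ℂ))
      = ((∑' n : E → ℤ, if divg src tgt n = 0 then Fd n * ∏ e, p (n e) else 0 : ℝ) : ℂ) := by
    rw [← (Complex.hasSum_ofReal.mpr hsum2.hasSum).tsum_eq]
    refine tsum_congr fun n => ?_
    split_ifs with h
    · exact hcoef n
    · simp
  have h3 : (∑' n : {n : E → ℤ // divg src tgt n = 0}, Fd n.1 * ∏ e, p (n.1 e))
      = ∑' n : E → ℤ, if divg src tgt n = 0 then Fd n * ∏ e, p (n e) else 0 := by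
    have h4 := tsum_subtype {n : E → ℤ | divg src tgt n = 0}
      (fun n => Fd n * ∏ e, p (n e))
    refine h4.trans (tsum_congr fun n => ?_)
    rw [Set.indicator_apply]
    by_cases h : divg src tgt n = 0
    · simp only [Set.mem_setOf_eq, h, if_true, if_pos]
    · simp only [Set.mem_setOf_eq, h, if_false]
  rw [h2] at h1
  refine Complex.ofReal_injective ?_
  rw [h1, h3]
  push_cast
  ring

end PCIaux

/-- **Pointwise covariance identities** (equations (2.4)–(2.5)):
`ν_⋄[n_e²] = μ_★[𝒰''(J_e) - 𝒰'(J_e)²]` and, for distinct edges `e ≠ f`,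
`ν_⋄[n_e n_f] = -μ_★[𝒰'(J_e) 𝒰'(J_f)]`, where `J = dθ`. -/
theorem pointwise_covariance_identities
    {V E : Type*} [Fintype V] [Fintype E] [DecidableEq V]
    (src tgt : E → V)
    (p : ℤ → ℝ)
    (hsym : ∀ n : ℤ, p (-n) = p n)
    (hnonneg : ∀ n : ℤ, 0 ≤ p n)
    (hsum : Summable fun n : ℤ => (n : ℝ) ^ 2 * p n)
    (hw : ∀ α : ℝ, 0 < wgt p α) :
    (∀ e : E,
      diamExp src tgt p (fun n => ((n e : ℝ)) ^ 2)
        = starSpinExp src tgt p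
            (fun θ => deriv (deriv (spinU p)) (grad src tgt θ e) -
              (deriv (spinU p) (grad src tgt θ e)) ^ 2))
    ∧
    (∀ e f : E, e ≠ f →
      diamExp src tgt p (fun n => (n e : ℝ) * (n f : ℝ))
        = - starSpinExp src tgt p
            (fun θ => deriv (spinU p) (grad src tgt θ e) *
              deriv (spinU p) (grad src tgt θ f))) := by
  classical
  have hpi : (0 : ℝ) < 2 * π := by linarith [pi_pos]
  have hCne : ((2 * π) ^ (Fintype.card V) : ℝ) ≠ 0 := (pow_pos hpi _).ne'
  -- summability of the coefficient families
  have hsp : Summable (fun m : ℤ => ‖(p m : ℂ)‖) :=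
    (PCIaux.sumP hnonneg hsum).congr fun m => by
      rw [Complex.norm_real, Real.norm_eq_abs, abs_of_nonneg (hnonneg m)]
  have hsq : Summable (fun m : ℤ => ‖(m : ℂ) ^ 2 * (p m : ℂ)‖) :=
    hsum.congr fun m => by
      rw [norm_mul, norm_pow, Complex.norm_intCast, Complex.norm_real, Real.norm_eq_abs,
        abs_of_nonneg (hnonneg m), sq_abs]
  have hsI : Summable (fun m : ℤ => ‖Complex.I * (m : ℂ) * (p m : ℂ)‖) :=
    (PCIaux.sumP1 hnonneg hsum).congr fun m => by
      rw [norm_mul, norm_mul, Complex.norm_I, one_mul, Complex.norm_intCast,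
        Complex.norm_real, Real.norm_eq_abs, abs_of_nonneg (hnonneg m)]
  -- the denominator
  have hden := PCIaux.ratio_eq src tgt p (fun _ m => (p m : ℂ)) (fun _ => hsp)
    (fun θ => ∏ e, wgt p (grad src tgt θ e)) (fun _ => 1)
    (fun θ => by
      rw [Complex.ofReal_prod]
      exact Finset.prod_congr rfl fun e _ => (PCIaux.cA hsym hnonneg hsum _).symm)
    (fun n => by rw [one_mul, Complex.ofReal_prod])
  have hden2 : (∫ θ, ∏ e, wgt p (grad src tgt θ e) ∂ torusBox V)
      = (2 * π) ^ (Fintype.card V)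
        * ∑' n : {n : E → ℤ // divg src tgt n = 0}, ∏ e, p (n.1 e) := by
    rw [hden]
    congr 1
    exact tsum_congr fun n => one_mul _
  constructor
  · -- diagonal identity (2.4)
    intro e
    have hq1 : ∀ g : E, Summable fun m : ℤ =>
        ‖if g = e then (m : ℂ) ^ 2 * (p m : ℂ) else (p m : ℂ)‖ := by
      intro g
      by_cases hg : g = e
      · simp only [if_pos hg]
        exact hsq
      · simp only [if_neg hg]
        exact hsp
    have hreal1 : ∀ θ : V → ℝ,
        (deriv (deriv (spinU p)) (grad src tgt θ e) - deriv (spinU p) (grad src tgt θ e) ^ 2)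
          * ∏ g, wgt p (grad src tgt θ g)
        = ∏ g, (if g = e then -PCIaux.wgt2 p (grad src tgt θ g)
            else wgt p (grad src tgt θ g)) := by
      intro θ
      rw [PCIaux.derivU2 hnonneg hsum hw]
      rw [← Finset.mul_prod_erase Finset.univ
            (fun g => if g = e then -PCIaux.wgt2 p (grad src tgt θ g)
              else wgt p (grad src tgt θ g)) (Finset.mem_univ e),
          ← Finset.mul_prod_erase Finset.univ
            (fun g => wgt p (grad src tgt θ g)) (Finset.mem_univ e)]
      simp only [if_pos rfl]
      rw [Finset.prod_congr rfl (fun g hg => if_neg (Finset.mem_erase.1 hg).1)]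
      have hz := (hw (grad src tgt θ e)).ne'
      field_simp
      simp only [↓reduceIte]
      ring
    have hpoint1 : ∀ θ : V → ℝ,
        (((deriv (deriv (spinU p)) (grad src tgt θ e)
            - deriv (spinU p) (grad src tgt θ e) ^ 2)
          * ∏ g, wgt p (grad src tgt θ g) : ℝ) : ℂ)
        = ∏ g, (∑' m : ℤ, (if g = e then (m : ℂ) ^ 2 * (p m : ℂ) else (p m : ℂ)) *
            Complex.exp ((m : ℂ) * (grad src tgt θ g : ℝ) * Complex.I)) := by
      intro θ
      rw [hreal1 θ, Complex.ofReal_prod]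
      refine Finset.prod_congr rfl fun g _ => ?_
      by_cases hg : g = e
      · subst hg
        simp only [if_pos rfl]
        exact (PCIaux.cC hsym hnonneg hsum _).symm
      · simp only [if_neg hg]
        exact (PCIaux.cA hsym hnonneg hsum _).symm
    have hcoef1 : ∀ n : E → ℤ,
        (∏ g, (if g = e then (n g : ℂ) ^ 2 * (p (n g) : ℂ) else (p (n g) : ℂ)))
          = ((((n e : ℝ)) ^ 2 * ∏ g, p (n g) : ℝ) : ℂ) := by
      intro n
      rw [← Finset.mul_prod_erase Finset.univ _ (Finset.mem_univ e)]
      simp only [if_pos rfl]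
      rw [Finset.prod_congr rfl (fun g hg => if_neg (Finset.mem_erase.1 hg).1)]
      push_cast
      rw [← Finset.mul_prod_erase Finset.univ (fun g => ((p (n g) : ℝ) : ℂ))
        (Finset.mem_univ e)]
      ring
    have hnum1 := PCIaux.ratio_eq src tgt p
      (fun g m => if g = e then (m : ℂ) ^ 2 * (p m : ℂ) else (p m : ℂ)) hq1
      (fun θ => (deriv (deriv (spinU p)) (grad src tgt θ e)
          - deriv (spinU p) (grad src tgt θ e) ^ 2) * ∏ g, wgt p (grad src tgt θ g))
      (fun n => ((n e : ℝ)) ^ 2) hpoint1 hcoef1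
    have hnum1' : (∫ θ, (deriv (deriv (spinU p)) (grad src tgt θ e)
          - deriv (spinU p) (grad src tgt θ e) ^ 2)
            * ∏ g, wgt p (grad src tgt θ g) ∂ torusBox V)
        = (2 * π) ^ (Fintype.card V)
          * ∑' n : {n : E → ℤ // divg src tgt n = 0},
              ((n.1 e : ℝ)) ^ 2 * ∏ g, p (n.1 g) := hnum1
    simp only [diamExp, starSpinExp]
    rw [hnum1', hden2, mul_div_mul_left _ _ hCne]
  · -- off-diagonal identity (2.5)
    intro e f hef
    have hfe : f ∈ Finset.univ.erase e :=
      Finset.mem_erase.2 ⟨Ne.symm hef, Finset.mem_univ f⟩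
    have extract : ∀ {β : Type} [CommMonoid β] (h : E → β),
        ∏ g, h g = h e * (h f * ∏ g ∈ (Finset.univ.erase e).erase f, h g) := by
      intro β _ h
      rw [← Finset.mul_prod_erase Finset.univ h (Finset.mem_univ e),
        ← Finset.mul_prod_erase _ h hfe]
    have hfne : ¬ (f = e) := Ne.symm hef
    have hq2 : ∀ g : E, Summable fun m : ℤ =>
        ‖if g = e then Complex.I * (m : ℂ) * (p m : ℂ)
          else if g = f then Complex.I * (m : ℂ) * (p m : ℂ) else (p m : ℂ)‖ := by
      intro g
      by_cases hg : g = e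
      · simp only [if_pos hg]
        exact hsI
      · by_cases hg' : g = f
        · simp only [if_neg hg, if_pos hg']
          exact hsI
        · simp only [if_neg hg, if_neg hg']
          exact hsp
    have hmem2 : ∀ g, g ∈ (Finset.univ.erase e).erase f → ¬(g = e) ∧ ¬(g = f) := by
      intro g hg
      obtain ⟨hgf, hge⟩ := Finset.mem_erase.1 hg
      exact ⟨(Finset.mem_erase.1 hge).1, hgf⟩
    have hreal2 : ∀ θ : V → ℝ,
        (deriv (spinU p) (grad src tgt θ e) * deriv (spinU p) (grad src tgt θ f))
          * ∏ g, wgt p (grad src tgt θ g)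
        = ∏ g, (if g = e then PCIaux.wgt1 p (grad src tgt θ g)
            else if g = f then PCIaux.wgt1 p (grad src tgt θ g)
            else wgt p (grad src tgt θ g)) := by
      intro θ
      rw [PCIaux.derivU hnonneg hsum hw]
      rw [extract (fun g => if g = e then PCIaux.wgt1 p (grad src tgt θ g)
            else if g = f then PCIaux.wgt1 p (grad src tgt θ g)
            else wgt p (grad src tgt θ g)),
          extract (fun g => wgt p (grad src tgt θ g))]
      simp only [if_pos rfl, hfne, if_false]
      rw [Finset.prod_congr rfl (fun g hg =>
        ((if_neg (hmem2 g hg).1).trans (if_neg (hmem2 g hg).2)))]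
      have hz1 := (hw (grad src tgt θ e)).ne'
      have hz2 := (hw (grad src tgt θ f)).ne'
      field_simp
      simp only [↓reduceIte]
      ring
    have hpoint2 : ∀ θ : V → ℝ,
        (((deriv (spinU p) (grad src tgt θ e) * deriv (spinU p) (grad src tgt θ f))
          * ∏ g, wgt p (grad src tgt θ g) : ℝ) : ℂ)
        = ∏ g, (∑' m : ℤ, (if g = e then Complex.I * (m : ℂ) * (p m : ℂ)
            else if g = f then Complex.I * (m : ℂ) * (p m : ℂ) else (p m : ℂ)) *
            Complex.exp ((m : ℂ) * (grad src tgt θ g : ℝ) * Complex.I)) := by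
      intro θ
      rw [hreal2 θ, Complex.ofReal_prod]
      refine Finset.prod_congr rfl fun g _ => ?_
      by_cases hg : g = e
      · simp only [if_pos hg]
        exact (PCIaux.cB hsym hnonneg hsum _).symm
      · by_cases hg' : g = f
        · simp only [if_neg hg, if_pos hg']
          exact (PCIaux.cB hsym hnonneg hsum _).symm
        · simp only [if_neg hg, if_neg hg']
          exact (PCIaux.cA hsym hnonneg hsum _).symm
    have hII : ∀ a b c d r : ℂ,
        (Complex.I * a * c) * ((Complex.I * b * d) * r) = -(a * b) * (c * (d * r)) := by
      intro a b c d r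
      have h1 : (Complex.I * a * c) * ((Complex.I * b * d) * r)
          = (Complex.I * Complex.I) * (a * b * (c * (d * r))) := by ring
      rw [h1, Complex.I_mul_I]
      ring
    have hcoef2 : ∀ n : E → ℤ,
        (∏ g, (if g = e then Complex.I * (n g : ℂ) * (p (n g) : ℂ)
            else if g = f then Complex.I * (n g : ℂ) * (p (n g) : ℂ) else (p (n g) : ℂ)))
          = (((-((n e : ℝ) * (n f : ℝ))) * ∏ g, p (n g) : ℝ) : ℂ) := by
      intro n
      rw [extract (fun g => if g = e then Complex.I * (n g : ℂ) * (p (n g) : ℂ)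
            else if g = f then Complex.I * (n g : ℂ) * (p (n g) : ℂ) else (p (n g) : ℂ))]
      simp only [if_pos rfl, hfne, if_false]
      rw [Finset.prod_congr rfl (fun g hg =>
        ((if_neg (hmem2 g hg).1).trans (if_neg (hmem2 g hg).2)))]
      push_cast
      rw [extract (fun g => ((p (n g) : ℝ) : ℂ))]
      rw [hII]
    have hnum2 := PCIaux.ratio_eq src tgt p
      (fun g m => if g = e then Complex.I * (m : ℂ) * (p m : ℂ)
        else if g = f then Complex.I * (m : ℂ) * (p m : ℂ) else (p m : ℂ)) hq2
      (fun θ => (deriv (spinU p) (grad src tgt θ e) * deriv (spinU p) (grad src tgt θ f))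
          * ∏ g, wgt p (grad src tgt θ g))
      (fun n => -((n e : ℝ) * (n f : ℝ))) hpoint2 hcoef2
    have hnum2' : (∫ θ, (deriv (spinU p) (grad src tgt θ e)
            * deriv (spinU p) (grad src tgt θ f))
            * ∏ g, wgt p (grad src tgt θ g) ∂ torusBox V)
        = (2 * π) ^ (Fintype.card V)
          * ∑' n : {n : E → ℤ // divg src tgt n = 0},
              (-((n.1 e : ℝ) * (n.1 f : ℝ))) * ∏ g, p (n.1 g) := hnum2
    have hS : (∑' n : {n : E → ℤ // divg src tgt n = 0},
          (-((n.1 e : ℝ) * (n.1 f : ℝ))) * ∏ g, p (n.1 g))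
        = -∑' n : {n : E → ℤ // divg src tgt n = 0},
            (n.1 e : ℝ) * (n.1 f : ℝ) * ∏ g, p (n.1 g) := by
      rw [← tsum_neg]
      exact tsum_congr fun n => by ring
    simp only [diamExp, starSpinExp]
    rw [hnum2', hden2, mul_div_mul_left _ _ hCne, hS, neg_div, neg_neg]
end
end

section
/- Ginibre core inequality on the group of divergence-free circle-valued 1-forms (Lemma B.2): Let λ be the Haar probability measure of the compact group ker(d*) ⊆ (ℝ/2πℤ)^E. Then for every n ∈ ℕ, all integers m_1, …, m_n, all edges e_1, …, e_n ∈ E and all signs s_1, …, s_n ∈ {+1, −1}, ∫∫ Π_{i=1}^n ( cos(m_i J_{e_i}) + s_i cos(m_i J'_{e_i}) ) dλ(J) dλ(J') ≥ 0. -/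
open MeasureTheory Real
noncomputable section

instance : Fact (0 < 2 * π) := ⟨by positivity⟩

/-- `Real.Angle = ℝ/2πℤ` with its Borel σ-algebra. -/
instance : MeasurableSpace Real.Angle := by unfold Real.Angle; infer_instance

/-- `lam` is the Haar probability measure of the compact group `ker(d*) ⊆ (ℝ/2πℤ)^E`:
a probability measure carried by `ker(d*)` and invariant under translation by every element
of `ker(d*)` (these properties characterise it uniquely). -/
def IsKerHaar {V E : Type*} [Fintype E] [DecidableEq V] (src tgt : E → V)
    (lam : Measure (E → Real.Angle)) : Prop :=
  IsProbabilityMeasure lam ∧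
  lam {J | divg src tgt J = 0} = 1 ∧
  ∀ J₀ : E → Real.Angle, divg src tgt J₀ = 0 →
    Measure.map (fun J => J₀ + J) lam = lam

namespace GinibreAux

open Complex

instance : BorelSpace Real.Angle := by unfold Real.Angle; exact QuotientAddGroup.borelSpace

instance : SecondCountableTopology Real.Angle := by unfold Real.Angle; exact secondCountable_of_proper

/-- The basic character of `Real.Angle`, valued in `ℂ`. -/
def chi (θ : Real.Angle) : ℂ := θ.toCircle

lemma chi_add (a b : Real.Angle) : chi (a + b) = chi a * chi b := by
  simp [chi, Real.Angle.toCircle_add]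

lemma chi_zero : chi 0 = 1 := by simp [chi]

lemma chi_eq_one_iff {θ : Real.Angle} : chi θ = 1 ↔ θ = 0 := by
  constructor
  · intro h
    have h1 : θ.toCircle = (0 : Real.Angle).toCircle := by
      apply Circle.coe_injective
      simpa [chi] using h
    rw [← Real.Angle.arg_toCircle θ, h1, Real.Angle.arg_toCircle]
  · rintro rfl; exact chi_zero

lemma norm_chi (θ : Real.Angle) : ‖chi θ‖ = 1 := by
  simp [chi, Circle.norm_coe]

lemma chi_cos (θ : Real.Angle) : ((θ.cos : ℝ) : ℂ) = (chi θ + chi (-θ)) / 2 := by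
  simp only [chi, Real.Angle.coe_toCircle, Real.Angle.cos_neg, Real.Angle.sin_neg]
  push_cast
  ring

lemma chi_sum {ι : Type*} (t : Finset ι) (f : ι → Real.Angle) :
    chi (∑ i ∈ t, f i) = ∏ i ∈ t, chi (f i) := by
  classical
  induction t using Finset.induction_on with
  | empty => simp [chi_zero]
  | insert _ _ h ih => rw [Finset.sum_insert h, Finset.prod_insert h, chi_add, ih]

lemma continuous_chi : Continuous chi := by
  have h1 : Continuous Real.Angle.toCircle := AddCircle.homeomorphCircle'.continuous
  exact continuous_induced_dom.comp h1

lemma measurable_chi : Measurable chi := continuous_chi.measurable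

variable {V E : Type*} [Fintype V] [Fintype E] [DecidableEq V]

/-- `k : E → ℤ` annihilates every divergence-free 1-form. -/
def Triv (src tgt : E → V) (k : E → ℤ) : Prop :=
  ∀ J : E → Real.Angle, divg src tgt J = 0 → (∑ e, k e • J e) = 0

variable (src tgt : E → V)

lemma Triv.zero : Triv src tgt 0 := by intro J _; simp

lemma Triv.add {k l : E → ℤ} (hk : Triv src tgt k) (hl : Triv src tgt l) :
    Triv src tgt (k + l) := by
  intro J hJ
  have h1 : (∑ e, (k e + l e) • J e) = (∑ e, k e • J e) + ∑ e, l e • J e := by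
    rw [← Finset.sum_add_distrib]
    exact Finset.sum_congr rfl fun e _ => add_zsmul _ _ _
  have h2 := hk J hJ
  have h3 := hl J hJ
  simp only [Pi.add_apply]
  rw [h1, h2, h3, add_zero]

lemma Triv.neg {k : E → ℤ} (hk : Triv src tgt k) : Triv src tgt (-k) := by
  intro J hJ
  have h1 : (∑ e, (-(k e)) • J e) = -∑ e, k e • J e := by
    rw [← Finset.sum_neg_distrib]
    exact Finset.sum_congr rfl fun e _ => neg_zsmul _ _
  simp only [Pi.neg_apply]
  rw [h1, hk J hJ, neg_zero]

lemma Triv.sub {k l : E → ℤ} (hk : Triv src tgt k) (hl : Triv src tgt l) :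
    Triv src tgt (k - l) := by
  have := (hk.add src tgt (hl.neg src tgt))
  simpa [sub_eq_add_neg] using this

/-- The character of the configuration space attached to `k : E → ℤ`. -/
def chiV (k : E → ℤ) (J : E → Real.Angle) : ℂ := chi (∑ e, k e • J e)

lemma measurable_sumSmul (k : E → ℤ) :
    Measurable (fun J : E → Real.Angle => ∑ e, k e • J e) := by
  apply Finset.measurable_sum
  intro e _
  exact (continuous_zsmul (k e)).measurable.comp (measurable_pi_apply e)

lemma measurable_chiV (k : E → ℤ) : Measurable (chiV k) :=
  measurable_chi.comp (measurable_sumSmul k)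

lemma norm_chiV (k : E → ℤ) (J : E → Real.Angle) : ‖chiV k J‖ = 1 := norm_chi _

lemma integrable_chiV (lam : Measure (E → Real.Angle)) [IsFiniteMeasure lam] (k : E → ℤ) :
    Integrable (chiV k) lam := by
  refine (integrable_const (1 : ℝ)).mono' (measurable_chiV k).aestronglyMeasurable ?_
  filter_upwards with J
  rw [norm_chiV]

lemma chiV_add_left (k : E → ℤ) (J₀ J : E → Real.Angle) :
    chiV k (J₀ + J) = chiV k J₀ * chiV k J := by
  unfold chiV
  rw [← chi_add]
  congr 1
  rw [← Finset.sum_add_distrib]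
  exact Finset.sum_congr rfl fun e _ => by simp [smul_add]

/-- The Fourier coefficient of the Haar measure of the kernel. -/
def cc (lam : Measure (E → Real.Angle)) (k : E → ℤ) : ℂ := ∫ J, chiV k J ∂lam

lemma measurableSet_ker :
    MeasurableSet {J : E → Real.Angle | divg src tgt J = 0} := by
  have hdiv : Measurable (fun J : E → Real.Angle => divg src tgt J) := by
    apply measurable_pi_lambda
    intro x
    apply Measurable.sub
    · apply Finset.measurable_sum
      intro e _
      by_cases h : tgt e = x
      · simpa [h] using measurable_pi_apply e
      · simpa [h] using @measurable_const Real.Angle _ _ _ 0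
    · apply Finset.measurable_sum
      intro e _
      by_cases h : src e = x
      · simpa [h] using measurable_pi_apply e
      · simpa [h] using @measurable_const Real.Angle _ _ _ 0
  exact hdiv (isClosed_singleton.measurableSet)

open scoped Classical in
lemma cc_eq (lam : Measure (E → Real.Angle)) (hlam : IsKerHaar src tgt lam) (k : E → ℤ) :
    cc lam k = if Triv src tgt k then 1 else 0 := by
  obtain ⟨hprob, hker, hinv⟩ := hlam
  by_cases hT : Triv src tgt k
  · rw [if_pos hT]
    have hae : ∀ᵐ J ∂lam, divg src tgt J = 0 := by
      rw [ae_iff]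
      have hc := measure_compl (measurableSet_ker src tgt) (measure_ne_top lam _)
      rw [hker, measure_univ] at hc
      simpa [Set.compl_setOf] using hc
    have heq : ∫ J, chiV k J ∂lam = ∫ _J, (1 : ℂ) ∂lam := by
      apply integral_congr_ae
      filter_upwards [hae] with J hJ
      unfold chiV
      rw [hT J hJ, chi_zero]
    rw [cc, heq]
    simp
  · rw [if_neg hT]
    unfold Triv at hT
    push_neg at hT
    obtain ⟨J₀, hdiv, hne⟩ := hT
    have hshift : Measurable (fun J : E → Real.Angle => J₀ + J) := by
      apply measurable_pi_lambda
      intro e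
      have hm : Measurable fun J : E → Real.Angle => J e := measurable_pi_apply e
      exact hm.const_add (J₀ e)
    have key : cc lam k = chiV k J₀ * cc lam k := by
      conv_lhs => rw [cc, ← hinv J₀ hdiv]
      rw [integral_map hshift.aemeasurable (measurable_chiV k).aestronglyMeasurable]
      have heq : (fun J => chiV k (J₀ + J)) = fun J => chiV k J₀ * chiV k J := by
        funext J; rw [chiV_add_left]
      rw [heq, integral_const_mul]
      rfl
    have hne1 : chiV k J₀ ≠ 1 := fun h => hne (chi_eq_one_iff.mp h)
    have hz : (1 - chiV k J₀) * cc lam k = 0 := by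
      rw [sub_mul, one_mul, ← key, sub_self]
    rcases mul_eq_zero.mp hz with h | h
    · exact absurd (sub_eq_zero.mp h).symm hne1
    · exact h

/-- sign of a boolean, as an integer. -/
def epsz : Bool → ℤ := fun b => if b then 1 else -1

variable {n : ℕ}

/-- The frequency vector attached to a sign configuration `p`. -/
def PP [DecidableEq E] (m : Fin n → ℤ) (es : Fin n → E) (p : Fin n → Bool) : E → ℤ :=
  fun e => ∑ i, if es i = e then epsz (p i) * m i else 0

/-- The part of the frequency vector carried by the first copy. -/
def kEq [DecidableEq E] (m : Fin n → ℤ) (es : Fin n → E) (p q : Fin n → Bool) : E → ℤ :=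
  fun e => ∑ i, if p i = q i ∧ es i = e then epsz (p i) * m i else 0

/-- The part of the frequency vector carried by the second copy. -/
def kNe [DecidableEq E] (m : Fin n → ℤ) (es : Fin n → E) (p q : Fin n → Bool) : E → ℤ :=
  fun e => ∑ i, if ¬(p i = q i) ∧ es i = e then epsz (p i) * m i else 0

lemma kEq_add_kNe [DecidableEq E] (m : Fin n → ℤ) (es : Fin n → E) (p q : Fin n → Bool) :
    kEq m es p q + kNe m es p q = PP m es p := by
  funext e
  simp only [Pi.add_apply, kEq, kNe, PP, ← Finset.sum_add_distrib]
  apply Finset.sum_congr rfl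
  intro i _
  by_cases h : p i = q i <;> by_cases h2 : es i = e <;> simp [h, h2]

lemma kEq_sub_kNe [DecidableEq E] (m : Fin n → ℤ) (es : Fin n → E) (p q : Fin n → Bool) :
    kEq m es p q - kNe m es p q = PP m es q := by
  funext e
  simp only [Pi.sub_apply, kEq, kNe, PP, ← Finset.sum_sub_distrib]
  apply Finset.sum_congr rfl
  intro i _
  by_cases h2 : es i = e
  · cases hp : p i <;> cases hq : q i <;> simp [hp, hq, h2, epsz] <;> ring
  · simp [h2]

/-- The doubling `2Λ` of the annihilating subgroup `Λ`. -/
def twoTriv : AddSubgroup (E → ℤ) where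
  carrier := {k | ∃ l, Triv src tgt l ∧ k = l + l}
  add_mem' := by
    rintro a b ⟨la, hla, rfl⟩ ⟨lb, hlb, rfl⟩
    exact ⟨la + lb, hla.add src tgt hlb, by abel⟩
  zero_mem' := ⟨0, Triv.zero src tgt, by simp⟩
  neg_mem' := by
    rintro a ⟨la, hla, rfl⟩
    exact ⟨-la, hla.neg src tgt, by abel⟩

/-- Sum over fibers of squares: the classifying-map positivity lemma. -/
lemma sum_fiber_sq_nonneg {α β : Type*} [Fintype α] [DecidableEq β] (g : α → β) (v : α → ℝ) :
    0 ≤ ∑ p : α, ∑ q : α, (if g p = g q then v p * v q else 0) := by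
  classical
  have key : ∑ p : α, ∑ q : α, (if g p = g q then v p * v q else 0)
      = ∑ b ∈ Finset.univ.image g, (∑ p ∈ Finset.univ.filter (fun p => g p = b), v p) ^ 2 := by
    have expand : ∀ b : β, (∑ p ∈ Finset.univ.filter (fun p => g p = b), v p) ^ 2
        = ∑ p : α, ∑ q : α, (if (g p = b ∧ g q = b) then v p * v q else 0) := by
      intro b
      rw [sq, Finset.sum_mul_sum, Finset.sum_filter]
      apply Finset.sum_congr rfl
      intro p _
      by_cases hp : g p = b
      · rw [if_pos hp, Finset.sum_filter]
        apply Finset.sum_congr rfl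
        intro q _
        by_cases hq : g q = b <;> simp [hp, hq]
      · rw [if_neg hp]
        symm
        apply Finset.sum_eq_zero
        intro q _
        rw [if_neg]
        rintro ⟨h1, _⟩
        exact hp h1
    rw [Finset.sum_congr rfl fun b _ => expand b]
    conv_rhs => rw [Finset.sum_comm]
    apply Finset.sum_congr rfl
    intro p _
    conv_rhs => rw [Finset.sum_comm]
    apply Finset.sum_congr rfl
    intro q _
    by_cases h : g p = g q
    · rw [if_pos h]
      have hmem : g p ∈ Finset.univ.image g := Finset.mem_image_of_mem g (Finset.mem_univ p)
      rw [Finset.sum_eq_single_of_mem (g p) hmem]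
      · rw [if_pos ⟨rfl, h.symm⟩]
      · intro b _ hb
        rw [if_neg]
        rintro ⟨h1, _⟩
        exact hb h1.symm
    · rw [if_neg h]
      symm
      apply Finset.sum_eq_zero
      intro b _
      rw [if_neg]
      rintro ⟨h1, h2⟩
      exact h (h1.trans h2.symm)
  rw [key]
  apply Finset.sum_nonneg
  intro b _
  positivity

lemma regroup [DecidableEq E] {ι : Type*} [Fintype ι] (P : ι → Prop) [DecidablePred P]
    (a : ι → ℤ) (es : ι → E) (J : E → Real.Angle) :
    ∑ i ∈ Finset.univ.filter P, a i • J (es i)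
      = ∑ e, (∑ i, if P i ∧ es i = e then a i else 0) • J e := by
  have h1 : ∀ e, (∑ i, if P i ∧ es i = e then a i else 0) • J e
      = ∑ i, (if P i ∧ es i = e then a i • J e else 0) := by
    intro e
    rw [Finset.sum_smul]
    apply Finset.sum_congr rfl
    intro i _
    by_cases h : P i ∧ es i = e <;> simp [h]
  simp only [h1]
  rw [Finset.sum_comm, Finset.sum_filter]
  apply Finset.sum_congr rfl
  intro i _
  by_cases hP : P i
  · simp only [hP, true_and, if_true]
    rw [Finset.sum_ite_eq Finset.univ (es i) (fun e => a i • J e)]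
    simp
  · simp [hP]

lemma ofReal_integral' {α : Type*} [MeasurableSpace α] (μ : Measure α) (f : α → ℝ) :
    ((∫ x, f x ∂μ : ℝ) : ℂ) = ∫ x, ((f x : ℝ) : ℂ) ∂μ := integral_ofReal.symm

end GinibreAux

open GinibreAux Complex

/-- **Ginibre core inequality on the group of divergence-free circle-valued 1-forms.**
For all integers `m_i`, edges `e_i` and signs `s_i ∈ {±1}`:
`∫∫ Π_i (cos(m_i J_{e_i}) + s_i cos(m_i J'_{e_i})) dλ(J) dλ(J') ≥ 0`. -/
theorem ginibre_core_inequality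
    {V E : Type*} [Fintype V] [Fintype E] [DecidableEq V]
    (src tgt : E → V)
    (lam : Measure (E → Real.Angle)) (hlam : IsKerHaar src tgt lam)
    (n : ℕ) (m : Fin n → ℤ) (es : Fin n → E) (s : Fin n → ℝ)
    (hs : ∀ i, s i = 1 ∨ s i = -1) :
    0 ≤ ∫ J, ∫ J', ∏ i,
          (Real.Angle.cos (m i • J (es i)) + s i * Real.Angle.cos (m i • J' (es i)))
        ∂ lam ∂ lam := by
  classical
  have hprob : IsProbabilityMeasure lam := hlam.1
  set F : (E → Real.Angle) → (E → Real.Angle) → ℝ := fun J J' =>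
    ∏ i, (Real.Angle.cos (m i • J (es i)) + s i * Real.Angle.cos (m i • J' (es i))) with hF
  set cf : ((Fin n → Bool) × (Fin n → Bool)) → ℝ :=
    fun z => (1 / 2) ^ n * ∏ i, (if z.1 i = z.2 i then 1 else s i) with hcf
  set R : (E → ℤ) → ℝ := fun k => if Triv src tgt k then 1 else 0 with hRdef
  set A : ((Fin n → Bool) × (Fin n → Bool)) → (E → Real.Angle) → ℂ :=
    fun z J => (cf z : ℂ) * chiV (kEq m es z.1 z.2) J with hA
  set B : ((Fin n → Bool) × (Fin n → Bool)) → (E → Real.Angle) → ℂ :=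
    fun z J' => chiV (kNe m es z.1 z.2) J' with hB
  -- pointwise expansion
  have hpoint : ∀ J J' : E → Real.Angle,
      ((F J J' : ℝ) : ℂ) = ∑ z : (Fin n → Bool) × (Fin n → Bool), A z J * B z J' := by
    intro J J'
    have hfac : ∀ i : Fin n,
        ((Real.Angle.cos (m i • J (es i)) + s i * Real.Angle.cos (m i • J' (es i)) : ℝ) : ℂ)
        = ∑ d : Bool × Bool,
            ((if d.1 = d.2 then 1 else (s i : ℂ)) * (1 / 2)) *
              chi ((epsz d.1 * m i) • (if d.1 = d.2 then J else J') (es i)) := by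
      intro i
      rw [Complex.ofReal_add, Complex.ofReal_mul, chi_cos, chi_cos]
      rw [Fintype.sum_prod_type]
      simp only [Fintype.sum_bool, epsz]
      norm_num
      ring
    calc ((F J J' : ℝ) : ℂ)
        = ∏ i, ((Real.Angle.cos (m i • J (es i)) + s i * Real.Angle.cos (m i • J' (es i)) : ℝ) : ℂ) := by
          rw [hF]; push_cast; rfl
      _ = ∏ i, ∑ d : Bool × Bool,
            ((if d.1 = d.2 then 1 else (s i : ℂ)) * (1 / 2)) *
              chi ((epsz d.1 * m i) • (if d.1 = d.2 then J else J') (es i)) :=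
          Finset.prod_congr rfl fun i _ => hfac i
      _ = ∑ h : Fin n → Bool × Bool, ∏ i,
            ((if (h i).1 = (h i).2 then 1 else (s i : ℂ)) * (1 / 2)) *
              chi ((epsz (h i).1 * m i) • (if (h i).1 = (h i).2 then J else J') (es i)) :=
          Fintype.prod_sum _
      _ = ∑ z : (Fin n → Bool) × (Fin n → Bool), ∏ i,
            ((if z.1 i = z.2 i then 1 else (s i : ℂ)) * (1 / 2)) *
              chi ((epsz (z.1 i) * m i) • (if z.1 i = z.2 i then J else J') (es i)) :=
          Fintype.sum_equiv (Equiv.arrowProdEquivProdArrow (Fin n) (fun _ => Bool) (fun _ => Bool)) _ _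
            (fun h => rfl)
      _ = ∑ z : (Fin n → Bool) × (Fin n → Bool), A z J * B z J' := by
          apply Finset.sum_congr rfl
          rintro ⟨p, q⟩ _
          rw [Finset.prod_mul_distrib]
          have hsplit : (∏ i, chi ((epsz (p i) * m i) • (if p i = q i then J else J') (es i)))
              = chiV (kEq m es p q) J * chiV (kNe m es p q) J' := by
            rw [← Finset.prod_filter_mul_prod_filter_not Finset.univ (fun i => p i = q i)]
            congr 1
            · rw [Finset.prod_congr rfl
                (fun i hi => by rw [if_pos (Finset.mem_filter.mp hi).2]),
                ← chi_sum, chiV]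
              congr 1
              exact regroup (fun i => p i = q i) (fun i => epsz (p i) * m i) es J
            · rw [Finset.prod_congr rfl
                (fun i hi => by rw [if_neg (Finset.mem_filter.mp hi).2]),
                ← chi_sum, chiV]
              congr 1
              exact regroup (fun i => ¬(p i = q i)) (fun i => epsz (p i) * m i) es J'
          rw [hsplit, hA, hB, hcf]
          simp only []
          rw [Finset.prod_mul_distrib, Finset.prod_const]
          simp only [Finset.card_univ, Fintype.card_fin]
          push_cast
          rw [show (∏ x : Fin n, (((if p x = q x then 1 else s x : ℝ)) : ℂ))
              = ∏ x : Fin n, (if p x = q x then 1 else (s x : ℂ)) from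
            Finset.prod_congr rfl fun x _ => by split_ifs <;> simp]
          ring
  -- the complex double integral
  have hInner : ∀ J : E → Real.Angle,
      (∫ J', ((F J J' : ℝ) : ℂ) ∂lam)
      = ∑ z : (Fin n → Bool) × (Fin n → Bool), A z J * cc lam (kNe m es z.1 z.2) := by
    intro J
    have heq : (fun J' => ((F J J' : ℝ) : ℂ))
        = fun J' => ∑ z : (Fin n → Bool) × (Fin n → Bool), A z J * B z J' := by
      funext J'; exact hpoint J J'
    rw [heq, integral_finset_sum]
    · apply Finset.sum_congr rfl
      intro z _
      rw [hB]
      simp only []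
      rw [integral_const_mul]
      rfl
    · intro z _
      exact (integrable_chiV lam (kNe m es z.1 z.2)).const_mul _
  have hOuter : ((∫ J, ∫ J', F J J' ∂lam ∂lam : ℝ) : ℂ)
      = ∑ z : (Fin n → Bool) × (Fin n → Bool),
          (cf z : ℂ) * cc lam (kEq m es z.1 z.2) * cc lam (kNe m es z.1 z.2) := by
    rw [ofReal_integral' lam _]
    have heq : (fun J => ((∫ J', F J J' ∂lam : ℝ) : ℂ))
        = fun J => ∑ z : (Fin n → Bool) × (Fin n → Bool),
            A z J * cc lam (kNe m es z.1 z.2) := by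
      funext J
      rw [ofReal_integral' lam _]
      exact hInner J
    rw [heq, integral_finset_sum]
    · apply Finset.sum_congr rfl
      intro z _
      rw [hA]
      simp only []
      rw [show (fun J => (cf z : ℂ) * chiV (kEq m es z.1 z.2) J * cc lam (kNe m es z.1 z.2))
          = fun J => ((cf z : ℂ) * cc lam (kNe m es z.1 z.2)) * chiV (kEq m es z.1 z.2) J by
            funext J; ring]
      rw [integral_const_mul]
      simp only [cc]
      ring
    · intro z _
      exact ((integrable_chiV lam (kEq m es z.1 z.2)).const_mul _).mul_const _
  -- pass to a real sum
  have hReal : (∫ J, ∫ J', F J J' ∂lam ∂lam : ℝ)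
      = ∑ z : (Fin n → Bool) × (Fin n → Bool),
          cf z * (R (kEq m es z.1 z.2) * R (kNe m es z.1 z.2)) := by
    have h2 : ((∫ J, ∫ J', F J J' ∂lam ∂lam : ℝ) : ℂ)
        = ((∑ z : (Fin n → Bool) × (Fin n → Bool),
            cf z * (R (kEq m es z.1 z.2) * R (kNe m es z.1 z.2)) : ℝ) : ℂ) := by
      rw [hOuter]
      rw [Complex.ofReal_sum]
      apply Finset.sum_congr rfl
      intro z _
      rw [cc_eq src tgt lam hlam, cc_eq src tgt lam hlam, hRdef]
      simp only []
      by_cases h1 : Triv src tgt (kEq m es z.1 z.2) <;>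
        by_cases h2 : Triv src tgt (kNe m es z.1 z.2) <;>
          simp [h1, h2]
    exact_mod_cast h2
  rw [hReal]
  -- combinatorial positivity
  set w : Fin n → Bool → ℝ := fun i b => if s i = 1 then 1 else (if b then 1 else -1) with hw
  set v : (Fin n → Bool) → ℝ := fun p => (∏ i, w i (p i)) * R (PP m es p) with hv
  set gg : (Fin n → Bool) → ((E → ℤ) ⧸ twoTriv src tgt) :=
    fun p => QuotientAddGroup.mk (PP m es p) with hgg
  have hterm : ∀ p q : Fin n → Bool,
      cf (p, q) * (R (kEq m es p q) * R (kNe m es p q))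
      = (1 / 2) ^ n * (if gg p = gg q then v p * v q else 0) := by
    intro p q
    -- sign identity
    have hSign : (∏ i, (if p i = q i then (1:ℝ) else s i))
        = (∏ i, w i (p i)) * (∏ i, w i (q i)) := by
      rw [← Finset.prod_mul_distrib]
      apply Finset.prod_congr rfl
      intro i _
      rcases hs i with h | h
      · simp [hw, h]
      · have h1 : (s i = 1) = False := by
          simp only [eq_iff_iff, iff_false]
          intro hcon; rw [hcon] at h; norm_num at h
        cases hp : p i <;> cases hq : q i <;> simp [hw, h1, hp, hq, h] <;> norm_num
    -- indicator identity
    have hBool : R (kEq m es p q) * R (kNe m es p q)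
        = R (PP m es p) * R (PP m es q) * (if gg p = gg q then 1 else 0) := by
      by_cases hEN : Triv src tgt (kEq m es p q) ∧ Triv src tgt (kNe m es p q)
      · obtain ⟨hE, hN⟩ := hEN
        have hPp : Triv src tgt (PP m es p) := by
          rw [← kEq_add_kNe m es p q]; exact hE.add src tgt hN
        have hPq : Triv src tgt (PP m es q) := by
          rw [← kEq_sub_kNe m es p q]; exact hE.sub src tgt hN
        have hq : gg p = gg q := by
          rw [hgg]
          simp only []
          rw [QuotientAddGroup.eq]
          refine ⟨-(kNe m es p q), hN.neg src tgt, ?_⟩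
          rw [← kEq_add_kNe m es p q, ← kEq_sub_kNe m es p q]
          abel
        rw [hRdef]
        simp [hE, hN, hPp, hPq, hq]
      · have hzero : ¬(Triv src tgt (PP m es p) ∧ Triv src tgt (PP m es q) ∧ gg p = gg q) := by
          rintro ⟨hPp, hPq, hq⟩
          rw [hgg] at hq
          simp only [] at hq
          rw [QuotientAddGroup.eq] at hq
          obtain ⟨l, hl, hleq⟩ := hq
          have hexp : -(PP m es p) + PP m es q = -(kNe m es p q) + -(kNe m es p q) := by
            rw [← kEq_add_kNe m es p q, ← kEq_sub_kNe m es p q]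
            abel
          have hl2 : l = -(kNe m es p q) := by
            funext e
            have h3 := congrFun (hleq.symm.trans hexp) e
            simp only [Pi.add_apply, Pi.neg_apply] at h3 ⊢
            omega
          have hNe : Triv src tgt (kNe m es p q) := by
            rw [hl2] at hl
            simpa using hl.neg src tgt
          have hEq : Triv src tgt (kEq m es p q) := by
            have hdec : kEq m es p q = PP m es p - kNe m es p q := by
              rw [← kEq_add_kNe m es p q]; abel
            rw [hdec]
            exact hPp.sub src tgt hNe
          exact hEN ⟨hEq, hNe⟩
        have hL : (if Triv src tgt (kEq m es p q) then (1:ℝ) else 0) *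
            (if Triv src tgt (kNe m es p q) then (1:ℝ) else 0) = 0 := by
          by_cases h1 : Triv src tgt (kEq m es p q)
          · have h2 : ¬Triv src tgt (kNe m es p q) := fun h => hEN ⟨h1, h⟩
            simp [h2]
          · simp [h1]
        have hRz : (if Triv src tgt (PP m es p) then (1:ℝ) else 0) *
            (if Triv src tgt (PP m es q) then (1:ℝ) else 0) *
            (if gg p = gg q then (1:ℝ) else 0) = 0 := by
          by_cases hPp : Triv src tgt (PP m es p)
          · by_cases hPq : Triv src tgt (PP m es q)
            · have hqq : ¬ gg p = gg q := fun h => hzero ⟨hPp, hPq, h⟩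
              simp [hqq]
            · simp [hPq]
          · simp [hPp]
        rw [hRdef]
        simp only []
        rw [hL, hRz]
    rw [hBool, hcf]
    simp only []
    rw [hSign]
    by_cases hq : gg p = gg q
    · rw [if_pos hq, if_pos hq, hv]
      simp only []
      ring
    · rw [if_neg hq, if_neg hq]
      ring
  rw [Fintype.sum_prod_type]
  have hfinal : ∑ p : Fin n → Bool, ∑ q : Fin n → Bool,
      cf (p, q) * (R (kEq m es p q) * R (kNe m es p q))
      = (1 / 2) ^ n * ∑ p : Fin n → Bool, ∑ q : Fin n → Bool,
          (if gg p = gg q then v p * v q else 0) := by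
    rw [Finset.mul_sum]
    apply Finset.sum_congr rfl
    intro p _
    rw [Finset.mul_sum]
    apply Finset.sum_congr rfl
    intro q _
    exact hterm p q
  rw [hfinal]
  apply mul_nonneg (by positivity)
  exact sum_fiber_sq_nonneg gg v
end
end

section
/- Convexity of the XY height-function potential / Turán inequality (content of Lemma 5.3): For β > 0 and k ∈ ℤ let I_k(β) := (1/2π)∫_{−π}^{π} e^{β cos t} cos(kt) dt. Then I_k(β) > 0 for every k, and the function k ↦ −log I_{|k|}(β) is convex on ℤ; equivalently, for every integer k, I_k(β)² ≥ I_{k−1}(β) · I_{k+1}(β). -/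
open MeasureTheory Real
noncomputable section

/-- The modified Bessel function of the first kind of integer order `k`:
`I_k(β) = (1/2π) ∫_{-π}^{π} e^{β cos t} cos(kt) dt`. -/
def besselI (k : ℤ) (β : ℝ) : ℝ :=
  (1 / (2 * π)) * ∫ t in Set.Ioc (-π) π, Real.exp (β * Real.cos t) * Real.cos (k * t)

namespace BesselTuran

/-! ### Combinatorial coefficients -/

/-- `Bn j a` = number of ±1-walks of length `j` ending at `a` (or `-a`). -/
def Bn (j a : ℕ) : ℕ := if (j + a) % 2 = 0 then j.choose ((j + a) / 2) else 0

lemma Bn_rec (j a : ℕ) : Bn (j+1) (a+1) = Bn j a + Bn j (a+2) := by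
  unfold Bn
  rcases Nat.even_or_odd (j + a) with h | h
  · obtain ⟨s, hs⟩ := h
    rw [if_pos (by omega), if_pos (by omega), if_pos (by omega)]
    rw [show (j + 1 + (a + 1)) / 2 = s + 1 by omega, show (j + a) / 2 = s by omega,
      show (j + (a + 2)) / 2 = s + 1 by omega]
    exact Nat.choose_succ_succ j s
  · obtain ⟨s, hs⟩ := h
    rw [if_neg (by omega), if_neg (by omega), if_neg (by omega)]

lemma Bn_rec0 (j : ℕ) : Bn (j+1) 0 = Bn j 1 + Bn j 1 := by
  unfold Bn
  rcases Nat.even_or_odd (j + 1) with h | h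
  · obtain ⟨s, hs⟩ := h
    have hs1 : 1 ≤ s := by omega
    obtain ⟨t, rfl⟩ : ∃ t, s = t + 1 := ⟨s - 1, by omega⟩
    rw [if_pos (by omega), if_pos (by omega)]
    rw [show (j + 1 + 0) / 2 = t + 1 by omega]
    have hj : j = 2 * t + 1 := by omega
    subst hj
    rw [show 2 * t + 1 + 1 = (2 * t + 1) + 1 from rfl, Nat.choose_succ_succ,
      Nat.choose_symm_half t]
  · obtain ⟨s, hs⟩ := h
    rw [if_neg (by omega), if_neg (by omega)]

/-- Coefficient for integer index. -/
def Bz (j : ℕ) (k : ℤ) : ℕ := Bn j k.natAbs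

lemma Bz_rec (j : ℕ) (k : ℤ) : Bz (j+1) k = Bz j (k-1) + Bz j (k+1) := by
  unfold Bz
  rcases lt_trichotomy k 0 with hk | rfl | hk
  · obtain ⟨a, ha⟩ : ∃ a, k.natAbs = a + 1 := ⟨k.natAbs - 1, by omega⟩
    rw [ha, show (k-1).natAbs = a + 2 by omega, show (k+1).natAbs = a by omega,
      Bn_rec, Nat.add_comm]
  · rw [show ((0:ℤ)).natAbs = 0 by rfl, show ((0:ℤ)-1).natAbs = 1 by rfl,
      show ((0:ℤ)+1).natAbs = 1 by rfl, Bn_rec0]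
  · obtain ⟨a, ha⟩ : ∃ a, k.natAbs = a + 1 := ⟨k.natAbs - 1, by omega⟩
    rw [ha, show (k-1).natAbs = a by omega, show (k+1).natAbs = a + 2 by omega, Bn_rec]

lemma choose_le_two_pow (n m : ℕ) : n.choose m ≤ 2 ^ n := by
  rcases le_or_gt m n with h | h
  · calc n.choose m ≤ ∑ i ∈ Finset.range (n+1), n.choose i :=
        Finset.single_le_sum (f := fun i => n.choose i) (fun i _ => Nat.zero_le _)
          (Finset.mem_range.mpr (by omega))
    _ = 2 ^ n := Nat.sum_range_choose n
  · rw [Nat.choose_eq_zero_of_lt h]; positivity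

lemma Bz_le (j : ℕ) (k : ℤ) : Bz j k ≤ 2 ^ j := by
  unfold Bz Bn
  split
  · exact choose_le_two_pow _ _
  · positivity

lemma Bz_self (k : ℤ) : Bz k.natAbs k = 1 := by
  unfold Bz Bn
  rw [if_pos (by omega), show (k.natAbs + k.natAbs) / 2 = k.natAbs by omega,
    Nat.choose_self]

/-- Vandermonde-style identity. -/
lemma vand_nat (N a b : ℕ) :
    ∑ m ∈ Finset.range (N+1), N.choose m * (N+a+b).choose (m+a)
      = (2*N+a+b).choose (N+a) := by
  have h := Nat.add_choose_eq N (N+a+b) (N+a)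
  rw [Finset.Nat.sum_antidiagonal_eq_sum_range_succ_mk] at h
  have h2 : ∑ p ∈ Finset.range (N+a+1), N.choose p * (N+a+b).choose (N+a-p)
      = ∑ p ∈ Finset.range (N+1), N.choose p * (N+a+b).choose (N+a-p) := by
    symm
    apply Finset.sum_subset
    · intro x hx; simp only [Finset.mem_range] at *; omega
    · intro x hx hnx
      simp only [Finset.mem_range] at hx hnx
      rw [Nat.choose_eq_zero_of_lt (by omega), zero_mul]
  rw [h2, ← Finset.sum_range_reflect] at h
  have key : ∀ m ∈ Finset.range (N+1),
      N.choose (N+1-1-m) * (N+a+b).choose (N+a-(N+1-1-m))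
        = N.choose m * (N+a+b).choose (m+a) := by
    intro m hm
    have hmN : m ≤ N := by simp only [Finset.mem_range] at hm; omega
    rw [show N+1-1-m = N-m by omega, show N+a-(N-m) = m+a by omega,
      Nat.choose_symm hmN]
  rw [Finset.sum_congr rfl key] at h
  rw [show 2*N+a+b = N+(N+a+b) by ring]
  exact h.symm

/-- Real version of the Vandermonde identity, with factorials. -/
lemma inner_sum (N a b : ℕ) :
    ∑ p ∈ Finset.HasAntidiagonal.antidiagonal N,
        (1 / ((p.1.factorial : ℝ) * (p.1+a).factorial)
          * (1 / ((p.2.factorial : ℝ) * (p.2+b).factorial)))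
      = ((2*N+a+b).choose (N+a) : ℝ) / (N.factorial * (N+a+b).factorial) := by
  have key : ∀ p ∈ Finset.HasAntidiagonal.antidiagonal N,
      (1 / ((p.1.factorial : ℝ) * (p.1+a).factorial)
        * (1 / ((p.2.factorial : ℝ) * (p.2+b).factorial)))
        = ((N.choose p.1 * (N+a+b).choose (p.1+a) : ℕ) : ℝ)
            / ((N.factorial : ℝ) * (N+a+b).factorial) := by
    rintro ⟨m, j⟩ hp
    have hmj : m + j = N := Finset.HasAntidiagonal.mem_antidiagonal.mp hp
    subst hmj
    have h1 : (((m+j).choose m : ℝ) * m.factorial * j.factorial) = ((m+j).factorial : ℝ) := by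
      have := Nat.add_choose_mul_factorial_mul_factorial m j
      rw [← Nat.choose_symm_add] at this
      exact_mod_cast this
    have h2 : ((((m+a)+(j+b)).choose (m+a) : ℝ) * (m+a).factorial * (j+b).factorial)
        = (((m+a)+(j+b)).factorial : ℝ) := by
      have := Nat.add_choose_mul_factorial_mul_factorial (m+a) (j+b)
      rw [← Nat.choose_symm_add] at this
      exact_mod_cast this
    have e : m + j + a + b = (m+a)+(j+b) := by ring
    simp only [e]
    push_cast
    rw [← h1, ← h2]
    have c1 : (0:ℝ) < ((m+j).choose m : ℝ) := by
      exact_mod_cast Nat.choose_pos (by omega)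
    have c2 : (0:ℝ) < (((m+a)+(j+b)).choose (m+a) : ℝ) := by
      exact_mod_cast Nat.choose_pos (by omega)
    have f1 : (0:ℝ) < (m.factorial : ℝ) := by exact_mod_cast m.factorial_pos
    have f2 : (0:ℝ) < (j.factorial : ℝ) := by exact_mod_cast j.factorial_pos
    have f3 : (0:ℝ) < ((m+a).factorial : ℝ) := by exact_mod_cast (m+a).factorial_pos
    have f4 : (0:ℝ) < ((j+b).factorial : ℝ) := by exact_mod_cast (j+b).factorial_pos
    field_simp
  rw [Finset.sum_congr rfl key, ← Finset.sum_div]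
  congr 1
  rw [Finset.Nat.sum_antidiagonal_eq_sum_range_succ_mk, ← Nat.cast_sum]
  exact_mod_cast congrArg (Nat.cast (R := ℝ)) (vand_nat N a b)

end BesselTuran
section Integrals

open BesselTuran

lemma pi_pos' : (0:ℝ) < π := Real.pi_pos

lemma integral_cos_int (k : ℤ) :
    ∫ t in (-π)..π, Real.cos ((k : ℝ) * t) = if k = 0 then 2 * π else 0 := by
  rcases eq_or_ne k 0 with rfl | hk
  · simp only [Int.cast_zero, zero_mul, Real.cos_zero, if_pos rfl]
    rw [intervalIntegral.integral_const]
    simp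
    ring
  · rw [if_neg hk]
    have hc : (k : ℝ) ≠ 0 := Int.cast_ne_zero.mpr hk
    rw [intervalIntegral.integral_comp_mul_left Real.cos hc, integral_cos]
    simp [mul_neg, Real.sin_neg, Real.sin_int_mul_pi]

lemma A_eq (j : ℕ) (k : ℤ) :
    (∫ t in (-π)..π, Real.cos t ^ j * Real.cos ((k : ℝ) * t))
      = (2 * π / 2 ^ j) * Bz j k := by
  induction j generalizing k with
  | zero =>
    simp only [pow_zero, one_mul, integral_cos_int, pow_zero]
    rcases eq_or_ne k 0 with rfl | hk
    · simp [Bz, Bn]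
    · rw [if_neg hk]
      have hB : Bz 0 k = 0 := by
        unfold Bz Bn
        split
        · rw [Nat.choose_eq_zero_of_lt (by omega)]
        · rfl
      rw [hB]
      simp
  | succ j ih =>
    have hrw : ∀ t : ℝ, Real.cos t ^ (j+1) * Real.cos ((k : ℝ) * t)
        = (1/2) * (Real.cos t ^ j * Real.cos (((k-1 : ℤ) : ℝ) * t))
          + (1/2) * (Real.cos t ^ j * Real.cos (((k+1 : ℤ) : ℝ) * t)) := by
      intro t
      have h1 : ((k-1 : ℤ) : ℝ) * t = (k : ℝ) * t - t := by push_cast; ring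
      have h2 : ((k+1 : ℤ) : ℝ) * t = (k : ℝ) * t + t := by push_cast; ring
      rw [h1, h2, Real.cos_sub, Real.cos_add]
      ring
    have hci : ∀ m : ℤ, IntervalIntegrable
        (fun t => (1/2 : ℝ) * (Real.cos t ^ j * Real.cos ((m : ℝ) * t))) volume (-π) π := by
      intro m
      apply Continuous.intervalIntegrable
      fun_prop
    simp only [hrw]
    rw [intervalIntegral.integral_add (hci (k-1)) (hci (k+1)),
      intervalIntegral.integral_const_mul, intervalIntegral.integral_const_mul,
      ih (k-1), ih (k+1), Bz_rec]
    push_cast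
    ring

end Integrals
section Series

open BesselTuran

lemma besselI_eq_tsum (k : ℤ) (β : ℝ) :
    besselI k β
      = ∑' j : ℕ, β ^ j / (j.factorial : ℝ) * ((Bz j k : ℝ) / 2 ^ j) := by
  have hle : (-π : ℝ) ≤ π := by linarith [pi_pos']
  set F : ℕ → ℝ → ℝ :=
    fun j t => β ^ j / (j.factorial : ℝ) * (Real.cos t ^ j * Real.cos ((k : ℝ) * t)) with hF
  have hFc : ∀ j, Continuous (F j) := by intro j; fun_prop
  have hFint : ∀ j, IntegrableOn (F j) (Set.Ioc (-π) π) := fun j =>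
    (hFc j).integrableOn_Ioc
  have hFbound : ∀ (j : ℕ) (t : ℝ), ‖F j t‖ ≤ |β| ^ j / (j.factorial : ℝ) := by
    intro j t
    have h1 : |Real.cos t| ≤ 1 := Real.abs_cos_le_one t
    have h2 : |Real.cos ((k : ℝ) * t)| ≤ 1 := Real.abs_cos_le_one _
    have heq : ‖F j t‖ = |β| ^ j / (j.factorial : ℝ)
        * (|Real.cos t| ^ j * |Real.cos ((k : ℝ) * t)|) := by
      simp [hF, abs_mul, abs_div, abs_pow, Nat.abs_cast]
    rw [heq]
    calc |β| ^ j / (j.factorial : ℝ) * (|Real.cos t| ^ j * |Real.cos ((k : ℝ) * t)|)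
        ≤ |β| ^ j / (j.factorial : ℝ) * (1 ^ j * 1) := by
          gcongr
        _ = |β| ^ j / (j.factorial : ℝ) := by ring
  have hnorm : ∀ j : ℕ, (∫ t in Set.Ioc (-π) π, ‖F j t‖)
      ≤ |β| ^ j / (j.factorial : ℝ) * (2 * π) := by
    intro j
    have h1 : (∫ t in Set.Ioc (-π) π, ‖F j t‖)
        ≤ ∫ _ in Set.Ioc (-π) π, (|β| ^ j / (j.factorial : ℝ)) := by
      apply setIntegral_mono_on (hFint j).norm
        (integrableOn_const measure_Ioc_lt_top.ne) measurableSet_Ioc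
      intro t _
      exact hFbound j t
    rw [setIntegral_const, measureReal_def, Real.volume_Ioc,
      ENNReal.toReal_ofReal (by linarith [pi_pos'])] at h1
    calc (∫ t in Set.Ioc (-π) π, ‖F j t‖) ≤ (π - -π) • (|β| ^ j / (j.factorial : ℝ)) := h1
      _ = |β| ^ j / (j.factorial : ℝ) * (2 * π) := by
          rw [smul_eq_mul]; ring
  have hsumnorm : Summable fun j : ℕ => ∫ t in Set.Ioc (-π) π, ‖F j t‖ := by
    apply Summable.of_nonneg_of_le (fun j => integral_nonneg fun t => norm_nonneg _) hnorm
    exact (Real.summable_pow_div_factorial |β|).mul_right (2 * π)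
  have hswap := MeasureTheory.integral_tsum_of_summable_integral_norm hFint hsumnorm
  have hpt : ∀ t : ℝ,
      Real.exp (β * Real.cos t) * Real.cos ((k : ℝ) * t) = ∑' j : ℕ, F j t := by
    intro t
    rw [Real.exp_eq_exp_ℝ, NormedSpace.exp_eq_tsum_div, ← tsum_mul_right]
    exact tsum_congr fun j => by rw [mul_pow]; simp [hF]; ring
  calc besselI k β
      = (1 / (2 * π)) * ∫ t in Set.Ioc (-π) π, ∑' j : ℕ, F j t := by
        unfold besselI; congr 1; exact setIntegral_congr_fun measurableSet_Ioc
          (fun t _ => hpt t)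
    _ = (1 / (2 * π)) * ∑' j : ℕ, ∫ t in Set.Ioc (-π) π, F j t := by rw [← hswap]
    _ = ∑' j : ℕ, (1 / (2 * π)) * ∫ t in Set.Ioc (-π) π, F j t := tsum_mul_left.symm
    _ = ∑' j : ℕ, β ^ j / (j.factorial : ℝ) * ((Bz j k : ℝ) / 2 ^ j) := by
        apply tsum_congr
        intro j
        rw [show (∫ t in Set.Ioc (-π) π, F j t)
            = β ^ j / (j.factorial : ℝ)
              * ∫ t in Set.Ioc (-π) π, Real.cos t ^ j * Real.cos ((k : ℝ) * t) from
          MeasureTheory.integral_const_mul _ _]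
        rw [← intervalIntegral.integral_of_le hle, A_eq]
        have hπ : (π : ℝ) ≠ 0 := Real.pi_ne_zero
        field_simp

lemma besselI_summable (k : ℤ) {β : ℝ} (hβ : 0 < β) :
    Summable fun j : ℕ => β ^ j / (j.factorial : ℝ) * ((Bz j k : ℝ) / 2 ^ j) := by
  apply Summable.of_nonneg_of_le (fun j => by positivity) (fun j => ?_)
    (Real.summable_pow_div_factorial β)
  have hB : ((Bz j k : ℝ)) ≤ 2 ^ j := by exact_mod_cast Bz_le j k
  calc β ^ j / (j.factorial : ℝ) * ((Bz j k : ℝ) / 2 ^ j)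
      ≤ β ^ j / (j.factorial : ℝ) * ((2:ℝ) ^ j / 2 ^ j) := by gcongr
    _ = β ^ j / (j.factorial : ℝ) := by
        rw [div_self (by positivity), mul_one]

lemma besselI_pos (k : ℤ) {β : ℝ} (hβ : 0 < β) : 0 < besselI k β := by
  rw [besselI_eq_tsum]
  refine Summable.tsum_pos (besselI_summable k hβ) (fun j => by positivity) k.natAbs ?_
  rw [Bz_self]
  positivity

end Series
section Turan

open BesselTuran

lemma besselI_nat_eq (k : ℕ) {β : ℝ} (hβ : 0 < β) :
    besselI (k : ℤ) β
      = ∑' n : ℕ, (β/2) ^ (2*n+k) / ((n.factorial : ℝ) * ((n+k).factorial : ℝ)) := by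
  rw [besselI_eq_tsum]
  set f : ℕ → ℝ := fun j => β ^ j / (j.factorial : ℝ) * ((Bz j (k : ℤ) : ℝ) / 2 ^ j) with hf
  set g : ℕ → ℝ := fun n => (β/2) ^ (2*n+k) / ((n.factorial : ℝ) * ((n+k).factorial : ℝ))
    with hg
  have hinj : Function.Injective (fun n : ℕ => 2 * n + k) := by
    intro x y h
    dsimp only at h
    omega
  have hsupp : Function.support f ⊆ Set.range (fun n : ℕ => 2 * n + k) := by
    intro j hj
    simp only [Function.mem_support, hf] at hj
    have hB : Bz j (k : ℤ) ≠ 0 := by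
      intro h0
      apply hj
      rw [h0]
      simp
    have hcond : (j + k) % 2 = 0 ∧ k ≤ j := by
      unfold Bz Bn at hB
      rw [Int.natAbs_natCast] at hB
      by_contra hc
      rcases Nat.eq_zero_or_pos ((j + k) % 2) with hpar | hpar
      · have hkj : ¬ k ≤ j := fun h => hc ⟨hpar, h⟩
        rw [if_pos hpar, Nat.choose_eq_zero_of_lt (by omega)] at hB
        exact hB rfl
      · rw [if_neg (by omega)] at hB
        exact hB rfl
    exact ⟨(j - k) / 2, by dsimp only; omega⟩
  have key : ∀ n : ℕ, f (2 * n + k) = g n := by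
    intro n
    have hB : Bz (2*n+k) (k : ℤ) = (2*n+k).choose (n+k) := by
      unfold Bz Bn
      rw [Int.natAbs_natCast, if_pos (by omega)]
      congr 1
      omega
    have hfac : ((2*n+k).choose (n+k) : ℝ) * (n.factorial : ℝ) * ((n+k).factorial : ℝ)
        = ((2*n+k).factorial : ℝ) := by
      have h := Nat.choose_mul_factorial_mul_factorial (show n+k ≤ 2*n+k by omega)
      rw [show 2*n+k-(n+k) = n by omega] at h
      exact_mod_cast by rw [← h]; ring
    simp only [hf, hg, hB, div_pow]
    have h1 : (0:ℝ) < ((2*n+k).factorial : ℝ) := by exact_mod_cast (2*n+k).factorial_pos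
    have h2 : (0:ℝ) < (n.factorial : ℝ) := by exact_mod_cast n.factorial_pos
    have h3 : (0:ℝ) < ((n+k).factorial : ℝ) := by exact_mod_cast (n+k).factorial_pos
    rw [div_mul_div_comm, div_eq_div_iff (by positivity) (by positivity)]
    calc β ^ (2*n+k) * (((2*n+k).choose (n+k) : ℕ) : ℝ)
            * ((n.factorial : ℝ) * ((n+k).factorial : ℝ))
        = β ^ (2*n+k) * ((((2*n+k).choose (n+k) : ℕ) : ℝ) * (n.factorial : ℝ)
            * ((n+k).factorial : ℝ)) := by ring
      _ = β ^ (2*n+k) * ((2*n+k).factorial : ℝ) := by rw [hfac]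
      _ = β ^ (2*n+k) / 2 ^ (2*n+k) * (((2*n+k).factorial : ℝ) * 2 ^ (2*n+k)) := by
          field_simp
  rw [← hinj.tsum_eq hsupp]
  exact tsum_congr key

lemma summable_series (c : ℕ) {β : ℝ} (hβ : 0 < β) :
    Summable fun n : ℕ => (β/2) ^ (2*n+c) / ((n.factorial : ℝ) * ((n+c).factorial : ℝ)) := by
  apply Summable.of_nonneg_of_le (fun n => by positivity) (fun n => ?_)
    ((Real.summable_pow_div_factorial ((β/2) ^ 2)).mul_left ((β/2) ^ c))
  have h1 : (1:ℝ) ≤ ((n+c).factorial : ℝ) := by exact_mod_cast (n+c).factorial_pos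
  calc (β/2) ^ (2*n+c) / ((n.factorial : ℝ) * ((n+c).factorial : ℝ))
      ≤ (β/2) ^ (2*n+c) / ((n.factorial : ℝ) * 1) := by gcongr
    _ = (β/2) ^ c * (((β/2) ^ 2) ^ n / (n.factorial : ℝ)) := by
        rw [mul_one, pow_add, pow_mul]; ring

lemma besselI_mul (a b : ℕ) {β : ℝ} (hβ : 0 < β) :
    besselI (a : ℤ) β * besselI (b : ℤ) β
      = ∑' N : ℕ, (β/2) ^ (2*N+a+b) * (((2*N+a+b).choose (N+a) : ℕ) : ℝ)
          / ((N.factorial : ℝ) * ((N+a+b).factorial : ℝ)) := by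
  rw [besselI_nat_eq a hβ, besselI_nat_eq b hβ]
  have hnorm : ∀ c : ℕ, Summable fun n : ℕ =>
      ‖(β/2) ^ (2*n+c) / ((n.factorial : ℝ) * ((n+c).factorial : ℝ))‖ := by
    intro c
    exact (summable_series c hβ).congr fun n =>
      (Real.norm_of_nonneg (by positivity)).symm
  rw [tsum_mul_tsum_eq_tsum_sum_antidiagonal_of_summable_norm (hnorm a) (hnorm b)]
  apply tsum_congr
  intro N
  have hterm : ∀ p ∈ Finset.HasAntidiagonal.antidiagonal N,
      (β/2) ^ (2*p.1+a) / ((p.1.factorial : ℝ) * ((p.1+a).factorial : ℝ))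
        * ((β/2) ^ (2*p.2+b) / ((p.2.factorial : ℝ) * ((p.2+b).factorial : ℝ)))
      = (β/2) ^ (2*N+a+b) * (1 / ((p.1.factorial : ℝ) * (p.1+a).factorial)
          * (1 / ((p.2.factorial : ℝ) * (p.2+b).factorial))) := by
    rintro ⟨m, j⟩ hp
    have hmj : m + j = N := Finset.HasAntidiagonal.mem_antidiagonal.mp hp
    rw [div_mul_div_comm, ← pow_add, show 2*m+a+(2*j+b) = 2*N+a+b by omega]
    ring
  rw [Finset.sum_congr rfl hterm, ← Finset.mul_sum, inner_sum]
  ring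

lemma summable_closed (a b : ℕ) {β : ℝ} (hβ : 0 < β) :
    Summable fun N : ℕ => (β/2) ^ (2*N+a+b) * (((2*N+a+b).choose (N+a) : ℕ) : ℝ)
        / ((N.factorial : ℝ) * ((N+a+b).factorial : ℝ)) := by
  apply Summable.of_nonneg_of_le (fun N => by positivity) (fun N => ?_)
    ((Real.summable_pow_div_factorial (β^2)).mul_left (β^(a+b)))
  have hch : (((2*N+a+b).choose (N+a) : ℕ) : ℝ) ≤ (2:ℝ) ^ (2*N+a+b) := by
    exact_mod_cast choose_le_two_pow (2*N+a+b) (N+a)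
  have h1 : (1:ℝ) ≤ ((N+a+b).factorial : ℝ) := by exact_mod_cast (N+a+b).factorial_pos
  calc (β/2) ^ (2*N+a+b) * (((2*N+a+b).choose (N+a) : ℕ) : ℝ)
        / ((N.factorial : ℝ) * ((N+a+b).factorial : ℝ))
      ≤ (β/2) ^ (2*N+a+b) * (2:ℝ) ^ (2*N+a+b) / ((N.factorial : ℝ) * 1) := by gcongr
    _ = β^(a+b) * ((β^2)^N / (N.factorial : ℝ)) := by
        rw [← mul_pow, div_mul_cancel₀ β (two_ne_zero), mul_one,
          show 2*N+a+b = 2*N+(a+b) by omega, pow_add, pow_mul]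
        ring

end Turan
section Final

open BesselTuran

lemma turan_aux (k : ℕ) {β : ℝ} (hβ : 0 < β) :
    besselI (k : ℤ) β * besselI ((k:ℤ)+2) β ≤ besselI ((k:ℤ)+1) β ^ 2 := by
  have e1 : ((k:ℤ)+2) = ((k+2 : ℕ) : ℤ) := by push_cast; ring
  have e2 : ((k:ℤ)+1) = ((k+1 : ℕ) : ℤ) := by push_cast; ring
  rw [e1, e2, sq, besselI_mul k (k+2) hβ, besselI_mul (k+1) (k+1) hβ]
  apply Summable.tsum_le_tsum ?_ (summable_closed k (k+2) hβ) (summable_closed (k+1) (k+1) hβ)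
  intro N
  rw [show 2*N+k+(k+2) = 2*N+(k+1)+(k+1) by omega,
    show N+k+(k+2) = N+(k+1)+(k+1) by omega]
  have hch : (2*N+(k+1)+(k+1)).choose (N+k) ≤ (2*N+(k+1)+(k+1)).choose (N+(k+1)) := by
    have h := Nat.choose_le_middle (N+k) (2*N+(k+1)+(k+1))
    rwa [show (2*N+(k+1)+(k+1))/2 = N+(k+1) by omega] at h
  gcongr

lemma besselI_neg (k : ℤ) (β : ℝ) : besselI (-k) β = besselI k β := by
  unfold besselI
  congr 1
  apply setIntegral_congr_fun measurableSet_Ioc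
  intro t _
  simp [neg_mul]

lemma I1_le_I0 {β : ℝ} (hβ : 0 < β) : besselI 1 β ≤ besselI 0 β := by
  unfold besselI
  have h2π : (0:ℝ) < 1 / (2*π) := by positivity
  apply mul_le_mul_of_nonneg_left ?_ h2π.le
  have hint : ∀ m : ℤ, IntegrableOn
      (fun t => Real.exp (β * Real.cos t) * Real.cos ((m:ℝ) * t)) (Set.Ioc (-π) π) := by
    intro m
    apply Continuous.integrableOn_Ioc
    fun_prop
  apply setIntegral_mono_on (hint 1) (hint 0) measurableSet_Ioc
  intro t _
  simp only [Int.cast_one, Int.cast_zero, one_mul, zero_mul, Real.cos_zero, mul_one]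
  calc Real.exp (β * Real.cos t) * Real.cos t ≤ Real.exp (β * Real.cos t) * 1 := by
        gcongr
        exact Real.cos_le_one t
    _ = Real.exp (β * Real.cos t) := mul_one _

end Final

open BesselTuran in
/-- **Positivity and convexity (Turán inequality) of the XY height-function potential.**
For `β > 0`, `I_k(β) > 0` for every `k ∈ ℤ`, and `k ↦ -log I_{|k|}(β)` is convex on ℤ;
equivalently `I_{k-1}(β) I_{k+1}(β) ≤ I_k(β)²` for every integer `k`. -/
theorem besselI_pos_and_turan (β : ℝ) (hβ : 0 < β) :
    (∀ k : ℤ, 0 < besselI k β) ∧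
    (∀ k : ℤ, besselI (k - 1) β * besselI (k + 1) β ≤ (besselI k β) ^ 2) := by
  constructor
  · intro k
    exact besselI_pos k hβ
  · intro k
    rcases lt_trichotomy k 0 with hk | rfl | hk
    · obtain ⟨m, hm⟩ : ∃ m : ℕ, k = -((m:ℤ)+1) := ⟨(-k-1).toNat, by omega⟩
      have e1 : besselI (k-1) β = besselI ((m:ℤ)+2) β := by
        rw [hm, show (-((m:ℤ)+1)-1) = -((m:ℤ)+2) by ring]
        exact besselI_neg _ _
      have e2 : besselI (k+1) β = besselI ((m:ℤ)) β := by
        rw [hm, show (-((m:ℤ)+1)+1) = -((m:ℤ)) by ring]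
        exact besselI_neg _ _
      have e3 : besselI k β = besselI ((m:ℤ)+1) β := by
        rw [hm]
        exact besselI_neg _ _
      rw [e1, e2, e3, mul_comm]
      exact turan_aux m hβ
    · have e1 : besselI ((0:ℤ)-1) β = besselI 1 β := by
        rw [← besselI_neg 1 β]
        norm_num
      rw [e1, show ((0:ℤ)+1) = 1 by norm_num, ← sq]
      have h1 : (0:ℝ) ≤ besselI 1 β := (besselI_pos 1 hβ).le
      exact pow_le_pow_left₀ h1 (I1_le_I0 hβ) 2
    · obtain ⟨m, rfl⟩ : ∃ m : ℕ, k = (m:ℤ)+1 := ⟨(k-1).toNat, by omega⟩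
      rw [show ((m:ℤ)+1-1) = (m:ℤ) by ring, show ((m:ℤ)+1+1) = (m:ℤ)+2 by ring]
      exact turan_aux m hβ
end
end

section
/- GFF covariance for the gradient projection of the spin field (Proposition 6.1, diagonal case): Assume G is connected with boundary vertex ∂. Under μ_★ (spins θ: V → ℝ/2πℤ with θ_∂ = 0), let J := dθ and let τ = τ(θ) be the unique function V → ℝ with τ_∂ = 0 and dτ = P_★(𝒰'(J)), where P_★ is the orthogonal projection of ℝ^E onto the subspace Im(d) of gradients and 𝒰'(J) := (𝒰'(J_e))_{e∈E}. Then for every f: V → ℝ with f_∂ = 0, (inf_{e∈E} μ_★[𝒰''(J_e)]) · (f, Δ^{-1}f) ≤ μ_★[(τ, f)²] ≤ (sup_{e∈E} μ_★[𝒰''(J_e)]) · (f, Δ^{-1}f), where (τ,f) = Σ_v τ_v f_v, Δ = d*d is the graph Laplacian acting on functions vanishing at ∂, and Δ^{-1} is its inverse on that space. -/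
open MeasureTheory Real
noncomputable section

/-- Connectivity of the (multi)graph encoded by `src, tgt : E → V`. -/
def IsConn {V E : Type*} (src tgt : E → V) : Prop :=
  ∀ x y : V, Relation.ReflTransGen
    (fun a b => ∃ e, (src e = a ∧ tgt e = b) ∨ (src e = b ∧ tgt e = a)) x y

/-- Coordinates for spin configurations `θ : V → ℝ/2πℤ` pinned at the boundary vertex
(`θ_∂ = 0`): the product of a Dirac mass at `0` in the `∂`-coordinate and of Lebesgue measure
on the fundamental domain `(-π, π]` in every other coordinate. -/
def pinnedBox (V : Type*) [Fintype V] [DecidableEq V] (bd : V) : Measure (V → ℝ) :=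
  Measure.pi fun v => if v = bd then Measure.dirac (0 : ℝ) else volume.restrict (Set.Ioc (-π) π)

/-- Expectation with respect to the pinned spin measure `μ_★(dθ) ∝ Π_e w((dθ)_e) dθ`
on `{θ : V → ℝ/2πℤ : θ_∂ = 0}` (normalising constants cancel in the ratio). -/
def pinnedSpinExp {V E : Type*} [Fintype V] [Fintype E] [DecidableEq V]
    (src tgt : E → V) (bd : V) (p : ℤ → ℝ) (F : (V → ℝ) → ℝ) : ℝ :=
  (∫ θ, F θ * ∏ e, wgt p (grad src tgt θ e) ∂ pinnedBox V bd) /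
    ∫ θ, ∏ e, wgt p (grad src tgt θ e) ∂ pinnedBox V bd


namespace GFFaux
set_option linter.unusedSectionVars false
set_option maxHeartbeats 1000000


def w1 (p : ℤ → ℝ) (α : ℝ) : ℝ := ∑' n : ℤ, p n * (-Real.sin ((n:ℝ) * α) * n)
def w2 (p : ℤ → ℝ) (α : ℝ) : ℝ := ∑' n : ℤ, p n * (-(Real.cos ((n:ℝ) * α) * n) * n)

section Analysis

lemma abs_int_le_sq (n : ℤ) : |(n:ℝ)| ≤ (n:ℝ)^2 := by
  rcases eq_or_ne n 0 with h | h
  · simp [h]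
  · have h1 : (1:ℝ) ≤ |(n:ℝ)| := by
      have h2 : (1:ℤ) ≤ |n| := Int.one_le_abs h
      calc (1:ℝ) = ((1:ℤ):ℝ) := by norm_num
      _ ≤ (|n| : ℝ) := by exact_mod_cast h2
      _ = |(n:ℝ)| := by push_cast; ring
    calc |(n:ℝ)| = |(n:ℝ)| * 1 := by ring
    _ ≤ |(n:ℝ)| * |(n:ℝ)| := by nlinarith
    _ = (n:ℝ)^2 := by rw [← abs_mul, ← sq, abs_sq]

variable {p : ℤ → ℝ} (hnonneg : ∀ n : ℤ, 0 ≤ p n)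
  (hsum : Summable fun n : ℤ => (n : ℝ) ^ 2 * p n)

section
include hnonneg hsum

lemma summable_abs_mul : Summable fun n : ℤ => |(n:ℝ)| * p n :=
  Summable.of_nonneg_of_le (fun n => mul_nonneg (abs_nonneg _) (hnonneg n))
    (fun n => mul_le_mul_of_nonneg_right (abs_int_le_sq n) (hnonneg n)) hsum

lemma summable_p : Summable p := by
  have h0 : Summable fun n : ℤ => (if n = (0:ℤ) then p 0 else 0) :=
    (hasSum_ite_eq (0:ℤ) (p 0)).summable
  refine Summable.of_nonneg_of_le hnonneg (fun n => ?_) (hsum.add h0)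
  rcases eq_or_ne n 0 with h | h
  · simp [h]
  · have h2 : (1:ℝ) ≤ |(n:ℝ)| := by
      have h3 : (1:ℤ) ≤ |n| := Int.one_le_abs h
      calc (1:ℝ) = ((1:ℤ):ℝ) := by norm_num
      _ ≤ (|n| : ℝ) := by exact_mod_cast h3
      _ = |(n:ℝ)| := by push_cast; ring
    have h1 : (1:ℝ) ≤ (n:ℝ)^2 := le_trans h2 (abs_int_le_sq n)
    have : p n ≤ (n:ℝ)^2 * p n := by nlinarith [hnonneg n]
    simp only [h, if_false, add_zero]
    linarith

lemma hasDerivAt_wgt (α : ℝ) : HasDerivAt (wgt p) (w1 p α) α := by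
  refine hasDerivAt_tsum (g := fun n α => p n * Real.cos ((n:ℝ) * α))
    (g' := fun n α => p n * (-Real.sin ((n:ℝ) * α) * n))
    (u := fun n : ℤ => |(n:ℝ)| * p n) (summable_abs_mul hnonneg hsum) (fun n y => ?_)
    (fun n y => ?_) (y₀ := 0) ?_ α
  · have := (((hasDerivAt_id y).const_mul ((n:ℝ))).cos).const_mul (p n)
    simpa using this
  · have hs : |Real.sin ((n:ℝ)*y)| ≤ 1 := Real.abs_sin_le_one _
    calc ‖p n * (-Real.sin ((n:ℝ)*y) * n)‖ = p n * (|Real.sin ((n:ℝ)*y)| * |(n:ℝ)|) := by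
          rw [Real.norm_eq_abs, abs_mul, abs_mul, abs_neg, abs_of_nonneg (hnonneg n)]
    _ ≤ p n * (1 * |(n:ℝ)|) := by gcongr; exact hnonneg n
    _ = |(n:ℝ)| * p n := by ring
  · simpa using summable_p hnonneg hsum

lemma hasDerivAt_w1 (α : ℝ) : HasDerivAt (w1 p) (w2 p α) α := by
  refine hasDerivAt_tsum (g := fun n α => p n * (-Real.sin ((n:ℝ) * α) * n))
    (g' := fun n α => p n * (-(Real.cos ((n:ℝ) * α) * n) * n))
    (u := fun n : ℤ => (n:ℝ)^2 * p n) hsum (fun n y => ?_)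
    (fun n y => ?_) (y₀ := 0) ?_ α
  · have := ((((hasDerivAt_id y).const_mul ((n:ℝ))).sin.neg).mul_const ((n:ℝ))).const_mul (p n)
    simpa [neg_mul, mul_neg, mul_comm, mul_left_comm, mul_assoc] using this
  · have hs : |Real.cos ((n:ℝ)*y)| ≤ 1 := Real.abs_cos_le_one _
    calc ‖p n * (-(Real.cos ((n:ℝ)*y) * n) * n)‖
        = p n * (|Real.cos ((n:ℝ)*y)| * (|(n:ℝ)| * |(n:ℝ)|)) := by
          rw [Real.norm_eq_abs, abs_mul, abs_mul, abs_neg, abs_mul,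
            abs_of_nonneg (hnonneg n)]; ring
    _ ≤ p n * (1 * (|(n:ℝ)| * |(n:ℝ)|)) := by gcongr; exact hnonneg n
    _ = (n:ℝ)^2 * p n := by rw [← abs_mul, ← sq, abs_sq]; ring
  · simpa using (summable_zero : Summable (fun _ : ℤ => (0:ℝ)))

lemma continuous_wgt : Continuous (wgt p) :=
  continuous_iff_continuousAt.2 fun α => (hasDerivAt_wgt hnonneg hsum α).continuousAt

lemma continuous_w1 : Continuous (w1 p) :=
  continuous_iff_continuousAt.2 fun α => (hasDerivAt_w1 hnonneg hsum α).continuousAt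

lemma continuous_w2 : Continuous (w2 p) := by
  refine continuous_tsum (fun n => ?_) hsum (fun n x => ?_)
  · fun_prop
  · have hs : |Real.cos ((n:ℝ)*x)| ≤ 1 := Real.abs_cos_le_one _
    calc ‖p n * (-(Real.cos ((n:ℝ)*x) * n) * n)‖
        = p n * (|Real.cos ((n:ℝ)*x)| * (|(n:ℝ)| * |(n:ℝ)|)) := by
          rw [Real.norm_eq_abs, abs_mul, abs_mul, abs_neg, abs_mul,
            abs_of_nonneg (hnonneg n)]; ring
    _ ≤ p n * (1 * (|(n:ℝ)| * |(n:ℝ)|)) := by gcongr; exact hnonneg n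
    _ = (n:ℝ)^2 * p n := by rw [← abs_mul, ← sq, abs_sq]; ring

lemma periodic_wgt : Function.Periodic (wgt p) (2*π) := by
  intro x; unfold wgt
  refine tsum_congr fun n => ?_
  have : (n:ℝ) * (x + 2*π) = (n:ℝ) * x + (n:ℤ) * (2*π) := by push_cast; ring
  rw [this, Real.cos_add_int_mul_two_pi]

lemma periodic_w1 : Function.Periodic (w1 p) (2*π) := by
  intro x; unfold w1
  refine tsum_congr fun n => ?_
  have : (n:ℝ) * (x + 2*π) = (n:ℝ) * x + (n:ℤ) * (2*π) := by push_cast; ring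
  rw [this, Real.sin_add_int_mul_two_pi]

lemma periodic_w2 : Function.Periodic (w2 p) (2*π) := by
  intro x; unfold w2
  refine tsum_congr fun n => ?_
  have : (n:ℝ) * (x + 2*π) = (n:ℝ) * x + (n:ℤ) * (2*π) := by push_cast; ring
  rw [this, Real.cos_add_int_mul_two_pi]

end

/-- Bound for continuous `2π`-periodic functions. -/
lemma periodic_bound {f : ℝ → ℝ} (hf : Continuous f) (hp : Function.Periodic f (2*π)) :
    ∃ C : ℝ, 0 ≤ C ∧ ∀ x, |f x| ≤ C := by
  obtain ⟨C, hC⟩ := (isCompact_Icc (a := (0:ℝ)) (b := 2*π)).exists_bound_of_continuousOn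
    hf.continuousOn
  refine ⟨max C 0, le_max_right _ _, fun x => ?_⟩
  have h2 : (0:ℝ) < 2*π := Real.two_pi_pos
  set y := toIocMod h2 0 x with hy
  have hmem : y ∈ Set.Ioc 0 (0 + 2*π) := toIocMod_mem_Ioc h2 0 x
  have hfy : f y = f x := by
    have : y = x - toIocDiv h2 0 x • (2*π) := by
      rw [hy, toIocMod]
    rw [this]
    exact hp.sub_zsmul_eq _
  have : |f y| ≤ C := by
    have := hC y ⟨le_of_lt (by simpa using hmem.1), by simpa using hmem.2⟩
    simpa [Real.norm_eq_abs] using this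
  rw [← hfy]
  exact le_trans this (le_max_left _ _)

/-- First derivative of the dual potential. -/
def U1 (p : ℤ → ℝ) : ℝ → ℝ := fun α => -(w1 p α / wgt p α)

/-- Second derivative of the dual potential. -/
def U2 (p : ℤ → ℝ) : ℝ → ℝ :=
  fun α => -((w2 p α * wgt p α - w1 p α * w1 p α) / (wgt p α)^2)

section U
variable (hw : ∀ α : ℝ, 0 < wgt p α)

include hnonneg hsum hw

lemma hasDerivAt_spinU (α : ℝ) : HasDerivAt (spinU p) (U1 p α) α := by
  have h := ((hasDerivAt_wgt hnonneg hsum α).log (ne_of_gt (hw α))).neg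
  exact h

lemma deriv_spinU : deriv (spinU p) = U1 p :=
  funext fun α => (hasDerivAt_spinU hnonneg hsum hw α).deriv

lemma hasDerivAt_U1 (α : ℝ) : HasDerivAt (U1 p) (U2 p α) α := by
  have h := (((hasDerivAt_w1 hnonneg hsum α).div (hasDerivAt_wgt hnonneg hsum α)
    (ne_of_gt (hw α)))).neg
  exact h

lemma deriv_deriv_spinU : deriv (deriv (spinU p)) = U2 p := by
  rw [deriv_spinU hnonneg hsum hw]
  exact funext fun α => (hasDerivAt_U1 hnonneg hsum hw α).deriv

lemma continuous_U1 : Continuous (U1 p) :=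
  continuous_iff_continuousAt.2 fun α => (hasDerivAt_U1 hnonneg hsum hw α).continuousAt

lemma continuous_U2 : Continuous (U2 p) := by
  unfold U2
  have cw := continuous_wgt hnonneg hsum
  have cw1 := continuous_w1 hnonneg hsum
  have cw2 := continuous_w2 hnonneg hsum
  exact (((cw2.mul cw).sub (cw1.mul cw1)).div (cw.pow 2)
    (fun α => pow_ne_zero _ (ne_of_gt (hw α)))).neg

lemma periodic_U1 : Function.Periodic (U1 p) (2*π) := fun x => by
  unfold U1; rw [periodic_wgt hnonneg hsum x, periodic_w1 hnonneg hsum x]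

lemma periodic_U2 : Function.Periodic (U2 p) (2*π) := fun x => by
  unfold U2
  rw [periodic_wgt hnonneg hsum x, periodic_w1 hnonneg hsum x, periodic_w2 hnonneg hsum x]

lemma w1_eq_neg_U1_mul (α : ℝ) : w1 p α = -(U1 p α * wgt p α) := by
  have := ne_of_gt (hw α)
  simp only [U1, neg_mul, neg_neg]
  rw [div_mul_cancel₀ _ this]

end U
end Analysis



section SBP
variable {V E : Type*} [Fintype V] [Fintype E] [DecidableEq V] (src tgt : E → V)

/-- Discrete summation by parts. -/
lemma sum_grad_mul (h : V → ℝ) (ω : E → ℝ) :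
    ∑ e, grad src tgt h e * ω e = ∑ v, h v * divg src tgt ω v := by
  have key : ∀ (a : E → V), ∑ e, h (a e) * ω e
      = ∑ v, h v * ∑ e, (if a e = v then ω e else 0) := by
    intro a
    simp only [Finset.mul_sum, mul_ite, mul_zero]
    rw [Finset.sum_comm]
    refine Finset.sum_congr rfl fun e _ => ?_
    rw [Finset.sum_ite_eq Finset.univ (a e) (fun v => h v * ω e)]
    simp
  simp only [grad, divg, sub_mul, mul_sub, Finset.sum_sub_distrib]
  rw [key tgt, key src]

end SBP



instance factTwoPi : Fact ((0:ℝ) < 2*π) := ⟨Real.two_pi_pos⟩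

/-- Wrapping `x + c` back into the fundamental domain `(-π, π]`. -/
def wrap (c : ℝ) (x : ℝ) : ℝ :=
  ((AddCircle.measurableEquivIoc (2*π) (-π) ((x + c : ℝ) : AddCircle (2*π)) :
    Set.Ioc (-π) (-π + 2*π)) : ℝ)

lemma wrap_eq (c x : ℝ) : wrap c x = toIocMod Real.two_pi_pos (-π) (x + c) := by
  simp only [wrap, AddCircle.measurableEquivIoc, AddCircle.equivIoc,
    MeasurableEquiv.coe_mk, Equiv.coe_fn_mk, QuotientAddGroup.equivIocMod_coe]

lemma wrap_mem (c x : ℝ) : wrap c x ∈ Set.Ioc (-π) π := by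
  have h := toIocMod_mem_Ioc Real.two_pi_pos (-π) (x + c)
  rw [wrap_eq]
  refine ⟨h.1, h.2.trans_eq (by ring)⟩

lemma wrap_eq_add (c x : ℝ) :
    wrap c x = (x + c) + (-(toIocDiv Real.two_pi_pos (-π) (x + c)) : ℤ) * (2*π) := by
  rw [wrap_eq]
  have h := toIocMod_sub_self Real.two_pi_pos (-π) (x + c)
  rw [zsmul_eq_mul] at h
  push_cast at h ⊢
  linarith [h]

lemma measurable_wrap (c : ℝ) : Measurable (wrap c) := by
  refine measurable_subtype_coe.comp ?_
  exact (AddCircle.measurableEquivIoc (2*π) (-π)).measurable.comp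
    (AddCircle.measurable_mk'.comp (measurable_add_const c))

lemma wrap_measurePreserving (c : ℝ) :
    MeasurePreserving (wrap c) (volume.restrict (Set.Ioc (-π) π))
      (volume.restrict (Set.Ioc (-π) π)) := by
  have hIoc : Set.Ioc (-π:ℝ) π = Set.Ioc (-π) (-π + 2*π) := by congr 1; ring
  rw [hIoc]
  refine ⟨measurable_wrap c, ?_⟩
  refine Measure.ext fun S hS => ?_
  rw [Measure.map_apply (measurable_wrap c) hS]
  set B : Set (AddCircle (2*π)) :=
    (fun y => ((AddCircle.measurableEquivIoc (2*π) (-π) y : ℝ))) ⁻¹' S with hB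
  have hBmeas : MeasurableSet B :=
    (measurable_subtype_coe.comp (AddCircle.measurableEquivIoc (2*π) (-π)).measurable) hS
  have MPtrans : MeasurePreserving (fun x : ℝ => x + c)
      (volume.restrict (Set.Ioc (-π) (-π + 2*π)))
      (volume.restrict (Set.Ioc (-π + c) (-π + c + 2*π))) := by
    refine ⟨measurable_add_const c, ?_⟩
    have h1 : (fun x : ℝ => x + c) ⁻¹' (Set.Ioc (-π + c) (-π + c + 2*π))
        = Set.Ioc (-π) (-π + 2*π) := by
      rw [Set.preimage_add_const_Ioc]
      congr 1 <;> ring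
    rw [← h1, ← Measure.restrict_map (measurable_add_const c) measurableSet_Ioc,
      (measurePreserving_add_right volume c).map_eq]
  have MP1 : MeasurePreserving (fun x : ℝ => ((x + c : ℝ) : AddCircle (2*π)))
      (volume.restrict (Set.Ioc (-π) (-π + 2*π))) volume :=
    (AddCircle.measurePreserving_mk (2*π) (-π + c)).comp MPtrans
  have hwrapB : wrap c ⁻¹' S = (fun x : ℝ => ((x + c : ℝ) : AddCircle (2*π))) ⁻¹' B := rfl
  have h2 : volume.restrict (Set.Ioc (-π) (-π + 2*π)) (wrap c ⁻¹' S) = volume B := by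
    rw [hwrapB]
    exact MP1.measure_preimage hBmeas.nullMeasurableSet
  have MP0 := AddCircle.measurePreserving_mk (2*π) (-π)
  have h3 : volume B
      = volume.restrict (Set.Ioc (-π) (-π + 2*π)) (((↑) : ℝ → AddCircle (2*π)) ⁻¹' B) :=
    (MP0.measure_preimage hBmeas.nullMeasurableSet).symm
  have h4 : (((↑) : ℝ → AddCircle (2*π)) ⁻¹' B) ∩ Set.Ioc (-π) (-π + 2*π)
      = S ∩ Set.Ioc (-π) (-π + 2*π) := by
    ext x
    simp only [Set.mem_inter_iff, Set.mem_preimage, hB, and_congr_left_iff]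
    intro hx
    have : (AddCircle.measurableEquivIoc (2*π) (-π) ((x : ℝ) : AddCircle (2*π)) : ℝ) = x := by
      simp only [AddCircle.measurableEquivIoc, AddCircle.equivIoc,
        MeasurableEquiv.coe_mk, Equiv.coe_fn_mk, QuotientAddGroup.equivIocMod_coe]
      exact (toIocMod_eq_self Real.two_pi_pos).2 hx
    rw [this]
  rw [h2, h3, Measure.restrict_apply (AddCircle.measurable_mk' hBmeas),
    Measure.restrict_apply hS, h4]
section Box
variable (V : Type*) [Fintype V] [DecidableEq V] (bd : V)

def boxM : V → Measure ℝ :=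
  fun v => if v = bd then Measure.dirac (0 : ℝ) else volume.restrict (Set.Ioc (-π) π)

lemma pinnedBox_eq : pinnedBox V bd = Measure.pi (boxM V bd) := rfl

instance sigmaFinite_boxM (v : V) : SigmaFinite (boxM V bd v) := by
  unfold boxM; split_ifs <;> infer_instance

instance isFiniteMeasure_boxM (v : V) : IsFiniteMeasure (boxM V bd v) := by
  unfold boxM; split_ifs <;> infer_instance

lemma boxM_univ (v : V) : boxM V bd v Set.univ ≠ ⊤ := measure_ne_top _ _

instance isFiniteMeasure_pinnedBox : IsFiniteMeasure (pinnedBox V bd) := by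
  rw [pinnedBox_eq]
  constructor
  rw [Measure.pi_univ]
  exact ENNReal.prod_lt_top fun v _ => (measure_lt_top _ _)

lemma boxM_univ_toReal_pos : 0 < ((pinnedBox V bd) Set.univ).toReal := by
  rw [pinnedBox_eq, Measure.pi_univ]
  rw [ENNReal.toReal_prod]
  refine Finset.prod_pos fun v _ => ?_
  rw [ENNReal.toReal_pos_iff]
  constructor
  · unfold boxM
    split_ifs
    · simp
    · rw [Measure.restrict_apply MeasurableSet.univ, Set.univ_inter, Real.volume_Ioc]
      rw [ENNReal.ofReal_pos]
      linarith [Real.pi_pos]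
  · exact measure_lt_top _ _

variable {V bd}

/-- Shift invariance of the pinned box measure for coordinate-wise `2π`-periodic integrands. -/
lemma integral_shift {H : (V → ℝ) → ℝ} (hH : Measurable H)
    (hper : ∀ (θ : V → ℝ) (m : V → ℤ), H (fun v => θ v + (m v) * (2*π)) = H θ)
    (c : V → ℝ) (hc : c bd = 0) :
    ∫ θ, H (fun v => θ v + c v) ∂(pinnedBox V bd) = ∫ θ, H θ ∂(pinnedBox V bd) := by
  have MP : ∀ v, MeasurePreserving (wrap (c v)) (boxM V bd v) (boxM V bd v) := by
    intro v
    unfold boxM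
    split_ifs with h
    · refine ⟨measurable_wrap _, ?_⟩
      rw [Measure.map_dirac' (measurable_wrap _)]
      congr 1
      rw [h] at *
      rw [wrap_eq, hc, add_zero]
      refine (toIocMod_eq_self Real.two_pi_pos).2 ?_
      constructor
      · linarith [Real.pi_pos]
      · linarith [Real.pi_pos]
    · exact wrap_measurePreserving _
  have mp := measurePreserving_pi (boxM V bd) (boxM V bd) MP
  rw [pinnedBox_eq]
  have h1 : ∫ θ, H θ ∂(Measure.pi (boxM V bd))
      = ∫ θ, H (fun v => wrap (c v) (θ v)) ∂(Measure.pi (boxM V bd)) := by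
    have hmeas : AEStronglyMeasurable H
        (Measure.map (fun θ v => wrap (c v) (θ v)) (Measure.pi (boxM V bd))) := by
      rw [mp.map_eq]; exact hH.aestronglyMeasurable
    have h2 := MeasureTheory.integral_map (φ := fun (θ : V → ℝ) v => wrap (c v) (θ v))
      (f := H) mp.measurable.aemeasurable hmeas
    rw [mp.map_eq] at h2
    simpa using h2
  rw [h1]
  refine integral_congr_ae (Filter.EventuallyEq.of_eq (funext fun θ => ?_))
  have hfun : (fun v => wrap (c v) (θ v))
      = fun v => (θ v + c v) + ((-(toIocDiv Real.two_pi_pos (-π) (θ v + c v)) : ℤ) : ℝ) * (2*π) :=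
    funext fun v => wrap_eq_add (c v) (θ v)
  rw [hfun]
  exact (hper (fun v => θ v + c v) (fun v => -(toIocDiv Real.two_pi_pos (-π) (θ v + c v)))).symm

end Box

section Main
variable {V E : Type*} [Fintype V] [Fintype E] [DecidableEq V] [DecidableEq E]

/-- The observable `A(θ) = Σ_e 𝒰'(J_e) (dg)_e`. -/
def Afun (p : ℤ → ℝ) (src tgt : E → V) (g : V → ℝ) (θ : V → ℝ) : ℝ :=
  ∑ e, U1 p (grad src tgt θ e) * grad src tgt g e

/-- The density `B(θ) = Π_e w(J_e)`. -/
def Bfun (p : ℤ → ℝ) (src tgt : E → V) (θ : V → ℝ) : ℝ :=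
  ∏ e, wgt p (grad src tgt θ e)

/-- Directional derivative of `B` along `g`. -/
def Bd (p : ℤ → ℝ) (src tgt : E → V) (g : V → ℝ) (θ : V → ℝ) : ℝ :=
  ∑ e, (∏ e' ∈ Finset.univ.erase e, wgt p (grad src tgt θ e'))
    * (w1 p (grad src tgt θ e) * grad src tgt g e)

/-- Directional derivative of `A` along `g`. -/
def A2fun (p : ℤ → ℝ) (src tgt : E → V) (g : V → ℝ) (θ : V → ℝ) : ℝ :=
  ∑ e, U2 p (grad src tgt θ e) * grad src tgt g e * grad src tgt g e

/-- Directional derivative of `A·B` along `g`. -/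
def Dfun (p : ℤ → ℝ) (src tgt : E → V) (g : V → ℝ) (θ : V → ℝ) : ℝ :=
  A2fun p src tgt g θ * Bfun p src tgt θ + Afun p src tgt g θ * Bd p src tgt g θ

/-- The shifted configuration `θ + t·g`. -/
def shf (g : V → ℝ) (t : ℝ) (θ : V → ℝ) : V → ℝ := fun v => θ v + t * g v

variable (src tgt : E → V) (g : V → ℝ)

lemma grad_shf (t : ℝ) (θ : V → ℝ) (e : E) :
    grad src tgt (shf g t θ) e = grad src tgt θ e + t * grad src tgt g e := by
  simp only [grad, shf]; ring

lemma shf_zero (θ : V → ℝ) : shf g 0 θ = θ := by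
  funext v; simp [shf]

variable {p : ℤ → ℝ} (hnonneg : ∀ n : ℤ, 0 ≤ p n)
  (hsum : Summable fun n : ℤ => (n : ℝ) ^ 2 * p n)
  (hw : ∀ α : ℝ, 0 < wgt p α)

section
include hnonneg hsum hw

lemma hasDerivAt_AB (θ : V → ℝ) (t : ℝ) :
    HasDerivAt (fun s => Afun p src tgt g (shf g s θ) * Bfun p src tgt (shf g s θ))
      (Dfun p src tgt g (shf g t θ)) t := by
  have hJ : ∀ e : E, HasDerivAt (fun s => grad src tgt θ e + s * grad src tgt g e)
      (grad src tgt g e) t := fun e => by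
    simpa using ((hasDerivAt_id t).mul_const (grad src tgt g e)).const_add (grad src tgt θ e)
  have hA : HasDerivAt
      (fun s => ∑ e, U1 p (grad src tgt θ e + s * grad src tgt g e) * grad src tgt g e)
      (A2fun p src tgt g (shf g t θ)) t := by
    have h1 : A2fun p src tgt g (shf g t θ)
        = ∑ e, U2 p (grad src tgt θ e + t * grad src tgt g e) * grad src tgt g e
            * grad src tgt g e := by
      simp only [A2fun, grad_shf]
    rw [h1]
    refine HasDerivAt.fun_sum fun e _ => ?_
    exact ((hasDerivAt_U1 hnonneg hsum hw _).comp t (hJ e)).mul_const _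
  have hB : HasDerivAt
      (fun s => ∏ e, wgt p (grad src tgt θ e + s * grad src tgt g e))
      (Bd p src tgt g (shf g t θ)) t := by
    have h1 : Bd p src tgt g (shf g t θ)
        = ∑ e, (∏ e' ∈ Finset.univ.erase e,
            wgt p (grad src tgt θ e' + t * grad src tgt g e'))
          * (w1 p (grad src tgt θ e + t * grad src tgt g e) * grad src tgt g e) := by
      simp only [Bd, grad_shf]
    rw [h1]
    exact HasDerivAt.fun_finsetProd fun e _ =>
      (hasDerivAt_wgt hnonneg hsum _).comp t (hJ e)
  have hfun : (fun s => Afun p src tgt g (shf g s θ) * Bfun p src tgt (shf g s θ))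
      = fun s => (∑ e, U1 p (grad src tgt θ e + s * grad src tgt g e) * grad src tgt g e)
          * ∏ e, wgt p (grad src tgt θ e + s * grad src tgt g e) := by
    funext s; simp only [Afun, Bfun, grad_shf]
  have hval : Dfun p src tgt g (shf g t θ)
      = A2fun p src tgt g (shf g t θ)
          * (∏ e, wgt p (grad src tgt θ e + t * grad src tgt g e))
        + (∑ e, U1 p (grad src tgt θ e + t * grad src tgt g e) * grad src tgt g e)
          * Bd p src tgt g (shf g t θ) := by
    simp only [Dfun, Afun, Bfun, grad_shf]
  rw [hfun, hval]
  exact hA.mul hB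

lemma Bd_eq_neg (θ : V → ℝ) :
    Bd p src tgt g θ = -(Afun p src tgt g θ * Bfun p src tgt θ) := by
  unfold Bd Afun
  rw [Finset.sum_mul]
  rw [← Finset.sum_neg_distrib]
  refine Finset.sum_congr rfl fun e _ => ?_
  rw [w1_eq_neg_U1_mul hnonneg hsum hw]
  have h1 : (∏ e' ∈ Finset.univ.erase e, wgt p (grad src tgt θ e'))
      * wgt p (grad src tgt θ e) = Bfun p src tgt θ :=
    Finset.prod_erase_mul _ _ (Finset.mem_univ e)
  rw [← h1]
  ring

end

lemma continuous_gradθ (e : E) : Continuous (fun θ : V → ℝ => grad src tgt θ e) :=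
  (continuous_apply (tgt e)).sub (continuous_apply (src e))

section
include hnonneg hsum hw

lemma continuous_Afun : Continuous (Afun p src tgt g) :=
  continuous_finset_sum _ fun e _ =>
    ((continuous_U1 hnonneg hsum hw).comp (continuous_gradθ src tgt e)).mul continuous_const

lemma continuous_Bfun : Continuous (Bfun p src tgt (E := E)) :=
  continuous_finset_prod _ fun e _ =>
    (continuous_wgt hnonneg hsum).comp (continuous_gradθ src tgt e)

lemma continuous_A2fun : Continuous (A2fun p src tgt g) :=
  continuous_finset_sum _ fun e _ =>
    (((continuous_U2 hnonneg hsum hw).comp (continuous_gradθ src tgt e)).mul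
      continuous_const).mul continuous_const

lemma continuous_Bd : Continuous (Bd p src tgt g) :=
  continuous_finset_sum _ fun e _ =>
    (continuous_finset_prod _ fun e' _ =>
      (continuous_wgt hnonneg hsum).comp (continuous_gradθ src tgt e')).mul
      (((continuous_w1 hnonneg hsum).comp (continuous_gradθ src tgt e)).mul continuous_const)

lemma continuous_Dfun : Continuous (Dfun p src tgt g) :=
  ((continuous_A2fun src tgt g hnonneg hsum hw).mul
    (continuous_Bfun src tgt hnonneg hsum hw)).add
    ((continuous_Afun src tgt g hnonneg hsum hw).mul (continuous_Bd src tgt g hnonneg hsum hw))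

end

lemma grad_shift_int (θ : V → ℝ) (m : V → ℤ) (e : E) :
    grad src tgt (fun v => θ v + (m v) * (2*π)) e
      = grad src tgt θ e + ((m (tgt e) - m (src e) : ℤ) : ℝ) * (2*π) := by
  simp only [grad]
  push_cast
  ring

section
include hnonneg hsum hw

lemma Hper (θ : V → ℝ) (m : V → ℤ) :
    Afun p src tgt g (fun v => θ v + (m v) * (2*π))
        * Bfun p src tgt (fun v => θ v + (m v) * (2*π))
      = Afun p src tgt g θ * Bfun p src tgt θ := by
  have hA : Afun p src tgt g (fun v => θ v + (m v) * (2*π)) = Afun p src tgt g θ := by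
    unfold Afun
    refine Finset.sum_congr rfl fun e _ => ?_
    rw [grad_shift_int]
    rw [(periodic_U1 hnonneg hsum hw).int_mul (m (tgt e) - m (src e)) (grad src tgt θ e)]
  have hB : Bfun p src tgt (fun v => θ v + (m v) * (2*π)) = Bfun p src tgt θ := by
    unfold Bfun
    refine Finset.prod_congr rfl fun e _ => ?_
    rw [grad_shift_int]
    rw [(periodic_wgt hnonneg hsum).int_mul (m (tgt e) - m (src e)) (grad src tgt θ e)]
  rw [hA, hB]

lemma abs_Afun_le : ∃ C, ∀ θ, |Afun p src tgt g θ| ≤ C := by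
  obtain ⟨C1, hC10, hC1⟩ := periodic_bound (continuous_U1 hnonneg hsum hw)
    (periodic_U1 hnonneg hsum hw)
  refine ⟨∑ e, C1 * |grad src tgt g e|, fun θ => ?_⟩
  refine (Finset.abs_sum_le_sum_abs _ _).trans (Finset.sum_le_sum fun e _ => ?_)
  rw [abs_mul]
  exact mul_le_mul_of_nonneg_right (hC1 _) (abs_nonneg _)

lemma abs_A2fun_le : ∃ C, ∀ θ, |A2fun p src tgt g θ| ≤ C := by
  obtain ⟨C1, hC10, hC1⟩ := periodic_bound (continuous_U2 hnonneg hsum hw)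
    (periodic_U2 hnonneg hsum hw)
  refine ⟨∑ e, C1 * |grad src tgt g e| * |grad src tgt g e|, fun θ => ?_⟩
  refine (Finset.abs_sum_le_sum_abs _ _).trans (Finset.sum_le_sum fun e _ => ?_)
  rw [abs_mul, abs_mul]
  exact mul_le_mul_of_nonneg_right
    (mul_le_mul_of_nonneg_right (hC1 _) (abs_nonneg _)) (abs_nonneg _)

lemma abs_Bprod_le : ∃ C, 0 ≤ C ∧ ∀ (θ : V → ℝ) (s : Finset E),
    |∏ e' ∈ s, wgt p (grad src tgt θ e')| ≤ C := by
  obtain ⟨Cw, hCw0, hCw⟩ := periodic_bound (continuous_wgt hnonneg hsum)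
    (periodic_wgt hnonneg hsum)
  refine ⟨(max Cw 1)^(Fintype.card E),
    pow_nonneg (le_trans zero_le_one (le_max_right _ _)) _, fun θ s => ?_⟩
  rw [Finset.abs_prod]
  calc ∏ e' ∈ s, |wgt p (grad src tgt θ e')| ≤ ∏ _e' ∈ s, max Cw 1 :=
        Finset.prod_le_prod (fun _ _ => abs_nonneg _)
          (fun e' _ => (hCw _).trans (le_max_left _ _))
  _ = (max Cw 1) ^ s.card := Finset.prod_const _
  _ ≤ (max Cw 1) ^ (Fintype.card E) :=
        pow_le_pow_right₀ (le_max_right _ _) (Finset.card_le_univ s)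

lemma abs_Bd_le : ∃ C, ∀ θ, |Bd p src tgt g θ| ≤ C := by
  obtain ⟨CB, hCB0, hCB⟩ := abs_Bprod_le src tgt hnonneg hsum hw
  obtain ⟨C1, hC10, hC1⟩ := periodic_bound (continuous_w1 hnonneg hsum)
    (periodic_w1 hnonneg hsum)
  refine ⟨∑ e, CB * (C1 * |grad src tgt g e|), fun θ => ?_⟩
  refine (Finset.abs_sum_le_sum_abs _ _).trans (Finset.sum_le_sum fun e _ => ?_)
  rw [abs_mul, abs_mul]
  refine mul_le_mul (hCB θ _) ?_ (mul_nonneg (abs_nonneg _) (abs_nonneg _)) hCB0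
  exact mul_le_mul_of_nonneg_right (hC1 _) (abs_nonneg _)

lemma abs_Dfun_le : ∃ C, ∀ θ, |Dfun p src tgt g θ| ≤ C := by
  obtain ⟨CA, hCA⟩ := abs_Afun_le src tgt g hnonneg hsum hw
  obtain ⟨CA2, hCA2⟩ := abs_A2fun_le src tgt g hnonneg hsum hw
  obtain ⟨CB, hCB0, hCB⟩ := abs_Bprod_le src tgt hnonneg hsum hw
  obtain ⟨CBd, hCBd⟩ := abs_Bd_le src tgt g hnonneg hsum hw
  have hCA0 : 0 ≤ CA := le_trans (abs_nonneg _) (hCA Classical.ofNonempty)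
  have hCA20 : 0 ≤ CA2 := le_trans (abs_nonneg _) (hCA2 Classical.ofNonempty)
  have hCBd0 : 0 ≤ CBd := le_trans (abs_nonneg _) (hCBd Classical.ofNonempty)
  refine ⟨CA2 * CB + CA * CBd, fun θ => ?_⟩
  refine (abs_add_le _ _).trans ?_
  gcongr
  · rw [abs_mul]
    exact mul_le_mul (hCA2 θ) (hCB θ _) (abs_nonneg _) hCA20
  · rw [abs_mul]
    exact mul_le_mul (hCA θ) (hCBd θ) (abs_nonneg _) hCA0

end

section IBP
variable (bd : V)

lemma integrable_bdd {F : (V → ℝ) → ℝ} (hF : Continuous F) {C : ℝ}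
    (hC : ∀ θ, |F θ| ≤ C) : Integrable F (pinnedBox V bd) := by
  haveI := isFiniteMeasure_pinnedBox V bd
  exact (integrable_const C).mono' hF.aestronglyMeasurable
    (Filter.Eventually.of_forall fun θ => by simpa [Real.norm_eq_abs] using hC θ)

include hnonneg hsum hw

lemma integral_Dfun_zero (hgbd : g bd = 0) :
    ∫ θ, Dfun p src tgt g θ ∂(pinnedBox V bd) = 0 := by
  haveI := isFiniteMeasure_pinnedBox V bd
  obtain ⟨CA, hCA⟩ := abs_Afun_le src tgt g hnonneg hsum hw
  obtain ⟨CB, hCB0, hCB⟩ := abs_Bprod_le src tgt hnonneg hsum hw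
  obtain ⟨CD, hCD⟩ := abs_Dfun_le src tgt g hnonneg hsum hw
  have hCA0 : 0 ≤ CA := le_trans (abs_nonneg _) (hCA Classical.ofNonempty)
  have hshfc : ∀ t : ℝ, Continuous (fun θ : V → ℝ => shf g t θ) :=
    fun t => continuous_pi fun v => (continuous_apply v).add continuous_const
  have hABc := (continuous_Afun src tgt g hnonneg hsum hw).mul
    (continuous_Bfun src tgt hnonneg hsum hw)
  have key := hasDerivAt_integral_of_dominated_loc_of_deriv_le
    (F := fun t θ => Afun p src tgt g (shf g t θ) * Bfun p src tgt (shf g t θ))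
    (F' := fun t θ => Dfun p src tgt g (shf g t θ))
    (μ := pinnedBox V bd) (x₀ := 0) (s := Metric.ball 0 1) (bound := fun _ => CD)
    (Metric.ball_mem_nhds 0 one_pos)
    (Filter.Eventually.of_forall fun t =>
      (hABc.comp (hshfc t)).aestronglyMeasurable)
    (integrable_bdd bd (hABc.comp (hshfc 0)) (C := CA * CB) fun θ => by
      rw [abs_mul]
      exact mul_le_mul (hCA _) (hCB _ _) (abs_nonneg _) hCA0)
    (((continuous_Dfun src tgt g hnonneg hsum hw).comp (hshfc 0)).aestronglyMeasurable)
    (Filter.Eventually.of_forall fun θ t _ => by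
      simpa [Real.norm_eq_abs] using hCD (shf g t θ))
    (integrable_const CD)
    (Filter.Eventually.of_forall fun θ t _ =>
      hasDerivAt_AB src tgt g hnonneg hsum hw θ t)
  have hconst : (fun t => ∫ θ, Afun p src tgt g (shf g t θ) * Bfun p src tgt (shf g t θ)
      ∂(pinnedBox V bd)) = fun _ => ∫ θ, Afun p src tgt g θ * Bfun p src tgt θ
      ∂(pinnedBox V bd) := by
    funext t
    exact integral_shift (bd := bd) hABc.measurable
      (fun θ m => Hper src tgt g hnonneg hsum hw θ m)
      (fun v => t * g v) (by simp [hgbd])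
  have hderiv := key.2
  rw [hconst] at hderiv
  have h0 := hderiv.unique (hasDerivAt_const 0 _)
  have hrw : (fun θ => Dfun p src tgt g (shf g 0 θ)) = Dfun p src tgt g := by
    funext θ; rw [shf_zero]
  rw [hrw] at h0
  exact h0

lemma key_identity (hgbd : g bd = 0) :
    ∫ θ, (Afun p src tgt g θ)^2 * Bfun p src tgt θ ∂(pinnedBox V bd)
      = ∑ e, (grad src tgt g e)^2
          * ∫ θ, U2 p (grad src tgt θ e) * Bfun p src tgt θ ∂(pinnedBox V bd) := by
  obtain ⟨CA, hCA⟩ := abs_Afun_le src tgt g hnonneg hsum hw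
  obtain ⟨CA2, hCA2⟩ := abs_A2fun_le src tgt g hnonneg hsum hw
  obtain ⟨CB, hCB0, hCB⟩ := abs_Bprod_le src tgt hnonneg hsum hw
  have hCA0 : 0 ≤ CA := le_trans (abs_nonneg _) (hCA Classical.ofNonempty)
  have hCA20 : 0 ≤ CA2 := le_trans (abs_nonneg _) (hCA2 Classical.ofNonempty)
  obtain ⟨CU2, hCU20, hCU2⟩ := periodic_bound (continuous_U2 hnonneg hsum hw)
    (periodic_U2 hnonneg hsum hw)
  have hBc := continuous_Bfun (p := p) src tgt hnonneg hsum hw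
  have hint2 : Integrable (fun θ => A2fun p src tgt g θ * Bfun p src tgt θ)
      (pinnedBox V bd) := by
    refine integrable_bdd bd
      ((continuous_A2fun src tgt g hnonneg hsum hw).mul hBc) (C := CA2 * CB) fun θ => ?_
    rw [abs_mul]
    exact mul_le_mul (hCA2 _) (hCB _ _) (abs_nonneg _) hCA20
  have hintAAB : Integrable (fun θ => Afun p src tgt g θ
      * (Afun p src tgt g θ * Bfun p src tgt θ)) (pinnedBox V bd) := by
    refine integrable_bdd bd
      ((continuous_Afun src tgt g hnonneg hsum hw).mul
        ((continuous_Afun src tgt g hnonneg hsum hw).mul hBc)) (C := CA * (CA * CB))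
      fun θ => ?_
    rw [abs_mul, abs_mul]
    exact mul_le_mul (hCA _)
      (mul_le_mul (hCA _) (hCB _ _) (abs_nonneg _) hCA0)
      (mul_nonneg (abs_nonneg _) (abs_nonneg _)) hCA0
  have hDeq : Dfun p src tgt g = fun θ => A2fun p src tgt g θ * Bfun p src tgt θ
      - Afun p src tgt g θ * (Afun p src tgt g θ * Bfun p src tgt θ) := by
    funext θ
    rw [Dfun, Bd_eq_neg src tgt g hnonneg hsum hw]
    ring
  have h0 := integral_Dfun_zero src tgt g hnonneg hsum hw bd hgbd
  rw [hDeq, integral_sub hint2 hintAAB, sub_eq_zero] at h0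
  have hAA : ∫ θ, (Afun p src tgt g θ)^2 * Bfun p src tgt θ ∂(pinnedBox V bd)
      = ∫ θ, Afun p src tgt g θ * (Afun p src tgt g θ * Bfun p src tgt θ)
        ∂(pinnedBox V bd) := by
    refine integral_congr_ae (Filter.EventuallyEq.of_eq (funext fun θ => ?_))
    ring
  rw [hAA, ← h0]
  have hA2B : (fun θ => A2fun p src tgt g θ * Bfun p src tgt θ)
      = fun θ => ∑ e, (grad src tgt g e)^2
          * (U2 p (grad src tgt θ e) * Bfun p src tgt θ) := by
    funext θ
    rw [A2fun, Finset.sum_mul]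
    exact Finset.sum_congr rfl fun e _ => by ring
  rw [hA2B]
  rw [integral_finset_sum]
  · exact Finset.sum_congr rfl fun e _ => by
      rw [MeasureTheory.integral_const_mul]
  · intro e _
    refine integrable_bdd bd ?_
      (C := (grad src tgt g e)^2 * (CU2 * CB)) (fun θ => ?_)
    · exact continuous_const.mul
        (((continuous_U2 hnonneg hsum hw).comp (continuous_gradθ src tgt e)).mul hBc)
    · rw [abs_mul, abs_mul, abs_pow, sq_abs]
      refine mul_le_mul_of_nonneg_left ?_ (sq_nonneg _)
      exact mul_le_mul (hCU2 _) (hCB _ _) (abs_nonneg _) hCU20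

lemma Z_pos : 0 < ∫ θ, Bfun p src tgt θ ∂(pinnedBox V bd) := by
  haveI := isFiniteMeasure_pinnedBox V bd
  obtain ⟨m, hm0, hm⟩ : ∃ m, 0 < m ∧ ∀ x, m ≤ wgt p x := by
    obtain ⟨x₀, _, hx₀⟩ := (isCompact_Icc (a := (0:ℝ)) (b := 2*π)).exists_isMinOn
      (Set.nonempty_Icc.2 (by positivity)) (continuous_wgt hnonneg hsum).continuousOn
    refine ⟨wgt p x₀, hw x₀, fun x => ?_⟩
    have h2 : (0:ℝ) < 2*π := Real.two_pi_pos
    have hmem := toIocMod_mem_Ioc h2 0 x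
    have : wgt p (toIocMod h2 0 x) = wgt p x := by
      rw [toIocMod]
      exact (periodic_wgt hnonneg hsum).sub_zsmul_eq _
    rw [← this]
    exact hx₀ ⟨le_of_lt (by simpa using hmem.1), by simpa using hmem.2⟩
  obtain ⟨CB, hCB0, hCB⟩ := abs_Bprod_le src tgt hnonneg hsum hw
  have hBc := continuous_Bfun (p := p) src tgt hnonneg hsum hw
  have hBint : Integrable (Bfun p src tgt) (pinnedBox V bd) :=
    integrable_bdd bd hBc fun θ => hCB θ _
  have hlow : ∀ θ : V → ℝ, m ^ (Fintype.card E) ≤ Bfun p src tgt θ := by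
    intro θ
    have hpc : m ^ (Fintype.card E) = ∏ _e : E, m := by
      rw [Finset.prod_const, Finset.card_univ]
    rw [Bfun, hpc]
    exact Finset.prod_le_prod (fun _ _ => le_of_lt hm0) (fun e _ => hm _)
  have hc := MeasureTheory.integral_mono (integrable_const (m ^ (Fintype.card E)))
    hBint hlow
  rw [MeasureTheory.integral_const] at hc
  refine lt_of_lt_of_le ?_ hc
  rw [smul_eq_mul]
  exact mul_pos (boxM_univ_toReal_pos V bd) (pow_pos hm0 _)

end IBP

end Main

end GFFaux

/-- **GFF covariance for the gradient projection of the spin field.**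
Let `τ(θ)` vanish at `∂` and satisfy `dτ(θ) = P_★(𝒰'(dθ))`, `P_★` being the orthogonal
projection of `ℝ^E` onto the space of gradients (this is encoded by requiring that the
residual `𝒰'(J) - dτ` is orthogonal to every gradient).  Then for every `f` vanishing at `∂`,
`(inf_e μ_★[𝒰''(J_e)]) (f, Δ⁻¹f) ≤ μ_★[(τ,f)²] ≤ (sup_e μ_★[𝒰''(J_e)]) (f, Δ⁻¹f)`,
where `Δ⁻¹ f` is encoded by `g` vanishing at `∂` with `Δg = f` off `∂`. -/
theorem gff_covariance_of_projection
    {V E : Type*} [Fintype V] [Fintype E] [DecidableEq V] [Nonempty E]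
    (src tgt : E → V) (hconn : IsConn src tgt) (bd : V)
    (p : ℤ → ℝ)
    (hsym : ∀ n : ℤ, p (-n) = p n)
    (hnonneg : ∀ n : ℤ, 0 ≤ p n)
    (hsum : Summable fun n : ℤ => (n : ℝ) ^ 2 * p n)
    (hw : ∀ α : ℝ, 0 < wgt p α)
    (τ : (V → ℝ) → V → ℝ)
    (hτbd : ∀ θ, τ θ bd = 0)
    (hτproj : ∀ (θ : V → ℝ) (g : V → ℝ),
      ∑ e, (deriv (spinU p) (grad src tgt θ e) - grad src tgt (τ θ) e) * grad src tgt g e = 0)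
    (f g : V → ℝ) (hf : f bd = 0) (hg : g bd = 0)
    (hgreen : ∀ x : V, x ≠ bd → divg src tgt (grad src tgt g) x = f x) :
    (⨅ e : E, pinnedSpinExp src tgt bd p
        (fun θ => deriv (deriv (spinU p)) (grad src tgt θ e))) * (∑ v, f v * g v)
      ≤ pinnedSpinExp src tgt bd p (fun θ => (∑ v, τ θ v * f v) ^ 2)
    ∧ pinnedSpinExp src tgt bd p (fun θ => (∑ v, τ θ v * f v) ^ 2)
      ≤ (⨆ e : E, pinnedSpinExp src tgt bd p
          (fun θ => deriv (deriv (spinU p)) (grad src tgt θ e))) * (∑ v, f v * g v) := by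
  classical
  have hU1 := GFFaux.deriv_spinU hnonneg hsum hw
  have hU2 := GFFaux.deriv_deriv_spinU hnonneg hsum hw
  -- pointwise identification of the observable
  have hτA : ∀ θ : V → ℝ, (∑ v, τ θ v * f v) = GFFaux.Afun p src tgt g θ := by
    intro θ
    have h1 : ∑ v, τ θ v * f v = ∑ v, τ θ v * divg src tgt (grad src tgt g) v := by
      refine Finset.sum_congr rfl fun v _ => ?_
      by_cases hv : v = bd
      · rw [hv, hτbd θ]; ring
      · rw [hgreen v hv]
    rw [h1, ← GFFaux.sum_grad_mul src tgt (τ θ) (grad src tgt g)]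
    have h2 := hτproj θ g
    simp only [hU1, sub_mul] at h2
    rw [Finset.sum_sub_distrib, sub_eq_zero] at h2
    exact h2.symm
  -- Green identity for the right-hand side
  have hfg : ∑ v, f v * g v = ∑ e, grad src tgt g e * grad src tgt g e := by
    have h1 : ∑ v, f v * g v = ∑ v, g v * divg src tgt (grad src tgt g) v := by
      refine Finset.sum_congr rfl fun v _ => ?_
      by_cases hv : v = bd
      · rw [hv, hg, hf]; ring
      · rw [hgreen v hv]; ring
    rw [h1, ← GFFaux.sum_grad_mul src tgt g (grad src tgt g)]
  have hden : (fun θ : V → ℝ => ∏ e, wgt p (grad src tgt θ e)) = GFFaux.Bfun p src tgt :=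
    rfl
  -- the key computation
  have hMain : pinnedSpinExp src tgt bd p (fun θ => (∑ v, τ θ v * f v)^2)
      = ∑ e, (grad src tgt g e)^2 * pinnedSpinExp src tgt bd p
          (fun θ => deriv (deriv (spinU p)) (grad src tgt θ e)) := by
    simp only [pinnedSpinExp]
    have hnum : (fun θ : V → ℝ => (∑ v, τ θ v * f v)^2 * ∏ e, wgt p (grad src tgt θ e))
        = fun θ => (GFFaux.Afun p src tgt g θ)^2 * GFFaux.Bfun p src tgt θ :=
      funext fun θ => by rw [hτA θ]; rfl
    rw [hnum, hden, GFFaux.key_identity src tgt g hnonneg hsum hw bd hg, Finset.sum_div]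
    refine Finset.sum_congr rfl fun e _ => ?_
    rw [mul_div_assoc]
    congr 1
    have hnum2 : (fun θ : V → ℝ => deriv (deriv (spinU p)) (grad src tgt θ e)
          * ∏ e', wgt p (grad src tgt θ e'))
        = fun θ => GFFaux.U2 p (grad src tgt θ e) * GFFaux.Bfun p src tgt θ :=
      funext fun θ => by rw [hU2]; rfl
    rw [hnum2]
  set Efun : E → ℝ := fun e => pinnedSpinExp src tgt bd p
    (fun θ => deriv (deriv (spinU p)) (grad src tgt θ e)) with hEfun
  rw [hMain, hfg]
  constructor
  · rw [Finset.mul_sum]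
    refine Finset.sum_le_sum fun e _ => ?_
    have h3 : (⨅ e' : E, Efun e') ≤ Efun e := ciInf_le (Set.finite_range Efun).bddBelow e
    calc (⨅ e' : E, Efun e') * (grad src tgt g e * grad src tgt g e)
        ≤ Efun e * (grad src tgt g e * grad src tgt g e) :=
          mul_le_mul_of_nonneg_right h3 (mul_self_nonneg _)
      _ = (grad src tgt g e)^2 * Efun e := by ring
  · rw [Finset.mul_sum]
    refine Finset.sum_le_sum fun e _ => ?_
    have h3 : Efun e ≤ ⨆ e' : E, Efun e' := le_ciSup (Set.finite_range Efun).bddAbove e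
    calc (grad src tgt g e)^2 * Efun e
        = Efun e * (grad src tgt g e * grad src tgt g e) := by ring
      _ ≤ (⨆ e' : E, Efun e') * (grad src tgt g e * grad src tgt g e) :=
          mul_le_mul_of_nonneg_right h3 (mul_self_nonneg _)
end
end
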